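/- arXiv:2101.00025 — 10 statements merged into one kernel-verified Lean document; each statement's English description precedes it below -/
import Mathlib

section
/- Suppose the initial data satisfy 0 < α(0) < 1/s − δ(0), δ(0) ≥ 0, Σ_{j=1}^{8s} γ_j(0) ≤ 1 − 1/s (i.e. u(0) ≥ 0), and 0 < β_j(0) < γ_j(0) for all 1 ≤ j ≤ 8s. Then each of the functions t ↦ α(t)·e^{(t/2)(1−1/s)}, t ↦ δ(t)·e^{t(1−1/s)}, t ↦ β_j(t)·e^{t(1+1/(2s))}, t ↦ u(t)·e^{t(1−1/s)}, t ↦ γ_j(t)·e^{t(1+1/(2s))}, t ↦ w(t)·e^{(t/2)(1−1/s)} where w(t) = 1/s − δ(t) − α(t), and t ↦ w_j(t)·e^{t(1+1/(2s))} where w_j(t) = γ_j(t) − β_j(t), has strictly positive derivative at every t > 0. In particular, for all t > 0 the quantities α(t), δ(t), β_j(t), u(t), γ_j(t), w(t), w_j(t) are all strictly positive, and α(t) > e^{−(t/2)(1−1/s)}·α(0). -/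
theorem stmt_0
    (s : ℕ) (hs : 2 ≤ s)
    (α δ : ℝ → ℝ) (β γ : ℕ → ℝ → ℝ) (B Γ u R : ℝ → ℝ)
    (hB : ∀ t, B t = ∑ j ∈ Finset.Icc 1 (8*s), β j t)
    (hΓ : ∀ t, Γ t = ∑ j ∈ Finset.Icc 1 (8*s), γ j t)
    (hu : ∀ t, u t = 1 - 1/(s:ℝ) - Γ t)
    (hR : ∀ t, R t = 1 + 1/(2*(s:ℝ)) - δ t / 2 - u t)
    (hderivα : ∀ t : ℝ, 0 ≤ t → HasDerivAt α (-(α t / 2) * (Γ t - B t) + δ t * B t) t)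
    (hderivδ : ∀ t : ℝ, 0 ≤ t →
      HasDerivAt δ ((α t / 2) * (Γ t - B t) + ((1/(s:ℝ) - α t - δ t)/2) * B t - δ t * Γ t) t)
    (hderivβ1 : ∀ t : ℝ, 0 ≤ t → HasDerivAt (β 1) (-(β 1 t) * R t + (α t / 2) * Γ t) t)
    (hderivβ : ∀ j, 2 ≤ j → j ≤ 8*s → ∀ t : ℝ, 0 ≤ t →
      HasDerivAt (β j) (β (j-1) t - β j t * R t) t)
    (hderivγ1 : ∀ t : ℝ, 0 ≤ t →
      HasDerivAt (γ 1) (-(γ 1 t) * R t + (1/(2*(s:ℝ)) - δ t / 2) * Γ t) t)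
    (hderivγ : ∀ j, 2 ≤ j → j ≤ 8*s → ∀ t : ℝ, 0 ≤ t →
      HasDerivAt (γ j) (γ (j-1) t - γ j t * R t) t)
    (hα0 : 0 < α 0) (hα0' : α 0 < 1/(s:ℝ) - δ 0) (hδ0 : 0 ≤ δ 0)
    (hu0 : ∑ j ∈ Finset.Icc 1 (8*s), γ j 0 ≤ 1 - 1/(s:ℝ))
    (hβγ0 : ∀ j, 1 ≤ j → j ≤ 8*s → 0 < β j 0 ∧ β j 0 < γ j 0) :
    ∀ t : ℝ, 0 < t →
      (0 < deriv (fun x => α x * Real.exp ((x/2) * (1 - 1/(s:ℝ)))) t) ∧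
      (0 < deriv (fun x => δ x * Real.exp (x * (1 - 1/(s:ℝ)))) t) ∧
      (∀ j, 1 ≤ j → j ≤ 8*s →
        0 < deriv (fun x => β j x * Real.exp (x * (1 + 1/(2*(s:ℝ))))) t) ∧
      (0 < deriv (fun x => u x * Real.exp (x * (1 - 1/(s:ℝ)))) t) ∧
      (∀ j, 1 ≤ j → j ≤ 8*s →
        0 < deriv (fun x => γ j x * Real.exp (x * (1 + 1/(2*(s:ℝ))))) t) ∧
      (0 < deriv (fun x => (1/(s:ℝ) - δ x - α x) * Real.exp ((x/2) * (1 - 1/(s:ℝ)))) t) ∧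
      (∀ j, 1 ≤ j → j ≤ 8*s →
        0 < deriv (fun x => (γ j x - β j x) * Real.exp (x * (1 + 1/(2*(s:ℝ))))) t) ∧
      0 < α t ∧ 0 < δ t ∧
      (∀ j, 1 ≤ j → j ≤ 8*s → 0 < β j t ∧ 0 < γ j t ∧ 0 < γ j t - β j t) ∧
      0 < u t ∧ 0 < 1/(s:ℝ) - δ t - α t ∧
      Real.exp (-(t/2) * (1 - 1/(s:ℝ))) * α 0 < α t := by

  -- basic numeric facts
  have hs' : (2:ℝ) ≤ (s:ℝ) := by exact_mod_cast hs
  have hspos : (0:ℝ) < (s:ℝ) := by linarith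
  have hhalf : 1/(2*(s:ℝ)) = (1/(s:ℝ))/2 := by rw [div_div, mul_comm]
  -- positivity of sums
  have hne : (Finset.Icc 1 (8*s)).Nonempty := ⟨1, by simp [Finset.mem_Icc]; omega⟩
  have hBpos : ∀ t : ℝ, (∀ j, 1 ≤ j → j ≤ 8*s → 0 < β j t) → 0 < B t := by
    intro t h
    rw [hB t]
    exact Finset.sum_pos (fun i hi => by
      simp only [Finset.mem_Icc] at hi; exact h i hi.1 hi.2) hne
  have hΓBpos : ∀ t : ℝ, (∀ j, 1 ≤ j → j ≤ 8*s → 0 < γ j t - β j t) → 0 < Γ t - B t := by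
    intro t h
    rw [hΓ t, hB t, ← Finset.sum_sub_distrib]
    exact Finset.sum_pos (fun i hi => by
      simp only [Finset.mem_Icc] at hi; exact h i hi.1 hi.2) hne
  -- exponential derivatives
  have hE1 : ∀ x : ℝ, HasDerivAt (fun y : ℝ => Real.exp ((y/2) * (1 - 1/(s:ℝ))))
      (Real.exp ((x/2) * (1 - 1/(s:ℝ))) * (1 / 2 * (1 - 1/(s:ℝ)))) x :=
    fun x => (((hasDerivAt_id x).div_const 2).mul_const _).exp
  have hE2 : ∀ x : ℝ, HasDerivAt (fun y : ℝ => Real.exp (y * (1 - 1/(s:ℝ))))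
      (Real.exp (x * (1 - 1/(s:ℝ))) * (1 * (1 - 1/(s:ℝ)))) x :=
    fun x => ((hasDerivAt_id x).mul_const _).exp
  have hE3 : ∀ x : ℝ, HasDerivAt (fun y : ℝ => Real.exp (y * (1 + 1/(2*(s:ℝ)))))
      (Real.exp (x * (1 + 1/(2*(s:ℝ)))) * (1 * (1 + 1/(2*(s:ℝ))))) x :=
    fun x => ((hasDerivAt_id x).mul_const _).exp
  -- weighted derivative formulas
  have hfα : ∀ t : ℝ, 0 ≤ t → HasDerivAt (fun x => α x * Real.exp ((x/2) * (1 - 1/(s:ℝ))))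
      (Real.exp ((t/2) * (1 - 1/(s:ℝ))) * ((α t / 2) * (u t + B t) + δ t * B t)) t := by
    intro t ht
    refine ((hderivα t ht).mul (hE1 t)).congr_deriv ?_
    rw [hu t]; ring
  have hfδ : ∀ t : ℝ, 0 ≤ t → HasDerivAt (fun x => δ x * Real.exp (x * (1 - 1/(s:ℝ))))
      (Real.exp (t * (1 - 1/(s:ℝ))) *
        ((α t / 2) * (Γ t - B t) + ((1/(s:ℝ) - δ t - α t)/2) * B t + δ t * u t)) t := by
    intro t ht
    refine ((hderivδ t ht).mul (hE2 t)).congr_deriv ?_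
    rw [hu t]; ring
  have hfβ1 : ∀ t : ℝ, 0 ≤ t → HasDerivAt (fun x => β 1 x * Real.exp (x * (1 + 1/(2*(s:ℝ)))))
      (Real.exp (t * (1 + 1/(2*(s:ℝ)))) *
        (β 1 t * (δ t / 2 + u t) + (α t / 2) * Γ t)) t := by
    intro t ht
    refine ((hderivβ1 t ht).mul (hE3 t)).congr_deriv ?_
    rw [hR t]; ring
  have hfβj : ∀ j, 2 ≤ j → j ≤ 8*s → ∀ t : ℝ, 0 ≤ t →
      HasDerivAt (fun x => β j x * Real.exp (x * (1 + 1/(2*(s:ℝ)))))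
      (Real.exp (t * (1 + 1/(2*(s:ℝ)))) *
        (β (j-1) t + β j t * (δ t / 2 + u t))) t := by
    intro j hj2 hjn t ht
    refine ((hderivβ j hj2 hjn t ht).mul (hE3 t)).congr_deriv ?_
    rw [hR t]; ring
  have hfγ1 : ∀ t : ℝ, 0 ≤ t → HasDerivAt (fun x => γ 1 x * Real.exp (x * (1 + 1/(2*(s:ℝ)))))
      (Real.exp (t * (1 + 1/(2*(s:ℝ)))) *
        (γ 1 t * (δ t / 2 + u t) + (1/(2*(s:ℝ)) - δ t / 2) * Γ t)) t := by
    intro t ht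
    refine ((hderivγ1 t ht).mul (hE3 t)).congr_deriv ?_
    rw [hR t]; ring
  have hfγj : ∀ j, 2 ≤ j → j ≤ 8*s → ∀ t : ℝ, 0 ≤ t →
      HasDerivAt (fun x => γ j x * Real.exp (x * (1 + 1/(2*(s:ℝ)))))
      (Real.exp (t * (1 + 1/(2*(s:ℝ)))) *
        (γ (j-1) t + γ j t * (δ t / 2 + u t))) t := by
    intro j hj2 hjn t ht
    refine ((hderivγ j hj2 hjn t ht).mul (hE3 t)).congr_deriv ?_
    rw [hR t]; ring
  have hfw : ∀ t : ℝ, 0 ≤ t →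
      HasDerivAt (fun x => (1/(s:ℝ) - δ x - α x) * Real.exp ((x/2) * (1 - 1/(s:ℝ))))
      (Real.exp ((t/2) * (1 - 1/(s:ℝ))) *
        (δ t * (Γ t - B t) + ((1/(s:ℝ) - δ t - α t)/2) * (u t + (Γ t - B t)))) t := by
    intro t ht
    have h0 : HasDerivAt (fun x => 1/(s:ℝ) - δ x - α x)
        (0 - ((α t / 2) * (Γ t - B t) + ((1/(s:ℝ) - α t - δ t)/2) * B t - δ t * Γ t)
          - (-(α t / 2) * (Γ t - B t) + δ t * B t)) t :=
      (((hasDerivAt_const t (1/(s:ℝ))).sub (hderivδ t ht)).sub (hderivα t ht))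
    refine (h0.mul (hE1 t)).congr_deriv ?_
    rw [hu t]; ring
  have hfw1 : ∀ t : ℝ, 0 ≤ t →
      HasDerivAt (fun x => (γ 1 x - β 1 x) * Real.exp (x * (1 + 1/(2*(s:ℝ)))))
      (Real.exp (t * (1 + 1/(2*(s:ℝ)))) *
        ((γ 1 t - β 1 t) * (δ t / 2 + u t) + ((1/(s:ℝ) - δ t - α t)/2) * Γ t)) t := by
    intro t ht
    refine (((hderivγ1 t ht).sub (hderivβ1 t ht)).mul (hE3 t)).congr_deriv ?_
    rw [hR t, hhalf, Pi.sub_apply]; ring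
  have hfwj : ∀ j, 2 ≤ j → j ≤ 8*s → ∀ t : ℝ, 0 ≤ t →
      HasDerivAt (fun x => (γ j x - β j x) * Real.exp (x * (1 + 1/(2*(s:ℝ)))))
      (Real.exp (t * (1 + 1/(2*(s:ℝ)))) *
        ((γ (j-1) t - β (j-1) t) + (γ j t - β j t) * (δ t / 2 + u t))) t := by
    intro j hj2 hjn t ht
    refine (((hderivγ j hj2 hjn t ht).sub (hderivβ j hj2 hjn t ht)).mul (hE3 t)).congr_deriv ?_
    rw [hR t, Pi.sub_apply]; ring
  -- derivative of Γ and of weighted u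
  have hΓd : ∀ t : ℝ, 0 ≤ t → HasDerivAt Γ
      (-(Γ t) * R t + (1/(2*(s:ℝ)) - δ t / 2) * Γ t + (Γ t - γ (8*s) t)) t := by
    intro t ht
    have hfun : Γ = fun x => ∑ j ∈ Finset.Icc 1 (8*s), γ j x := funext hΓ
    have hder : HasDerivAt (fun x => ∑ j ∈ Finset.Icc 1 (8*s), γ j x)
        (∑ j ∈ Finset.Icc 1 (8*s), (if j = 1 then (-(γ 1 t) * R t + (1/(2*(s:ℝ)) - δ t / 2) * Γ t)
          else (γ (j-1) t - γ j t * R t))) t := by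
      apply HasDerivAt.fun_sum
      intro j hj
      simp only [Finset.mem_Icc] at hj
      by_cases h1 : j = 1
      · subst h1; simpa using hderivγ1 t ht
      · simp only [if_neg h1]
        exact hderivγ j (by omega) hj.2 t ht
    rw [← hfun] at hder
    convert hder using 1
    have e1 : Finset.Icc 1 (8*s) = insert 1 (Finset.Icc 2 (8*s)) := by
      ext x; simp only [Finset.mem_Icc, Finset.mem_insert]; omega
    rw [e1, Finset.sum_insert (by simp [Finset.mem_Icc])]
    rw [if_pos rfl]
    rw [Finset.sum_congr rfl (fun j hj => by
      rw [if_neg (by simp only [Finset.mem_Icc] at hj; omega)])]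
    rw [Finset.sum_sub_distrib, ← Finset.sum_mul]
    have hmap : Finset.Icc 2 (8*s)
        = (Finset.Icc 1 (8*s-1)).map ⟨fun j => j + 1, add_left_injective 1⟩ := by
      ext x; simp only [Finset.mem_Icc, Finset.mem_map, Function.Embedding.coeFn_mk]
      constructor
      · intro h; exact ⟨x - 1, by omega, by omega⟩
      · rintro ⟨a, ha, rfl⟩; omega
    have shift : ∑ j ∈ Finset.Icc 2 (8*s), γ (j-1) t = ∑ j ∈ Finset.Icc 1 (8*s-1), γ j t := by
      rw [hmap, Finset.sum_map]; simp
    obtain ⟨m, hm⟩ : ∃ m, 8*s = m + 1 := ⟨8*s - 1, by omega⟩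
    have top : Γ t = (∑ j ∈ Finset.Icc 1 (8*s-1), γ j t) + γ (8*s) t := by
      rw [hΓ t, hm, Finset.sum_Icc_succ_top (by omega)]
      norm_num
    have bot : Γ t = γ 1 t + ∑ j ∈ Finset.Icc 2 (8*s), γ j t := by
      rw [hΓ t, e1, Finset.sum_insert (by simp [Finset.mem_Icc])]
    rw [shift]
    have h1 : ∑ j ∈ Finset.Icc 1 (8*s-1), γ j t = Γ t - γ (8*s) t := by linarith
    have h2 : ∑ j ∈ Finset.Icc 2 (8*s), γ j t = Γ t - γ 1 t := by linarith
    rw [h1, h2]; ring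
  have hfu : ∀ t : ℝ, 0 ≤ t → HasDerivAt (fun x => u x * Real.exp (x * (1 - 1/(s:ℝ))))
      (Real.exp (t * (1 - 1/(s:ℝ))) * (u t * u t + γ (8*s) t)) t := by
    intro t ht
    have hufun : u = fun x => 1 - 1/(s:ℝ) - Γ x := funext hu
    have hud : HasDerivAt u
        (0 - (-(Γ t) * R t + (1/(2*(s:ℝ)) - δ t / 2) * Γ t + (Γ t - γ (8*s) t))) t := by
      rw [hufun]
      exact (hasDerivAt_const t (1 - 1/(s:ℝ))).sub (hΓd t ht)
    refine (hud.mul (hE2 t)).congr_deriv ?_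
    rw [hR t, hu t, hhalf]; ring
  -- helper: cancel positive exponential factor
  have hq : ∀ a b : ℝ, 0 < b → 0 < a * b → 0 < a := by
    intro a b hb hab
    have h2 := div_pos hab hb
    rwa [mul_div_assoc, div_self hb.ne', mul_one] at h2
  -- derivative positivity under the weak invariant
  have derivpos : ∀ t : ℝ, 0 ≤ t → 0 < α t → 0 ≤ δ t →
      (∀ j, 1 ≤ j → j ≤ 8*s → 0 < β j t) →
      (∀ j, 1 ≤ j → j ≤ 8*s → 0 < γ j t - β j t) →
      0 ≤ u t → 0 < 1/(s:ℝ) - δ t - α t →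
      (0 < deriv (fun x => α x * Real.exp ((x/2) * (1 - 1/(s:ℝ)))) t) ∧
      (0 < deriv (fun x => δ x * Real.exp (x * (1 - 1/(s:ℝ)))) t) ∧
      (∀ j, 1 ≤ j → j ≤ 8*s →
        0 < deriv (fun x => β j x * Real.exp (x * (1 + 1/(2*(s:ℝ))))) t) ∧
      (0 < deriv (fun x => u x * Real.exp (x * (1 - 1/(s:ℝ)))) t) ∧
      (∀ j, 1 ≤ j → j ≤ 8*s →
        0 < deriv (fun x => γ j x * Real.exp (x * (1 + 1/(2*(s:ℝ))))) t) ∧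
      (0 < deriv (fun x => (1/(s:ℝ) - δ x - α x) * Real.exp ((x/2) * (1 - 1/(s:ℝ)))) t) ∧
      (∀ j, 1 ≤ j → j ≤ 8*s →
        0 < deriv (fun x => (γ j x - β j x) * Real.exp (x * (1 + 1/(2*(s:ℝ))))) t) := by
    intro t ht hα hδ hβ hw hu' hwα
    have hBp := hBpos t hβ
    have hΓBp := hΓBpos t hw
    have hΓp : 0 < Γ t := by linarith
    have hV : 0 ≤ δ t / 2 + u t := by linarith
    have hδs : 0 < 1/(2*(s:ℝ)) - δ t / 2 := by rw [hhalf]; linarith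
    have hγ : ∀ j, 1 ≤ j → j ≤ 8*s → 0 < γ j t := by
      intro j h1 h2; have := hβ j h1 h2; have := hw j h1 h2; linarith
    refine ⟨?_, ?_, ?_, ?_, ?_, ?_, ?_⟩
    · rw [(hfα t ht).deriv]
      have h1 : 0 < (α t / 2) * (u t + B t) + δ t * B t := by
        have t1 : 0 < (α t / 2) * (u t + B t) := mul_pos (by linarith) (by linarith)
        have t2 : 0 ≤ δ t * B t := mul_nonneg hδ hBp.le
        linarith
      exact mul_pos (Real.exp_pos _) h1
    · rw [(hfδ t ht).deriv]
      have h1 : 0 < (α t / 2) * (Γ t - B t) + ((1/(s:ℝ) - δ t - α t)/2) * B t + δ t * u t := by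
        have t1 : 0 < (α t / 2) * (Γ t - B t) := mul_pos (by linarith) hΓBp
        have t2 : 0 ≤ ((1/(s:ℝ) - δ t - α t)/2) * B t := mul_nonneg (by linarith) hBp.le
        have t3 : 0 ≤ δ t * u t := mul_nonneg hδ hu'
        linarith
      exact mul_pos (Real.exp_pos _) h1
    · intro j h1 h2
      by_cases hj : j = 1
      · subst hj
        rw [(hfβ1 t ht).deriv]
        have hb1 := hβ 1 le_rfl h2
        have : 0 < β 1 t * (δ t / 2 + u t) + (α t / 2) * Γ t := by
          have t1 : 0 ≤ β 1 t * (δ t / 2 + u t) := mul_nonneg hb1.le hV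
          have t2 : 0 < (α t / 2) * Γ t := mul_pos (by linarith) hΓp
          linarith
        exact mul_pos (Real.exp_pos _) this
      · rw [(hfβj j (by omega) h2 t ht).deriv]
        have hb1 := hβ (j-1) (by omega) (by omega)
        have hbj := hβ j h1 h2
        have : 0 < β (j-1) t + β j t * (δ t / 2 + u t) := by
          have t1 : 0 ≤ β j t * (δ t / 2 + u t) := mul_nonneg hbj.le hV
          linarith
        exact mul_pos (Real.exp_pos _) this
    · rw [(hfu t ht).deriv]
      have hg := hγ (8*s) (by omega) le_rfl
      have : 0 < u t * u t + γ (8*s) t := by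
        have t1 : 0 ≤ u t * u t := mul_nonneg hu' hu'
        linarith
      exact mul_pos (Real.exp_pos _) this
    · intro j h1 h2
      by_cases hj : j = 1
      · subst hj
        rw [(hfγ1 t ht).deriv]
        have hg1 := hγ 1 le_rfl h2
        have : 0 < γ 1 t * (δ t / 2 + u t) + (1/(2*(s:ℝ)) - δ t / 2) * Γ t := by
          have t1 : 0 ≤ γ 1 t * (δ t / 2 + u t) := mul_nonneg hg1.le hV
          have t2 : 0 < (1/(2*(s:ℝ)) - δ t / 2) * Γ t := mul_pos hδs hΓp
          linarith
        exact mul_pos (Real.exp_pos _) this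
      · rw [(hfγj j (by omega) h2 t ht).deriv]
        have hg1 := hγ (j-1) (by omega) (by omega)
        have hgj := hγ j h1 h2
        have : 0 < γ (j-1) t + γ j t * (δ t / 2 + u t) := by
          have t1 : 0 ≤ γ j t * (δ t / 2 + u t) := mul_nonneg hgj.le hV
          linarith
        exact mul_pos (Real.exp_pos _) this
    · rw [(hfw t ht).deriv]
      have : 0 < δ t * (Γ t - B t) + ((1/(s:ℝ) - δ t - α t)/2) * (u t + (Γ t - B t)) := by
        have t1 : 0 ≤ δ t * (Γ t - B t) := mul_nonneg hδ hΓBp.le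
        have t2 : 0 < ((1/(s:ℝ) - δ t - α t)/2) * (u t + (Γ t - B t)) :=
          mul_pos (by linarith) (by linarith)
        linarith
      exact mul_pos (Real.exp_pos _) this
    · intro j h1 h2
      by_cases hj : j = 1
      · subst hj
        rw [(hfw1 t ht).deriv]
        have hw1 := hw 1 le_rfl h2
        have : 0 < (γ 1 t - β 1 t) * (δ t / 2 + u t) + ((1/(s:ℝ) - δ t - α t)/2) * Γ t := by
          have t1 : 0 ≤ (γ 1 t - β 1 t) * (δ t / 2 + u t) := mul_nonneg hw1.le hV
          have t2 : 0 < ((1/(s:ℝ) - δ t - α t)/2) * Γ t := mul_pos (by linarith) hΓp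
          linarith
        exact mul_pos (Real.exp_pos _) this
      · rw [(hfwj j (by omega) h2 t ht).deriv]
        have hw1 := hw (j-1) (by omega) (by omega)
        have hwj' := hw j h1 h2
        have : 0 < (γ (j-1) t - β (j-1) t) + (γ j t - β j t) * (δ t / 2 + u t) := by
          have t1 : 0 ≤ (γ j t - β j t) * (δ t / 2 + u t) := mul_nonneg hwj'.le hV
          linarith
        exact mul_pos (Real.exp_pos _) this
  -- local increase to the right
  have ev : ∀ (f : ℝ → ℝ) (f' t : ℝ), HasDerivAt f f' t → 0 < f' →
      ∀ᶠ x in nhdsWithin t (Set.Ioi t), f t < f x := by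
    intro f f' t hf hf'
    have h1 : HasDerivWithinAt f f' (Set.Ioi t) t := hf.hasDerivWithinAt
    rw [hasDerivWithinAt_iff_tendsto_slope] at h1
    rw [Set.diff_singleton_eq_self (by simp)] at h1
    have h4 := h1.eventually (eventually_gt_nhds hf')
    filter_upwards [h4, self_mem_nhdsWithin] with x hx hx'
    have hxt : t < x := hx'
    rw [slope_def_field] at hx
    rcases div_pos_iff.mp hx with ⟨h, _⟩ | ⟨_, h⟩
    · linarith
    · linarith
  -- strict monotonicity from 0 to b
  have mono : ∀ (f : ℝ → ℝ) (b : ℝ), 0 < b → (∀ x : ℝ, 0 ≤ x → DifferentiableAt ℝ f x) →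
      (∀ x : ℝ, 0 < x → x < b → 0 < deriv f x) → f 0 < f b := by
    intro f b hb hdf hpos
    have hsm : StrictMonoOn f (Set.Icc 0 b) :=
      strictMonoOn_of_deriv_pos (convex_Icc 0 b)
        (fun x hx => (hdf x hx.1).continuousAt.continuousWithinAt)
        (by intro x hx; rw [interior_Icc] at hx; exact hpos x hx.1 hx.2)
    exact hsm (Set.left_mem_Icc.2 hb.le) (Set.right_mem_Icc.2 hb.le) hb
  -- local forward propagation of the invariant
  have step : ∀ t0 : ℝ, 0 ≤ t0 → 0 < α t0 → 0 ≤ δ t0 →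
      (∀ j, 1 ≤ j → j ≤ 8*s → 0 < β j t0) →
      (∀ j, 1 ≤ j → j ≤ 8*s → 0 < γ j t0 - β j t0) →
      0 ≤ u t0 → 0 < 1/(s:ℝ) - δ t0 - α t0 →
      ∃ η, t0 < η ∧ ∀ x, t0 < x → x < η →
        (0 < α x ∧ 0 < δ x ∧ (∀ j, 1 ≤ j → j ≤ 8*s → 0 < β j x) ∧
         (∀ j, 1 ≤ j → j ≤ 8*s → 0 < γ j x - β j x) ∧ 0 < u x ∧ 0 < 1/(s:ℝ) - δ x - α x) := by
    intro t0 ht0 hα hδ hβ hw hu' hwα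
    obtain ⟨p1, p2, p3, p4, p5, p6, p7⟩ := derivpos t0 ht0 hα hδ hβ hw hu' hwα
    have e1 := ev _ _ t0 ((hfα t0 ht0).differentiableAt.hasDerivAt) p1
    have e2 := ev _ _ t0 ((hfδ t0 ht0).differentiableAt.hasDerivAt) p2
    have e4 := ev _ _ t0 ((hfu t0 ht0).differentiableAt.hasDerivAt) p4
    have e6 := ev _ _ t0 ((hfw t0 ht0).differentiableAt.hasDerivAt) p6
    have e3 : ∀ᶠ x in nhdsWithin t0 (Set.Ioi t0), ∀ j ∈ Finset.Icc 1 (8*s),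
        β j t0 * Real.exp (t0 * (1 + 1/(2*(s:ℝ)))) < β j x * Real.exp (x * (1 + 1/(2*(s:ℝ)))) := by
      rw [Filter.eventually_all_finset]
      intro j hj
      simp only [Finset.mem_Icc] at hj
      by_cases h1 : j = 1
      · subst h1
        exact ev _ _ t0 ((hfβ1 t0 ht0).differentiableAt.hasDerivAt) (p3 1 le_rfl hj.2)
      · exact ev _ _ t0 ((hfβj j (by omega) hj.2 t0 ht0).differentiableAt.hasDerivAt)
          (p3 j hj.1 hj.2)
    have e7 : ∀ᶠ x in nhdsWithin t0 (Set.Ioi t0), ∀ j ∈ Finset.Icc 1 (8*s),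
        (γ j t0 - β j t0) * Real.exp (t0 * (1 + 1/(2*(s:ℝ))))
          < (γ j x - β j x) * Real.exp (x * (1 + 1/(2*(s:ℝ)))) := by
      rw [Filter.eventually_all_finset]
      intro j hj
      simp only [Finset.mem_Icc] at hj
      by_cases h1 : j = 1
      · subst h1
        exact ev _ _ t0 ((hfw1 t0 ht0).differentiableAt.hasDerivAt) (p7 1 le_rfl hj.2)
      · exact ev _ _ t0 ((hfwj j (by omega) hj.2 t0 ht0).differentiableAt.hasDerivAt)
          (p7 j hj.1 hj.2)
    have big := ((((e1.and e2).and e3).and e4).and e6).and e7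
    obtain ⟨η, hη, hsub⟩ := mem_nhdsGT_iff_exists_Ioo_subset.1 big
    refine ⟨η, hη, ?_⟩
    intro x hx1 hx2
    obtain ⟨⟨⟨⟨⟨q1, q2⟩, q3⟩, q4⟩, q6⟩, q7⟩ := hsub ⟨hx1, hx2⟩
    refine ⟨?_, ?_, ?_, ?_, ?_, ?_⟩
    · exact hq _ _ (Real.exp_pos _) (lt_of_le_of_lt (mul_nonneg hα.le (Real.exp_pos _).le) q1)
    · exact hq _ _ (Real.exp_pos _) (lt_of_le_of_lt (mul_nonneg hδ (Real.exp_pos _).le) q2)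
    · intro j h1 h2
      have := q3 j (Finset.mem_Icc.mpr ⟨h1, h2⟩)
      exact hq _ _ (Real.exp_pos _)
        (lt_of_le_of_lt (mul_nonneg (hβ j h1 h2).le (Real.exp_pos _).le) this)
    · intro j h1 h2
      have := q7 j (Finset.mem_Icc.mpr ⟨h1, h2⟩)
      exact hq _ _ (Real.exp_pos _)
        (lt_of_le_of_lt (mul_nonneg (hw j h1 h2).le (Real.exp_pos _).le) this)
    · exact hq _ _ (Real.exp_pos _) (lt_of_le_of_lt (mul_nonneg hu' (Real.exp_pos _).le) q4)
    · exact hq _ _ (Real.exp_pos _) (lt_of_le_of_lt (mul_nonneg hwα.le (Real.exp_pos _).le) q6)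
  -- initial data
  have hβ0 : ∀ j, 1 ≤ j → j ≤ 8*s → 0 < β j 0 := fun j a b => (hβγ0 j a b).1
  have hw0 : ∀ j, 1 ≤ j → j ≤ 8*s → 0 < γ j 0 - β j 0 := by
    intro j a b; have := (hβγ0 j a b).2; linarith
  have hu0' : 0 ≤ u 0 := by rw [hu 0, hΓ 0]; linarith
  have hwα0 : 0 < 1/(s:ℝ) - δ 0 - α 0 := by linarith
  -- the invariant holds on all of (0, T]
  have key : ∀ T : ℝ, 0 < T → ∀ τ : ℝ, 0 < τ → τ ≤ T →
      (0 < α τ ∧ 0 < δ τ ∧ (∀ j, 1 ≤ j → j ≤ 8*s → 0 < β j τ) ∧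
       (∀ j, 1 ≤ j → j ≤ 8*s → 0 < γ j τ - β j τ) ∧ 0 < u τ ∧ 0 < 1/(s:ℝ) - δ τ - α τ) := by
    intro T hT
    by_contra hcon
    set Sb : Set ℝ := {τ : ℝ | 0 < τ ∧ τ ≤ T ∧
      ¬(0 < α τ ∧ 0 < δ τ ∧ (∀ j, 1 ≤ j → j ≤ 8*s → 0 < β j τ) ∧
        (∀ j, 1 ≤ j → j ≤ 8*s → 0 < γ j τ - β j τ) ∧ 0 < u τ ∧
        0 < 1/(s:ℝ) - δ τ - α τ)} with hSbdef
    have hne' : Sb.Nonempty := by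
      by_contra h2
      exact hcon (fun τ h1 h3 => by
        by_contra h4
        exact h2 ⟨τ, h1, h3, h4⟩)
    have hbdd : BddBelow Sb := ⟨0, fun x hx => hx.1.le⟩
    obtain ⟨b0, hb0⟩ := hne'
    have hne' : Sb.Nonempty := ⟨b0, hb0⟩
    have hmT : sInf Sb ≤ T := le_trans (csInf_le hbdd hb0) hb0.2.1
    obtain ⟨η0, hη0, hstep0⟩ := step 0 le_rfl hα0 hδ0 hβ0 hw0 hu0' hwα0
    have hm0 : 0 < sInf Sb := by
      have hle : η0 ≤ sInf Sb := le_csInf hne' (by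
        intro x hx
        by_contra h4
        push_neg at h4
        exact hx.2.2 (hstep0 x hx.1 h4))
      linarith
    have hint : ∀ τ : ℝ, 0 < τ → τ < sInf Sb →
        (0 < α τ ∧ 0 < δ τ ∧ (∀ j, 1 ≤ j → j ≤ 8*s → 0 < β j τ) ∧
         (∀ j, 1 ≤ j → j ≤ 8*s → 0 < γ j τ - β j τ) ∧ 0 < u τ ∧
         0 < 1/(s:ℝ) - δ τ - α τ) := by
      intro τ h1 h2
      by_contra h3
      have hmem : τ ∈ Sb := ⟨h1, le_trans h2.le hmT, h3⟩
      have := csInf_le hbdd hmem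
      linarith
    have hda : ∀ x : ℝ, 0 < x → x < sInf Sb →
        (0 < deriv (fun x => α x * Real.exp ((x/2) * (1 - 1/(s:ℝ)))) x) ∧
        (0 < deriv (fun x => δ x * Real.exp (x * (1 - 1/(s:ℝ)))) x) ∧
        (∀ j, 1 ≤ j → j ≤ 8*s →
          0 < deriv (fun y => β j y * Real.exp (y * (1 + 1/(2*(s:ℝ))))) x) ∧
        (0 < deriv (fun x => u x * Real.exp (x * (1 - 1/(s:ℝ)))) x) ∧
        (∀ j, 1 ≤ j → j ≤ 8*s →
          0 < deriv (fun y => γ j y * Real.exp (y * (1 + 1/(2*(s:ℝ))))) x) ∧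
        (0 < deriv (fun x => (1/(s:ℝ) - δ x - α x) * Real.exp ((x/2) * (1 - 1/(s:ℝ)))) x) ∧
        (∀ j, 1 ≤ j → j ≤ 8*s →
          0 < deriv (fun y => (γ j y - β j y) * Real.exp (y * (1 + 1/(2*(s:ℝ))))) x) := by
      intro x h1 h2
      obtain ⟨c1, c2, c3, c4, c5, c6⟩ := hint x h1 h2
      exact derivpos x h1.le c1 c2.le c3 c4 c5.le c6
    have hαm : 0 < α (sInf Sb) := by
      have h := mono (fun x => α x * Real.exp ((x/2) * (1 - 1/(s:ℝ)))) (sInf Sb) hm0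
        (fun x hx => (hfα x hx).differentiableAt) (fun x h1 h2 => (hda x h1 h2).1)
      simp only [zero_div, zero_mul, Real.exp_zero, mul_one] at h
      exact hq _ _ (Real.exp_pos _) (lt_trans hα0 h)
    have hδm : 0 < δ (sInf Sb) := by
      have h := mono (fun x => δ x * Real.exp (x * (1 - 1/(s:ℝ)))) (sInf Sb) hm0
        (fun x hx => (hfδ x hx).differentiableAt) (fun x h1 h2 => (hda x h1 h2).2.1)
      simp only [zero_mul, Real.exp_zero, mul_one] at h
      exact hq _ _ (Real.exp_pos _) (lt_of_le_of_lt hδ0 h)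
    have hβm : ∀ j, 1 ≤ j → j ≤ 8*s → 0 < β j (sInf Sb) := by
      intro j h1 h2
      have h := mono (fun x => β j x * Real.exp (x * (1 + 1/(2*(s:ℝ))))) (sInf Sb) hm0
        (fun x hx => by
          by_cases hj : j = 1
          · subst hj; exact (hfβ1 x hx).differentiableAt
          · exact (hfβj j (by omega) h2 x hx).differentiableAt)
        (fun x hx1 hx2 => (hda x hx1 hx2).2.2.1 j h1 h2)
      simp only [zero_mul, Real.exp_zero, mul_one] at h
      exact hq _ _ (Real.exp_pos _) (lt_trans (hβ0 j h1 h2) h)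
    have hwm : ∀ j, 1 ≤ j → j ≤ 8*s → 0 < γ j (sInf Sb) - β j (sInf Sb) := by
      intro j h1 h2
      have h := mono (fun x => (γ j x - β j x) * Real.exp (x * (1 + 1/(2*(s:ℝ))))) (sInf Sb) hm0
        (fun x hx => by
          by_cases hj : j = 1
          · subst hj; exact (hfw1 x hx).differentiableAt
          · exact (hfwj j (by omega) h2 x hx).differentiableAt)
        (fun x hx1 hx2 => (hda x hx1 hx2).2.2.2.2.2.2 j h1 h2)
      simp only [zero_mul, Real.exp_zero, mul_one] at h
      exact hq _ _ (Real.exp_pos _) (lt_trans (hw0 j h1 h2) h)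
    have hum : 0 < u (sInf Sb) := by
      have h := mono (fun x => u x * Real.exp (x * (1 - 1/(s:ℝ)))) (sInf Sb) hm0
        (fun x hx => (hfu x hx).differentiableAt) (fun x h1 h2 => (hda x h1 h2).2.2.2.1)
      simp only [zero_mul, Real.exp_zero, mul_one] at h
      exact hq _ _ (Real.exp_pos _) (lt_of_le_of_lt hu0' h)
    have hwαm : 0 < 1/(s:ℝ) - δ (sInf Sb) - α (sInf Sb) := by
      have h := mono (fun x => (1/(s:ℝ) - δ x - α x) * Real.exp ((x/2) * (1 - 1/(s:ℝ))))
        (sInf Sb) hm0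
        (fun x hx => (hfw x hx).differentiableAt) (fun x h1 h2 => (hda x h1 h2).2.2.2.2.2.1)
      simp only [zero_div, zero_mul, Real.exp_zero, mul_one] at h
      exact hq _ _ (Real.exp_pos _) (lt_trans hwα0 h)
    obtain ⟨η1, hη1, hstep1⟩ := step (sInf Sb) hm0.le hαm hδm.le hβm hwm hum.le hwαm
    obtain ⟨b, hbS, hbη⟩ := exists_lt_of_csInf_lt hne' hη1
    have hmb : sInf Sb ≤ b := csInf_le hbdd hbS
    rcases eq_or_lt_of_le hmb with h | h
    · exact hbS.2.2 (by rw [← h]; exact ⟨hαm, hδm, hβm, hwm, hum, hwαm⟩)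
    · exact hbS.2.2 (hstep1 b h hbη)
  -- conclusion
  intro t ht
  obtain ⟨c1, c2, c3, c4, c5, c6⟩ := key t ht t ht le_rfl
  obtain ⟨d1, d2, d3, d4, d5, d6, d7⟩ := derivpos t ht.le c1 c2.le c3 c4 c5.le c6
  refine ⟨d1, d2, d3, d4, d5, d6, d7, c1, c2, ?_, c5, c6, ?_⟩
  · intro j h1 h2
    refine ⟨c3 j h1 h2, ?_, c4 j h1 h2⟩
    have := c3 j h1 h2; have := c4 j h1 h2; linarith
  · have hda : ∀ x : ℝ, 0 < x → x < t →
        0 < deriv (fun x => α x * Real.exp ((x/2) * (1 - 1/(s:ℝ)))) x := by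
      intro x h1 h2
      obtain ⟨e1', e2', e3', e4', e5', e6'⟩ := key t ht x h1 h2.le
      exact (derivpos x h1.le e1' e2'.le e3' e4' e5'.le e6').1
    have hmono := mono (fun x => α x * Real.exp ((x/2) * (1 - 1/(s:ℝ)))) t ht
      (fun x hx => (hfα x hx).differentiableAt) hda
    simp only [zero_div, zero_mul, Real.exp_zero, mul_one] at hmono
    have hmul : Real.exp (-(t/2) * (1 - 1/(s:ℝ))) * Real.exp ((t/2) * (1 - 1/(s:ℝ))) = 1 := by
      rw [← Real.exp_add, show (-(t/2) * (1 - 1/(s:ℝ)) + (t/2) * (1 - 1/(s:ℝ))) = 0 by ring,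
        Real.exp_zero]
    have h2 := mul_lt_mul_of_pos_left hmono (Real.exp_pos (-(t/2) * (1 - 1/(s:ℝ))))
    calc Real.exp (-(t/2) * (1 - 1/(s:ℝ))) * α 0
        < Real.exp (-(t/2) * (1 - 1/(s:ℝ))) * (α t * Real.exp ((t/2) * (1 - 1/(s:ℝ)))) := h2
      _ = α t * (Real.exp (-(t/2) * (1 - 1/(s:ℝ))) * Real.exp ((t/2) * (1 - 1/(s:ℝ)))) := by
          ring
      _ = α t := by rw [hmul, mul_one]
end

section
/- At every time t ≥ 0 at which 1/s − δ(t) ≠ 0 and Γ(t) ≠ 0, the advantage variable ξ is differentiable and satisfies ξ'(t) = (δ(t)·Γ(t)/(1/s − δ(t)))·(η(t) − ξ(t)) + (Γ(t)/4)·(1 − ξ(t)²)·η(t). -/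
theorem stmt_2
    (s : ℕ) (hs : 2 ≤ s)
    (α δ : ℝ → ℝ) (β γ : ℕ → ℝ → ℝ) (B Γ u R : ℝ → ℝ)
    (hB : ∀ t, B t = ∑ j ∈ Finset.Icc 1 (8*s), β j t)
    (hΓ : ∀ t, Γ t = ∑ j ∈ Finset.Icc 1 (8*s), γ j t)
    (hu : ∀ t, u t = 1 - 1/(s:ℝ) - Γ t)
    (hR : ∀ t, R t = 1 + 1/(2*(s:ℝ)) - δ t / 2 - u t)
    (hderivα : ∀ t : ℝ, 0 ≤ t → HasDerivAt α (-(α t / 2) * (Γ t - B t) + δ t * B t) t)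
    (hderivδ : ∀ t : ℝ, 0 ≤ t →
      HasDerivAt δ ((α t / 2) * (Γ t - B t) + ((1/(s:ℝ) - α t - δ t)/2) * B t - δ t * Γ t) t)
    (hderivβ1 : ∀ t : ℝ, 0 ≤ t → HasDerivAt (β 1) (-(β 1 t) * R t + (α t / 2) * Γ t) t)
    (hderivβ : ∀ j, 2 ≤ j → j ≤ 8*s → ∀ t : ℝ, 0 ≤ t →
      HasDerivAt (β j) (β (j-1) t - β j t * R t) t)
    (hderivγ1 : ∀ t : ℝ, 0 ≤ t →
      HasDerivAt (γ 1) (-(γ 1 t) * R t + (1/(2*(s:ℝ)) - δ t / 2) * Γ t) t)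
    (hderivγ : ∀ j, 2 ≤ j → j ≤ 8*s → ∀ t : ℝ, 0 ≤ t →
      HasDerivAt (γ j) (γ (j-1) t - γ j t * R t) t)
    (ξ η : ℝ → ℝ) (ηj : ℕ → ℝ → ℝ)
    (hξ : ∀ t, ξ t = (1/(s:ℝ) - δ t - 2 * α t) / (1/(s:ℝ) - δ t))
    (hηj : ∀ j, 1 ≤ j → j ≤ 8*s → ∀ t, ηj j t = (γ j t - 2 * β j t) / γ j t)
    (hη : ∀ t, η t = (Γ t - 2 * B t) / Γ t) :
    ∀ t : ℝ, 0 ≤ t → 1/(s:ℝ) - δ t ≠ 0 → Γ t ≠ 0 →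
      HasDerivAt ξ ((δ t * Γ t / (1/(s:ℝ) - δ t)) * (η t - ξ t) +
        (Γ t / 4) * (1 - (ξ t)^2) * η t) t := by
  intro t ht hD hG
  have hα := hderivα t ht
  have hδ := hderivδ t ht
  set α' := -(α t / 2) * (Γ t - B t) + δ t * B t with hα'
  set δ' := (α t / 2) * (Γ t - B t) + ((1/(s:ℝ) - α t - δ t)/2) * B t - δ t * Γ t with hδ'
  have hN : HasDerivAt (fun t => 1/(s:ℝ) - δ t - 2 * α t) (-δ' - 2 * α') t := by
    have h := ((hasDerivAt_const t (1/(s:ℝ))).sub hδ).sub (hα.const_mul 2)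
    rw [zero_sub] at h
    exact h
  have hDen : HasDerivAt (fun t => 1/(s:ℝ) - δ t) (-δ') t := by
    have h := (hasDerivAt_const t (1/(s:ℝ))).sub hδ
    rw [zero_sub] at h
    exact h
  have hdiv : HasDerivAt (fun t => (1/(s:ℝ) - δ t - 2 * α t) / (1/(s:ℝ) - δ t)) _ t := hN.div hDen hD
  have hfun : ξ = fun t => (1/(s:ℝ) - δ t - 2 * α t) / (1/(s:ℝ) - δ t) := funext hξ
  rw [hfun]
  convert hdiv using 1
  simp only [hη t, hα', hδ']
  have e : 1/(s:ℝ) - α t - δ t = (1/(s:ℝ) - δ t) - α t := by ring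
  rw [e]
  set D := 1/(s:ℝ) - δ t with hDdef
  field_simp
  ring
end

section
/- At every time t ≥ 0 at which γ_1(t) ≠ 0 and 1/s − δ(t) ≠ 0, the advantage variable η_1 is differentiable and satisfies η_1'(t) = (Γ(t)/(2γ_1(t)))·(1/s − δ(t))·(ξ(t) − η_1(t)). -/
theorem stmt_4
    (s : ℕ) (hs : 2 ≤ s)
    (α δ : ℝ → ℝ) (β γ : ℕ → ℝ → ℝ) (B Γ u R : ℝ → ℝ)
    (hB : ∀ t, B t = ∑ j ∈ Finset.Icc 1 (8*s), β j t)
    (hΓ : ∀ t, Γ t = ∑ j ∈ Finset.Icc 1 (8*s), γ j t)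
    (hu : ∀ t, u t = 1 - 1/(s:ℝ) - Γ t)
    (hR : ∀ t, R t = 1 + 1/(2*(s:ℝ)) - δ t / 2 - u t)
    (hderivα : ∀ t : ℝ, 0 ≤ t → HasDerivAt α (-(α t / 2) * (Γ t - B t) + δ t * B t) t)
    (hderivδ : ∀ t : ℝ, 0 ≤ t →
      HasDerivAt δ ((α t / 2) * (Γ t - B t) + ((1/(s:ℝ) - α t - δ t)/2) * B t - δ t * Γ t) t)
    (hderivβ1 : ∀ t : ℝ, 0 ≤ t → HasDerivAt (β 1) (-(β 1 t) * R t + (α t / 2) * Γ t) t)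
    (hderivβ : ∀ j, 2 ≤ j → j ≤ 8*s → ∀ t : ℝ, 0 ≤ t →
      HasDerivAt (β j) (β (j-1) t - β j t * R t) t)
    (hderivγ1 : ∀ t : ℝ, 0 ≤ t →
      HasDerivAt (γ 1) (-(γ 1 t) * R t + (1/(2*(s:ℝ)) - δ t / 2) * Γ t) t)
    (hderivγ : ∀ j, 2 ≤ j → j ≤ 8*s → ∀ t : ℝ, 0 ≤ t →
      HasDerivAt (γ j) (γ (j-1) t - γ j t * R t) t)
    (ξ η : ℝ → ℝ) (ηj : ℕ → ℝ → ℝ)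
    (hξ : ∀ t, ξ t = (1/(s:ℝ) - δ t - 2 * α t) / (1/(s:ℝ) - δ t))
    (hηj : ∀ j, 1 ≤ j → j ≤ 8*s → ∀ t, ηj j t = (γ j t - 2 * β j t) / γ j t)
    (hη : ∀ t, η t = (Γ t - 2 * B t) / Γ t) :
    ∀ t : ℝ, 0 ≤ t → γ 1 t ≠ 0 → 1/(s:ℝ) - δ t ≠ 0 →
      HasDerivAt (ηj 1) ((Γ t / (2 * γ 1 t)) * (1/(s:ℝ) - δ t) * (ξ t - ηj 1 t)) t := by
  intro t ht hg hd
  have h8 : (1:ℕ) ≤ 8*s := by omega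
  have hfun : ηj 1 = fun t => (γ 1 t - 2 * β 1 t) / γ 1 t :=
    funext fun t => hηj 1 le_rfl h8 t
  rw [hfun]
  have hγ' := hderivγ1 t ht
  have hβ' := hderivβ1 t ht
  have hnum : HasDerivAt (fun t => γ 1 t - 2 * β 1 t)
      ((-(γ 1 t) * R t + (1/(2*(s:ℝ)) - δ t / 2) * Γ t)
        - 2 * (-(β 1 t) * R t + (α t / 2) * Γ t)) t :=
    hγ'.sub (hβ'.const_mul 2)
  have hdiv := hnum.div hγ' hg
  convert hdiv using 1
  case e'_4 => rfl
  case e'_5 => rfl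
  case e'_8 => rfl
  rw [hξ]
  simp only
  have hs0 : (s:ℝ) ≠ 0 := by positivity
  have hd' : (1:ℝ) - (s:ℝ) * δ t ≠ 0 := by
    intro h
    apply hd
    field_simp
    linarith
  field_simp
  ring
end

section
/- Assume that for all t ≥ 0 the variables satisfy α(t) ≥ 0, δ(t) ≥ 0, β_j(t) ≥ 0 and γ_j(t) > 0 for all 1 ≤ j ≤ 8s, 1/s − δ(t) > 0, and Γ(t) > 0, and assume that Φ(0) > 0. Then the function Φ is nondecreasing on [0, ∞). -/
open Filter Set Topology

set_option maxHeartbeats 1600000 in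
theorem stmt_5
    (s : ℕ) (hs : 2 ≤ s)
    (α δ : ℝ → ℝ) (β γ : ℕ → ℝ → ℝ) (B Γ u R : ℝ → ℝ)
    (hB : ∀ t, B t = ∑ j ∈ Finset.Icc 1 (8*s), β j t)
    (hΓ : ∀ t, Γ t = ∑ j ∈ Finset.Icc 1 (8*s), γ j t)
    (hu : ∀ t, u t = 1 - 1/(s:ℝ) - Γ t)
    (hR : ∀ t, R t = 1 + 1/(2*(s:ℝ)) - δ t / 2 - u t)
    (hderivα : ∀ t : ℝ, 0 ≤ t → HasDerivAt α (-(α t / 2) * (Γ t - B t) + δ t * B t) t)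
    (hderivδ : ∀ t : ℝ, 0 ≤ t →
      HasDerivAt δ ((α t / 2) * (Γ t - B t) + ((1/(s:ℝ) - α t - δ t)/2) * B t - δ t * Γ t) t)
    (hderivβ1 : ∀ t : ℝ, 0 ≤ t → HasDerivAt (β 1) (-(β 1 t) * R t + (α t / 2) * Γ t) t)
    (hderivβ : ∀ j, 2 ≤ j → j ≤ 8*s → ∀ t : ℝ, 0 ≤ t →
      HasDerivAt (β j) (β (j-1) t - β j t * R t) t)
    (hderivγ1 : ∀ t : ℝ, 0 ≤ t →
      HasDerivAt (γ 1) (-(γ 1 t) * R t + (1/(2*(s:ℝ)) - δ t / 2) * Γ t) t)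
    (hderivγ : ∀ j, 2 ≤ j → j ≤ 8*s → ∀ t : ℝ, 0 ≤ t →
      HasDerivAt (γ j) (γ (j-1) t - γ j t * R t) t)
    (ξ η : ℝ → ℝ) (ηj : ℕ → ℝ → ℝ)
    (hξ : ∀ t, ξ t = (1/(s:ℝ) - δ t - 2 * α t) / (1/(s:ℝ) - δ t))
    (hηj : ∀ j, 1 ≤ j → j ≤ 8*s → ∀ t, ηj j t = (γ j t - 2 * β j t) / γ j t)
    (hη : ∀ t, η t = (Γ t - 2 * B t) / Γ t)
    (Φ : ℝ → ℝ)
    (hΦ : ∀ t, Φ t = min (ξ t)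
      ((Finset.Icc 1 (8*s)).inf' (Finset.nonempty_Icc.mpr (by omega)) (fun j => ηj j t)))
    (hαpos : ∀ t : ℝ, 0 ≤ t → 0 ≤ α t)
    (hδpos : ∀ t : ℝ, 0 ≤ t → 0 ≤ δ t)
    (hβpos : ∀ t : ℝ, 0 ≤ t → ∀ j, 1 ≤ j → j ≤ 8*s → 0 ≤ β j t)
    (hγpos : ∀ t : ℝ, 0 ≤ t → ∀ j, 1 ≤ j → j ≤ 8*s → 0 < γ j t)
    (hδlt : ∀ t : ℝ, 0 ≤ t → 0 < 1/(s:ℝ) - δ t)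
    (hΓpos : ∀ t : ℝ, 0 ≤ t → 0 < Γ t)
    (hΦ0 : 0 < Φ 0) :
    MonotoneOn Φ (Set.Ici (0:ℝ)) := by
  set n := 8 * s with hn
  have hne : (Finset.Icc 1 n).Nonempty := Finset.nonempty_Icc.mpr (by omega)
  have hne0 : (Finset.Icc 0 n).Nonempty := Finset.nonempty_Icc.mpr (by omega)
  set G : ℕ → ℝ → ℝ := fun j => if j = 0 then ξ else ηj j with hG
  set DD : ℕ → ℝ → ℝ := fun j t =>
    if j = 0 then
      ((-((α t / 2) * (Γ t - B t) + ((1/(s:ℝ) - α t - δ t)/2) * B t - δ t * Γ t)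
          - 2 * (-(α t / 2) * (Γ t - B t) + δ t * B t)) * (1/(s:ℝ) - δ t)
        - (1/(s:ℝ) - δ t - 2 * α t) *
            -((α t / 2) * (Γ t - B t) + ((1/(s:ℝ) - α t - δ t)/2) * B t - δ t * Γ t))
        / (1/(s:ℝ) - δ t)^2
    else if j = 1 then
      (((-(γ 1 t) * R t + (1/(2*(s:ℝ)) - δ t / 2) * Γ t)
          - 2 * (-(β 1 t) * R t + (α t / 2) * Γ t)) * γ 1 t
        - (γ 1 t - 2 * β 1 t) * (-(γ 1 t) * R t + (1/(2*(s:ℝ)) - δ t / 2) * Γ t)) / γ 1 t ^ 2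
    else
      (((γ (j-1) t - γ j t * R t) - 2 * (β (j-1) t - β j t * R t)) * γ j t
        - (γ j t - 2 * β j t) * (γ (j-1) t - γ j t * R t)) / γ j t ^ 2
    with hDD
  -- derivative of ξ
  have hDξ : ∀ x : ℝ, 0 ≤ x → HasDerivAt ξ (DD 0 x) x := by
    intro x hx
    have hden : HasDerivAt (fun t => 1/(s:ℝ) - δ t)
        (-((α x / 2) * (Γ x - B x) + ((1/(s:ℝ) - α x - δ x)/2) * B x - δ x * Γ x)) x :=
      (hderivδ x hx).const_sub _
    have hnum : HasDerivAt (fun t => 1/(s:ℝ) - δ t - 2 * α t)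
        (-((α x / 2) * (Γ x - B x) + ((1/(s:ℝ) - α x - δ x)/2) * B x - δ x * Γ x)
          - 2 * (-(α x / 2) * (Γ x - B x) + δ x * B x)) x :=
      hden.sub ((hderivα x hx).const_mul 2)
    have hdiv := hnum.div hden (ne_of_gt (hδlt x hx))
    have hfun : ξ = fun t => (1/(s:ℝ) - δ t - 2 * α t) / (1/(s:ℝ) - δ t) := funext hξ
    rw [hfun]
    convert hdiv using 1
    all_goals rfl
  -- derivative of η₁
  have hDη1 : ∀ x : ℝ, 0 ≤ x → HasDerivAt (ηj 1) (DD 1 x) x := by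
    intro x hx
    have hg1 : γ 1 x ≠ 0 := ne_of_gt (hγpos x hx 1 le_rfl (by omega))
    have hnum : HasDerivAt (fun t => γ 1 t - 2 * β 1 t)
        ((-(γ 1 x) * R x + (1/(2*(s:ℝ)) - δ x / 2) * Γ x)
          - 2 * (-(β 1 x) * R x + (α x / 2) * Γ x)) x :=
      (hderivγ1 x hx).sub ((hderivβ1 x hx).const_mul 2)
    have hdiv := hnum.div (hderivγ1 x hx) hg1
    have hfun : ηj 1 = fun t => (γ 1 t - 2 * β 1 t) / γ 1 t :=
      funext (hηj 1 le_rfl (by omega))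
    rw [hfun]
    convert hdiv using 1
    all_goals rfl
  -- derivative of ηⱼ, j ≥ 2
  have hDηj : ∀ j, 2 ≤ j → j ≤ n → ∀ x : ℝ, 0 ≤ x → HasDerivAt (ηj j) (DD j x) x := by
    intro j hj2 hjn x hx
    have hgj : γ j x ≠ 0 := ne_of_gt (hγpos x hx j (by omega) hjn)
    have hnum : HasDerivAt (fun t => γ j t - 2 * β j t)
        ((γ (j-1) x - γ j x * R x) - 2 * (β (j-1) x - β j x * R x)) x :=
      (hderivγ j hj2 hjn x hx).sub ((hderivβ j hj2 hjn x hx).const_mul 2)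
    have hdiv := hnum.div (hderivγ j hj2 hjn x hx) hgj
    have hfun : ηj j = fun t => (γ j t - 2 * β j t) / γ j t :=
      funext (hηj j (by omega) hjn)
    rw [hfun]
    convert hdiv using 1
    rfl
    rfl
    rfl
    have h0 : j ≠ 0 := by omega
    have h1 : j ≠ 1 := by omega
    exact (if_neg h0).trans (if_neg h1)
  -- G facts
  have hG0 : G 0 = ξ := by simp [hG]
  have hGj : ∀ j, 1 ≤ j → G j = ηj j := by
    intro j hj; simp [hG, Nat.pos_iff_ne_zero.mp hj]
  have hDG : ∀ j ∈ Finset.Icc 0 n, ∀ x : ℝ, 0 ≤ x → HasDerivAt (G j) (DD j x) x := by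
    intro j hj x hx
    simp only [Finset.mem_Icc] at hj
    rcases Nat.lt_or_ge j 1 with h | h
    · have : j = 0 := by omega
      subst this; rw [hG0]; exact hDξ x hx
    · rcases Nat.lt_or_ge j 2 with h2 | h2
      · have : j = 1 := by omega
        subst this; rw [hGj 1 le_rfl]; exact hDη1 x hx
      · rw [hGj j (by omega)]; exact hDηj j h2 hj.2 x hx
  have hGcont : ∀ j ∈ Finset.Icc 0 n, ∀ x : ℝ, 0 ≤ x → ContinuousAt (G j) x :=
    fun j hj x hx => (hDG j hj x hx).continuousAt
  -- Φ ≤ each G j, and Φ is attained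
  have hΦle : ∀ z : ℝ, ∀ j ∈ Finset.Icc 0 n, Φ z ≤ G j z := by
    intro z j hj
    simp only [Finset.mem_Icc] at hj
    rw [hΦ z]
    rcases Nat.lt_or_ge j 1 with h | h
    · have : j = 0 := by omega
      subst this; rw [hG0]; exact min_le_left _ _
    · rw [hGj j h]
      exact le_trans (min_le_right _ _) (Finset.inf'_le _ (Finset.mem_Icc.mpr ⟨h, hj.2⟩))
  have hΦmem : ∀ z : ℝ, ∃ j ∈ Finset.Icc 0 n, G j z = Φ z := by
    intro z
    obtain ⟨k, hk, hkeq⟩ := Finset.exists_mem_eq_inf' hne (fun j => ηj j z)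
    simp only [Finset.mem_Icc] at hk
    rcases le_total (ξ z) ((Finset.Icc 1 n).inf' hne fun j => ηj j z) with h | h
    · refine ⟨0, by simp, ?_⟩
      rw [hG0, hΦ z, min_eq_left h]
    · refine ⟨k, Finset.mem_Icc.mpr ⟨by omega, hk.2⟩, ?_⟩
      rw [hGj k hk.1, hΦ z, min_eq_right h, hkeq]
  -- continuity of Φ
  have hΦcont : ∀ x : ℝ, 0 ≤ x → ContinuousAt Φ x := by
    intro x hx
    have h1 : ContinuousAt ξ x := (hDξ x hx).continuousAt
    have hind : ∀ (T : Finset ℕ) (hT : T.Nonempty), (∀ j ∈ T, ContinuousAt (ηj j) x) →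
        ContinuousAt (fun t => T.inf' hT fun j => ηj j t) x := by
      intro T hT
      induction hT using Finset.Nonempty.cons_induction with
      | singleton a => intro h; simpa using h a (Finset.mem_singleton_self a)
      | cons a tl ha hs ih =>
          intro h
          have heq : (fun t => (Finset.cons a tl ha).inf' (Finset.cons_nonempty ha)
              fun j => ηj j t) = fun t => min (ηj a t) (tl.inf' hs fun j => ηj j t) := by
            funext t
            rw [Finset.inf'_cons (H := hs)]
          rw [heq]
          exact (h a (Finset.mem_cons_self a tl)).min
            (ih fun j hj => h j (Finset.mem_cons_of_mem hj))
    have h2 : ContinuousAt (fun t => (Finset.Icc 1 n).inf' hne fun j => ηj j t) x := by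
      apply hind
      intro j hj
      simp only [Finset.mem_Icc] at hj
      have := hDG j (Finset.mem_Icc.mpr ⟨Nat.zero_le _, hj.2⟩) x hx
      rw [hGj j hj.1] at this
      exact this.continuousAt
    have hfun : Φ = fun t => min (ξ t) ((Finset.Icc 1 n).inf' hne fun j => ηj j t) := by
      funext t; rw [hΦ t]
    rw [hfun]
    exact h1.min h2
  -- sign of derivatives at min-attaining indices
  have hsign : ∀ x : ℝ, 0 ≤ x → ∀ j ∈ Finset.Icc 0 n, G j x = Φ x → 0 < Φ x → 0 ≤ DD j x := by
    intro x hx j hj hjx hpos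
    have hxv : 0 < 1/(s:ℝ) - δ x := hδlt x hx
    simp only [Finset.mem_Icc] at hj
    rcases Nat.lt_or_ge j 1 with h | h
    · -- j = 0 : the ξ case
      have : j = 0 := by omega
      subst this
      rw [hG0] at hjx
      have hξx : (1/(s:ℝ) - δ x - 2 * α x) / (1/(s:ℝ) - δ x) = Φ x := by
        rw [← hξ x]; exact hjx
      have hceq : 1/(s:ℝ) - δ x - 2 * α x = Φ x * (1/(s:ℝ) - δ x) :=
        (div_eq_iff (ne_of_gt hxv)).mp hξx
      have hsum : Φ x * Γ x ≤ Γ x - 2 * B x := by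
        have hstep : ∀ k ∈ Finset.Icc 1 n, Φ x * γ k x ≤ γ k x - 2 * β k x := by
          intro k hk
          simp only [Finset.mem_Icc] at hk
          have hgk : 0 < γ k x := hγpos x hx k hk.1 hk.2
          have hle : Φ x ≤ ηj k x := by
            have := hΦle x k (Finset.mem_Icc.mpr ⟨Nat.zero_le _, hk.2⟩)
            rwa [hGj k hk.1] at this
          rw [hηj k hk.1 hk.2 x] at hle
          exact (le_div_iff₀ hgk).mp hle
        calc Φ x * Γ x = ∑ k ∈ Finset.Icc 1 n, Φ x * γ k x := by
              rw [hΓ x, Finset.mul_sum]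
          _ ≤ ∑ k ∈ Finset.Icc 1 n, (γ k x - 2 * β k x) := Finset.sum_le_sum hstep
          _ = Γ x - 2 * B x := by
              rw [hΓ x, hB x, Finset.sum_sub_distrib, ← Finset.mul_sum]
      have hαx := hαpos x hx
      have hδx := hδpos x hx
      have hΓx := hΓpos x hx
      have hNum : (-((α x / 2) * (Γ x - B x) + ((1/(s:ℝ) - α x - δ x)/2) * B x - δ x * Γ x)
            - 2 * (-(α x / 2) * (Γ x - B x) + δ x * B x)) * (1/(s:ℝ) - δ x)
          - (1/(s:ℝ) - δ x - 2 * α x) *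
              -((α x / 2) * (Γ x - B x) + ((1/(s:ℝ) - α x - δ x)/2) * B x - δ x * Γ x)
          = -(((1/(s:ℝ) - δ x) - α x) * α x * (2 * B x - Γ x)
              + 2 * (δ x * (B x * (1/(s:ℝ) - δ x) - α x * Γ x))) := by ring
      have hkey : ((1/(s:ℝ) - δ x) - α x) * α x * (2 * B x - Γ x)
          + 2 * (δ x * (B x * (1/(s:ℝ) - δ x) - α x * Γ x)) ≤ 0 := by
        have hxa : 0 ≤ (1/(s:ℝ) - δ x) - α x := by nlinarith [mul_pos hpos hxv]
        have t1 : ((1/(s:ℝ) - δ x) - α x) * α x * (2 * B x - Γ x) ≤ 0 := by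
          apply mul_nonpos_of_nonneg_of_nonpos (mul_nonneg hxa hαx)
          nlinarith [mul_pos hpos hΓx]
        have t2 : B x * (1/(s:ℝ) - δ x) - α x * Γ x ≤ 0 := by
          nlinarith [mul_le_mul_of_nonneg_right
            (show 2 * B x ≤ (1 - Φ x) * Γ x by nlinarith) hxv.le]
        nlinarith [mul_nonneg hδx (neg_nonneg.mpr t2)]
      have hDD0 : DD 0 x = (-(((1/(s:ℝ) - δ x) - α x) * α x * (2 * B x - Γ x)
              + 2 * (δ x * (B x * (1/(s:ℝ) - δ x) - α x * Γ x)))) / (1/(s:ℝ) - δ x)^2 := by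
        simp only [hDD]
        norm_num
        ring
      rw [hDD0]
      apply div_nonneg (by linarith) (sq_nonneg _)
    · rcases Nat.lt_or_ge j 2 with h2 | h2
      · -- j = 1 case
        have : j = 1 := by omega
        subst this
        have hg1 : 0 < γ 1 x := hγpos x hx 1 le_rfl (by omega)
        have hle : ηj 1 x ≤ ξ x := by
          have := hΦle x 0 (Finset.mem_Icc.mpr ⟨le_rfl, Nat.zero_le _⟩)
          rw [hG0] at this
          rw [hGj 1 le_rfl] at hjx
          linarith [this, hjx.ge, hjx.le]
        have hcross : (γ 1 x - 2 * β 1 x) * (1/(s:ℝ) - δ x)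
            ≤ (1/(s:ℝ) - δ x - 2 * α x) * γ 1 x := by
          rw [hηj 1 le_rfl (by omega) x, hξ x] at hle
          exact (div_le_div_iff₀ hg1 hxv).mp hle
        have hNum : ((-(γ 1 x) * R x + (1/(2*(s:ℝ)) - δ x / 2) * Γ x)
              - 2 * (-(β 1 x) * R x + (α x / 2) * Γ x)) * γ 1 x
            - (γ 1 x - 2 * β 1 x) * (-(γ 1 x) * R x + (1/(2*(s:ℝ)) - δ x / 2) * Γ x)
            = Γ x * (β 1 x * (1/(s:ℝ) - δ x) - α x * γ 1 x) := by ring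
        have hDD1 : DD 1 x = Γ x * (β 1 x * (1/(s:ℝ) - δ x) - α x * γ 1 x) / γ 1 x ^ 2 := by
          simp only [hDD]
          norm_num
          ring
        rw [hDD1]
        apply div_nonneg _ (sq_nonneg _)
        apply mul_nonneg (hΓpos x hx).le
        nlinarith [hcross]
      · -- j ≥ 2 case
        have hjn := hj.2
        have hgj : 0 < γ j x := hγpos x hx j (by omega) hjn
        have hgj1 : 0 < γ (j-1) x := hγpos x hx (j-1) (by omega) (by omega)
        have hle : ηj j x ≤ ηj (j-1) x := by
          have hmem : (j-1) ∈ Finset.Icc 0 n := Finset.mem_Icc.mpr ⟨Nat.zero_le _, by omega⟩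
          have := hΦle x (j-1) hmem
          rw [hGj (j-1) (by omega)] at this
          rw [hGj j (by omega)] at hjx
          linarith [hjx.le, hjx.ge]
        have hcross : (γ j x - 2 * β j x) * γ (j-1) x
            ≤ (γ (j-1) x - 2 * β (j-1) x) * γ j x := by
          rw [hηj j (by omega) hjn x, hηj (j-1) (by omega) (by omega) x] at hle
          exact (div_le_div_iff₀ hgj hgj1).mp hle
        have hNum : ((γ (j-1) x - γ j x * R x) - 2 * (β (j-1) x - β j x * R x)) * γ j x
            - (γ j x - 2 * β j x) * (γ (j-1) x - γ j x * R x)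
            = 2 * (β j x * γ (j-1) x - β (j-1) x * γ j x) := by ring
        have hDDj : DD j x
            = 2 * (β j x * γ (j-1) x - β (j-1) x * γ j x) / γ j x ^ 2 := by
          simp only [hDD, if_neg (show j ≠ 0 by omega), if_neg (show j ≠ 1 by omega)]
          rw [hNum]
        rw [hDDj]
        apply div_nonneg _ (sq_nonneg _)
        nlinarith [hcross]
  -- main comparison estimate
  have main : ∀ a b : ℝ, 0 ≤ a → a ≤ b → 0 < Φ a → ∀ ε : ℝ, 0 < ε →
      ε * (b - a + 1) < Φ a → ∀ x ∈ Set.Icc a b, Φ a - ε * (x - a + 1) ≤ Φ x := by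
    intro a b ha hab hΦa ε hε hεb
    have hfC : ContinuousOn (fun t => -Φ t) (Set.Icc a b) := fun y hy =>
      ((hΦcont y (le_trans ha hy.1)).neg).continuousWithinAt
    have haB : -Φ a ≤ -Φ a + ε * (a - a + 1) := by
      have : a - a + 1 = 1 := by ring
      rw [this]; linarith
    have hBC : ContinuousOn (fun y => -Φ a + ε * (y - a + 1)) (Set.Icc a b) := by
      exact (continuous_const.add (continuous_const.mul ((continuous_id.sub continuous_const).add continuous_const))).continuousOn
    have hB' : ∀ x ∈ Set.Ico a b,
        HasDerivWithinAt (fun y => -Φ a + ε * (y - a + 1)) ε (Set.Ici x) x := by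
      intro x _
      have : HasDerivAt (fun y => -Φ a + ε * (y - a + 1)) (ε * 1) x :=
        (((hasDerivAt_id x).sub_const a).add_const 1 |>.const_mul ε).const_add (-Φ a)
      simpa using this.hasDerivWithinAt
    have hf' : ∀ x ∈ Set.Ico a b, ∀ r : ℝ,
        (if -Φ x = -Φ a + ε * (x - a + 1) then (0:ℝ)
          else 1 + (Finset.Icc 0 n).sup' hne0 fun k => -DD k x) < r →
        ∃ᶠ z in 𝓝[>] x, slope (fun t => -Φ t) x z < r := by
      intro x hx r hr
      have hx0 : (0:ℝ) ≤ x := le_trans ha hx.1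
      have hfreq : ∃ j ∈ Finset.Icc 0 n, ∃ᶠ z in 𝓝[>] x, G j z = Φ z := by
        by_contra hcon
        push_neg at hcon
        have hev : ∀ᶠ z in 𝓝[>] x, ∀ j ∈ Finset.Icc 0 n, ¬ G j z = Φ z := by
          rw [Filter.eventually_all_finset]
          intro j hj
          have := hcon j hj
          exact this
        obtain ⟨z, hz⟩ := hev.exists
        obtain ⟨j, hj, hjz⟩ := hΦmem z
        exact hz j hj hjz
      obtain ⟨j, hj, hfr⟩ := hfreq
      have hGx : G j x = Φ x :=
        tendsto_nhds_unique_of_frequently_eq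
          ((hGcont j hj x hx0).mono_left nhdsWithin_le_nhds)
          ((hΦcont x hx0).mono_left nhdsWithin_le_nhds) hfr
      have hDlt : -DD j x < r := by
        by_cases hcase : -Φ x = -Φ a + ε * (x - a + 1)
        · have hΦx : 0 < Φ x := by
            have h2 : ε * (x - a + 1) ≤ ε * (b - a + 1) :=
              mul_le_mul_of_nonneg_left (by linarith [hx.2]) hε.le
            linarith
          have hd := hsign x hx0 j hj hGx hΦx
          rw [if_pos hcase] at hr
          linarith
        · rw [if_neg hcase] at hr
          have hle : -DD j x ≤ (Finset.Icc 0 n).sup' hne0 fun k => -DD k x :=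
            Finset.le_sup' (fun k : ℕ => -DD k x) hj
          linarith
      have htend : Filter.Tendsto (slope (fun t => -G j t) x) (𝓝[≠] x) (𝓝 (-DD j x)) :=
        hasDerivAt_iff_tendsto_slope.mp ((hDG j hj x hx0).neg)
      have htend' : Filter.Tendsto (slope (fun t => -G j t) x) (𝓝[>] x) (𝓝 (-DD j x)) :=
        htend.mono_left
          (nhdsWithin_mono x fun z hz => Set.mem_compl_singleton_iff.mpr (ne_of_gt hz))
      have hev2 : ∀ᶠ z in 𝓝[>] x, slope (fun t => -G j t) x z < r :=
        htend'.eventually_lt_const hDlt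
      refine (hfr.and_eventually hev2).mono ?_
      rintro z ⟨hz1, hz2⟩
      have heq : slope (fun t => -Φ t) x z = slope (fun t => -G j t) x z := by
        rw [slope_def_field, slope_def_field]
        show (-Φ z - -Φ x) / (z - x) = (-G j z - -G j x) / (z - x)
        rw [hz1, hGx]
      rw [heq]; exact hz2
    have bound : ∀ x ∈ Set.Ico a b, (fun t => -Φ t) x = -Φ a + ε * (x - a + 1) →
        (if -Φ x = -Φ a + ε * (x - a + 1) then (0:ℝ)
          else 1 + (Finset.Icc 0 n).sup' hne0 fun k => -DD k x) < ε := by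
      intro x _ hcase
      rw [if_pos hcase]
      exact hε
    have H := image_le_of_liminf_slope_right_lt_deriv_boundary'
      (f := fun t => -Φ t)
      (f' := fun x => if -Φ x = -Φ a + ε * (x - a + 1) then (0:ℝ)
        else 1 + (Finset.Icc 0 n).sup' hne0 fun k => -DD k x)
      (B := fun y => -Φ a + ε * (y - a + 1)) (B' := fun _ => ε)
      hfC hf' haB hBC hB' bound
    intro x hx
    have := H hx
    linarith
  -- Φ a ≤ Φ b whenever 0 ≤ a ≤ b and Φ a > 0
  have key : ∀ a b : ℝ, 0 ≤ a → a ≤ b → 0 < Φ a → Φ a ≤ Φ b := by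
    intro a b ha hab hΦa
    by_contra hcon
    push_neg at hcon
    have hd : 0 < b - a + 1 := by linarith
    set ε := min (Φ a) (Φ a - Φ b) / (2 * (b - a + 1)) with hε
    have hεpos : 0 < ε := by
      apply div_pos (lt_min hΦa (by linarith)) (by linarith)
    have heq : ε * (b - a + 1) = min (Φ a) (Φ a - Φ b) / 2 := by
      rw [hε]; field_simp
    have hmin1 : min (Φ a) (Φ a - Φ b) ≤ Φ a := min_le_left _ _
    have hmin2 : min (Φ a) (Φ a - Φ b) ≤ Φ a - Φ b := min_le_right _ _
    have hlt : ε * (b - a + 1) < Φ a := by linarith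
    have h1 := main a b ha hab hΦa ε hεpos hlt b ⟨hab, le_rfl⟩
    linarith
  intro a ha b hb hab
  have h0a : 0 < Φ a := lt_of_lt_of_le hΦ0 (key 0 a le_rfl ha hΦ0)
  exact key a b ha hab h0a
end

section
/- Let ρ ∈ (0, 1]. Assume that δ(0) = 0, and that for all t ≥ 0 the variables satisfy γ_j(t) > 0 and β_j(t) ≥ 0 for all 1 ≤ j ≤ 8s, Γ(t) > 0, 1/s − δ(t) > 0, Γ(t) − 2β(t) ≥ 0, and ξ(t) ≥ ρ. Then δ(t) < 0.2/s for all t ≥ 0. -/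
theorem stmt_6
    (s : ℕ) (hs : 2 ≤ s)
    (α δ : ℝ → ℝ) (β γ : ℕ → ℝ → ℝ) (B Γ u R : ℝ → ℝ)
    (hB : ∀ t, B t = ∑ j ∈ Finset.Icc 1 (8*s), β j t)
    (hΓ : ∀ t, Γ t = ∑ j ∈ Finset.Icc 1 (8*s), γ j t)
    (hu : ∀ t, u t = 1 - 1/(s:ℝ) - Γ t)
    (hR : ∀ t, R t = 1 + 1/(2*(s:ℝ)) - δ t / 2 - u t)
    (hderivα : ∀ t : ℝ, 0 ≤ t → HasDerivAt α (-(α t / 2) * (Γ t - B t) + δ t * B t) t)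
    (hderivδ : ∀ t : ℝ, 0 ≤ t →
      HasDerivAt δ ((α t / 2) * (Γ t - B t) + ((1/(s:ℝ) - α t - δ t)/2) * B t - δ t * Γ t) t)
    (hderivβ1 : ∀ t : ℝ, 0 ≤ t → HasDerivAt (β 1) (-(β 1 t) * R t + (α t / 2) * Γ t) t)
    (hderivβ : ∀ j, 2 ≤ j → j ≤ 8*s → ∀ t : ℝ, 0 ≤ t →
      HasDerivAt (β j) (β (j-1) t - β j t * R t) t)
    (hderivγ1 : ∀ t : ℝ, 0 ≤ t →
      HasDerivAt (γ 1) (-(γ 1 t) * R t + (1/(2*(s:ℝ)) - δ t / 2) * Γ t) t)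
    (hderivγ : ∀ j, 2 ≤ j → j ≤ 8*s → ∀ t : ℝ, 0 ≤ t →
      HasDerivAt (γ j) (γ (j-1) t - γ j t * R t) t)
    (ξ η : ℝ → ℝ) (ηj : ℕ → ℝ → ℝ)
    (hξ : ∀ t, ξ t = (1/(s:ℝ) - δ t - 2 * α t) / (1/(s:ℝ) - δ t))
    (hηj : ∀ j, 1 ≤ j → j ≤ 8*s → ∀ t, ηj j t = (γ j t - 2 * β j t) / γ j t)
    (hη : ∀ t, η t = (Γ t - 2 * B t) / Γ t)
    (ρ : ℝ) (hρ : 0 < ρ) (hρ1 : ρ ≤ 1)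
    (hδ0 : δ 0 = 0)
    (hγpos : ∀ t : ℝ, 0 ≤ t → ∀ j, 1 ≤ j → j ≤ 8*s → 0 < γ j t)
    (hβpos : ∀ t : ℝ, 0 ≤ t → ∀ j, 1 ≤ j → j ≤ 8*s → 0 ≤ β j t)
    (hΓpos : ∀ t : ℝ, 0 ≤ t → 0 < Γ t)
    (hδlt : ∀ t : ℝ, 0 ≤ t → 0 < 1/(s:ℝ) - δ t)
    (hΓβ : ∀ t : ℝ, 0 ≤ t → 0 ≤ Γ t - 2 * B t)
    (hξρ : ∀ t : ℝ, 0 ≤ t → ρ ≤ ξ t) :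
    ∀ t : ℝ, 0 ≤ t → δ t < 0.2 / (s:ℝ) := by
  -- basic positivity
  have hsR : (0:ℝ) < s := by
    have : 0 < s := by omega
    exact_mod_cast this
  have hc5 : (0:ℝ) < 0.2 / (s:ℝ) := by positivity
  -- Key differential inequality: δ' ≤ (5Γ/4)(0.2/s − δ)
  have key : ∀ t : ℝ, 0 ≤ t →
      (α t / 2) * (Γ t - B t) + ((1/(s:ℝ) - α t - δ t)/2) * B t - δ t * Γ t
        ≤ 5 * Γ t / 4 * (0.2 / (s:ℝ) - δ t) := by
    intro t ht
    have h1 := hδlt t ht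
    have h2 := hΓβ t ht
    have h4 := hξρ t ht
    rw [hξ] at h4
    have h5 : ρ * (1/(s:ℝ) - δ t) ≤ 1/(s:ℝ) - δ t - 2 * α t := (le_div_iff₀ h1).mp h4
    have h6 : 0 < ρ * (1/(s:ℝ) - δ t) := mul_pos hρ h1
    have h7 : 0 ≤ (1/(s:ℝ) - δ t)/4 - α t/2 := by linarith
    have hsinv : 0.2 / (s:ℝ) = (1/(s:ℝ))/5 := by ring
    rw [hsinv]
    nlinarith [mul_nonneg h2 h7]
  -- continuity of δ and Γ on [0,∞)
  have hcδ : ∀ t : ℝ, 0 ≤ t → ContinuousAt δ t := fun t ht => (hderivδ t ht).continuousAt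
  have hcΓ : ∀ t : ℝ, 0 ≤ t → ContinuousAt Γ t := by
    intro t ht
    have hfun : Γ = fun x => ∑ j ∈ Finset.Icc 1 (8*s), γ j x := funext hΓ
    rw [hfun]
    have hd : ∀ j ∈ Finset.Icc 1 (8*s), HasDerivAt (γ j)
        ((fun j => if j = 1 then -(γ 1 t) * R t + (1/(2*(s:ℝ)) - δ t / 2) * Γ t
          else γ (j-1) t - γ j t * R t) j) t := by
      intro j hj
      simp only [Finset.mem_Icc] at hj
      rcases eq_or_lt_of_le hj.1 with h | h
      · simp only [← h, if_pos rfl]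
        exact hderivγ1 t ht
      · simp only [if_neg (by omega : j ≠ 1)]
        exact hderivγ j h hj.2 t ht
    exact (HasDerivAt.fun_sum hd).continuousAt
  -- main argument
  intro T hT
  by_contra hcon
  push_neg at hcon
  have hT0 : T ≠ 0 := by
    intro h
    rw [h, hδ0] at hcon
    linarith
  have hTpos : 0 < T := lt_of_le_of_ne hT (Ne.symm hT0)
  -- the set of bad times
  set S : Set ℝ := {x ∈ Set.Icc 0 T | 0.2 / (s:ℝ) ≤ δ x} with hS
  have hSne : S.Nonempty := ⟨T, ⟨hT, le_refl T⟩, hcon⟩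
  have hSbdd : BddBelow S := ⟨0, fun x hx => hx.1.1⟩
  have hδcont : ContinuousOn δ (Set.Icc 0 T) := fun x hx => (hcδ x hx.1).continuousWithinAt
  have hSclosed : IsClosed S := by
    have := hδcont.preimage_isClosed_of_isClosed isClosed_Icc (isClosed_Ici (a := 0.2 / (s:ℝ)))
    convert this using 1
    exact hS.trans rfl
  set t₀ : ℝ := sInf S with ht₀
  have ht₀S : t₀ ∈ S := hSclosed.csInf_mem hSne hSbdd
  have ht₀nn : 0 ≤ t₀ := ht₀S.1.1
  have hδt₀ : 0.2 / (s:ℝ) ≤ δ t₀ := ht₀S.2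
  have ht₀pos : 0 < t₀ := by
    rcases eq_or_lt_of_le ht₀nn with h | h
    · exfalso; rw [← h, hδ0] at hδt₀; linarith
    · exact h
  -- before t₀, δ < 0.2/s
  have hbefore : ∀ x : ℝ, 0 ≤ x → x < t₀ → δ x < 0.2 / (s:ℝ) := by
    intro x hx hxt
    by_contra hxc
    push_neg at hxc
    have hxS : x ∈ S := ⟨⟨hx, le_trans hxt.le ht₀S.1.2⟩, hxc⟩
    exact absurd (csInf_le hSbdd hxS) (not_le.mpr hxt)
  -- bound Γ on [0, t₀]
  have hΓcont : ContinuousOn Γ (Set.Icc 0 t₀) := fun x hx => (hcΓ x hx.1).continuousWithinAt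
  obtain ⟨xM, hxM, hxMmax⟩ :=
    isCompact_Icc.exists_isMaxOn (Set.nonempty_Icc.mpr ht₀nn) hΓcont
  set M : ℝ := Γ xM with hM
  have hMbd : ∀ x ∈ Set.Icc (0:ℝ) t₀, Γ x ≤ M := fun x hx => hxMmax hx
  set c : ℝ := 5 * M / 4 with hc
  -- auxiliary function g
  set g : ℝ → ℝ := fun x => (0.2 / (s:ℝ) - δ x) * Real.exp (c * x) with hg
  have hgderiv : ∀ x : ℝ, 0 ≤ x → HasDerivAt g
      ((-((α x / 2) * (Γ x - B x) + ((1/(s:ℝ) - α x - δ x)/2) * B x - δ x * Γ x))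
          * Real.exp (c * x)
        + (0.2 / (s:ℝ) - δ x) * (Real.exp (c * x) * c)) x := by
    intro x hx
    have h1 : HasDerivAt (fun y => 0.2 / (s:ℝ) - δ y)
        (-((α x / 2) * (Γ x - B x) + ((1/(s:ℝ) - α x - δ x)/2) * B x - δ x * Γ x)) x := by
      exact (hderivδ x hx).const_sub (0.2 / (s:ℝ))
    have h2 : HasDerivAt (fun y => Real.exp (c * y)) (Real.exp (c * x) * c) x := by
      have := ((hasDerivAt_id x).const_mul c).exp
      simpa using this
    exact h1.mul h2
  have hgcont : ContinuousOn g (Set.Icc 0 t₀) := by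
    intro x hx
    exact ((hgderiv x hx.1).continuousAt).continuousWithinAt
  have hgdiff : DifferentiableOn ℝ g (interior (Set.Icc 0 t₀)) := by
    rw [interior_Icc]
    intro x hx
    exact ((hgderiv x hx.1.le).differentiableAt).differentiableWithinAt
  have hgmono : MonotoneOn g (Set.Icc 0 t₀) := by
    apply monotoneOn_of_deriv_nonneg (convex_Icc 0 t₀) hgcont hgdiff
    rw [interior_Icc]
    intro x hx
    have hx0 : 0 ≤ x := hx.1.le
    rw [(hgderiv x hx0).deriv]
    have hD := key x hx0
    have hΓM : Γ x ≤ M := hMbd x ⟨hx0, hx.2.le⟩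
    have hyx : 0 < 0.2 / (s:ℝ) - δ x := by
      have := hbefore x hx0 hx.2
      linarith
    have he : 0 < Real.exp (c * x) := Real.exp_pos _
    have hsum : 0 ≤ -((α x / 2) * (Γ x - B x) + ((1/(s:ℝ) - α x - δ x)/2) * B x - δ x * Γ x)
        + (0.2 / (s:ℝ) - δ x) * c := by
      have h8 : 5 * Γ x / 4 ≤ c := by rw [hc]; linarith
      nlinarith [mul_nonneg (sub_nonneg.mpr h8) hyx.le]
    nlinarith [mul_nonneg hsum he.le]
  have hle : g 0 ≤ g t₀ :=
    hgmono ⟨le_refl 0, ht₀nn⟩ ⟨ht₀nn, le_refl t₀⟩ ht₀nn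
  have hg0 : g 0 = 0.2 / (s:ℝ) := by
    simp [hg, hδ0]
  have hgt₀ : g t₀ ≤ 0 := by
    have he : 0 < Real.exp (c * t₀) := Real.exp_pos _
    have : 0.2 / (s:ℝ) - δ t₀ ≤ 0 := by linarith
    exact mul_nonpos_of_nonpos_of_nonneg this he.le
  linarith [hg0 ▸ hle]
end

section
/- Let s ≥ 32 and ε ∈ (0, 1/2), and let t₀ ≥ 0. Assume that for all t ≥ t₀ the variables satisfy 0 ≤ δ(t) < 0.2/s and γ_j(t) > 0 for all 1 ≤ j ≤ 8s. If at time t₀ the inequalities γ_j(t₀) < ((1−ε)/s)·e^{−j/(4s)} hold for all 1 ≤ j ≤ 8s and u(t₀) < ((1−ε)/(s·e²))·(1 + 3/s), then these inequalities hold at all times t ≥ t₀: γ_j(t) < ((1−ε)/s)·e^{−j/(4s)} for all 1 ≤ j ≤ 8s and u(t) < ((1−ε)/(s·e²))·(1 + 3/s). -/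
set_option maxHeartbeats 4000000

open Filter Set Topology

lemma slope_neg_contra {f : ℝ → ℝ} {T d t₀ : ℝ} (hd : HasDerivAt f d T) (hneg : d < 0)
    (hlt : t₀ < T) (hbelow : ∀ t, t₀ < t → t < T → f t < f T) : False := by
  rw [hasDerivAt_iff_tendsto_slope] at hd
  have hmono : 𝓝[<] T ≤ 𝓝[≠] T :=
    nhdsWithin_mono T (fun x hx => ne_of_lt hx)
  have h1 : ∀ᶠ t in 𝓝[<] T, slope f T t < 0 :=
    (hd.mono_left hmono).eventually_lt_const hneg
  have h2 : Ioo t₀ T ∈ 𝓝[<] T := Ioo_mem_nhdsLT_of_mem ⟨hlt, le_refl T⟩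
  obtain ⟨t, ht1, ht2⟩ := (h1.and (eventually_mem_set.mpr h2)).exists
  have hsl : slope f T t = (f t - f T) / (t - T) := slope_def_field f T t
  have htT : t - T < 0 := sub_neg.mpr ht2.2
  have hft : f t < f T := hbelow t ht2.1 ht2.2
  rw [hsl] at ht1
  have : 0 ≤ (f t - f T) / (t - T) :=
    div_nonneg_of_nonpos (by linarith : f t - f T ≤ 0) htT.le
  linarith

lemma geom_bound (S : ℝ) (hS : 0 < S) (m : ℕ) :
    ∑ j ∈ Finset.range m, (Real.exp (-(1/(4*S))))^j ≤ 4*S+1 := by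
  set r : ℝ := Real.exp (-(1/(4*S))) with hr
  have hr0 : 0 < r := Real.exp_pos _
  have hr1 : r < 1 := by
    rw [hr, Real.exp_lt_one_iff]
    have : (0:ℝ) < 1/(4*S) := by positivity
    linarith
  have h1r : 0 < 1 - r := by linarith
  have hgs : (∑ j ∈ Finset.range m, r ^ j) * (1 - r) = 1 - r^m := by
    linear_combination (-1 : ℝ) * geom_sum_mul r m
  have h5 : (∑ j ∈ Finset.range m, r ^ j) * (1 - r) ≤ 1 := by
    rw [hgs]
    have := pow_nonneg hr0.le m
    linarith
  have hrle : r ≤ 4*S/(4*S+1) := by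
    have hxe := Real.add_one_le_exp (1/(4*S))
    have hinv : r = (Real.exp (1/(4*S)))⁻¹ := by
      rw [hr, ← Real.exp_neg]
    rw [hinv]
    rw [inv_le_iff_one_le_mul₀ (Real.exp_pos _)]
    have h4s : (0:ℝ) < 4*S+1 := by positivity
    rw [div_mul_eq_mul_div, le_div_iff₀ h4s]
    have hone4 : (4*S)*(1/(4*S)) = 1 := by field_simp
    have hmul := mul_le_mul_of_nonneg_left hxe (by positivity : (0:ℝ) ≤ 4*S)
    nlinarith [hmul, hone4]
  have h6 : (1:ℝ) ≤ (4*S+1)*(1-r) := by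
    have h4s : (0:ℝ) < 4*S+1 := by positivity
    have hm := mul_le_mul_of_nonneg_left hrle h4s.le
    have heq : (4*S+1) * (4*S/(4*S+1)) = 4*S := by
      field_simp
    nlinarith [hm, heq]
  refine le_of_mul_le_mul_right ?_ h1r
  nlinarith [h5, h6]

lemma exp_quarter_ub (S : ℝ) (hS : 32 ≤ S) : Real.exp (1/(4*S)) ≤ 1 + 0.2517/S := by
  have hS0 : (0:ℝ) < S := by linarith
  have hv : (0:ℝ) < S⁻¹ := by positivity
  have h0 : (0:ℝ) ≤ 1/(4*S) := by positivity
  have h1x : 1/(4*S) ≤ 1 := by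
    rw [div_le_one (by positivity)]; linarith
  set X := Real.exp (1/(4*S)) with hX
  have hb := Real.exp_bound' h0 h1x (n := 2) (by norm_num)
  rw [← hX] at hb
  norm_num [Finset.sum_range_succ, Nat.factorial] at hb
  have hbb : X ≤ 1 + (1/4)*S⁻¹ + (3/64)*(S⁻¹*S⁻¹) := by
    have he : 1 + S⁻¹ * (1 / 4) + (S⁻¹ * (1 / 4)) ^ 2 * 3 / 4
        = 1 + (1/4)*S⁻¹ + (3/64)*(S⁻¹*S⁻¹) := by ring
    linarith [hb, he.le, he.ge]
  have h132 : S⁻¹ ≤ 1/32 := by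
    rw [inv_le_comm₀ hS0 (by norm_num)]
    norm_num
    linarith
  have hx2 : S⁻¹*S⁻¹ ≤ (1/32)*S⁻¹ := mul_le_mul_of_nonneg_right h132 hv.le
  have hgoal : (0.2517:ℝ)/S = (2517/10000)*S⁻¹ := by
    rw [div_eq_mul_inv]; norm_num
  rw [hgoal]
  linarith

lemma uone_bound (S Ub : ℝ) (hS : 32 ≤ S) (h1 : 0 < Ub) (h2 : Ub < 0.1483/S) :
    1 < (1 + 3/S) * (1 - 1/S - Ub) := by
  have hS0 : (0:ℝ) < S := by linarith
  have hv0 : (0:ℝ) < 1/S := by positivity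
  have h1s : 1/S ≤ 1/32 := by
    rw [div_le_div_iff₀ hS0 (by norm_num)]; linarith
  have hvv : (1/S)*(1/S) ≤ (1/32)*(1/S) := mul_le_mul_of_nonneg_right h1s hv0.le
  have hUbv : Ub * (1/S) < (0.1483/S) * (1/S) := mul_lt_mul_of_pos_right h2 hv0
  have hd : (0.1483:ℝ)/S = 0.1483 * (1/S) := by ring
  have h3d : (3:ℝ)/S = 3 * (1/S) := by ring
  nlinarith [hvv, hUbv, hv0, h2]

lemma key1 (S E F : ℝ) (hS : 32 ≤ S) (hE0 : 0 < E) (hE : E < 1/2)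
    (hF0 : 0 < F) (hFub : F ≤ (1-E)/S * (4*S+1)) :
    1/(2*S) * F < (1-E)/S * (1 - 1/(4*S)) * (F + 1.4/S) := by
  have hS0 : (0:ℝ) < S := by linarith
  have hy0 : 0 < S * F := mul_pos hS0 hF0
  have hyub : S * F ≤ (1-E)*(4*S+1) := by
    have hh := mul_le_mul_of_nonneg_left hFub hS0.le
    have heq : S * ((1-E)/S * (4*S+1)) = (1-E)*(4*S+1) := by
      field_simp
    linarith
  -- polynomial core
  have step1 : 2*S ≤ (1-E)*(4*S) := by
    nlinarith [mul_nonneg (by linarith : (0:ℝ) ≤ 1-2*E) (by linarith : (0:ℝ) ≤ S)]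
  have step2 : 2*S*(S*F) ≤ (1-E)*(4*S)*(S*F) := by nlinarith [step1, hy0]
  have step3 : S*F < 1.4*(4*S-1) := by nlinarith [hyub]
  have hpoly : 2*S*(S*F) < (1-E)*(4*S-1)*((S*F)+1.4) := by
    nlinarith [mul_pos (by linarith : (0:ℝ) < 1-E) (by linarith : (0:ℝ) < 1.4*(4*S-1) - S*F), step2]
  have hrepr : (1-E)/S * (1 - 1/(4*S)) * (F + 1.4/S) - 1/(2*S) * F
      = ((1-E)*(4*S-1)*((S*F)+1.4) - 2*S*(S*F)) / (4*S^3) := by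
    field_simp
    ring
  have hpos : 0 < ((1-E)*(4*S-1)*((S*F)+1.4) - 2*S*(S*F)) / (4*S^3) :=
    div_pos (by linarith) (by positivity)
  linarith

theorem stmt_8
    (s : ℕ) (hs : 32 ≤ s)
    (α δ : ℝ → ℝ) (β γ : ℕ → ℝ → ℝ) (B Γ u R : ℝ → ℝ)
    (hB : ∀ t, B t = ∑ j ∈ Finset.Icc 1 (8*s), β j t)
    (hΓ : ∀ t, Γ t = ∑ j ∈ Finset.Icc 1 (8*s), γ j t)
    (hu : ∀ t, u t = 1 - 1/(s:ℝ) - Γ t)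
    (hR : ∀ t, R t = 1 + 1/(2*(s:ℝ)) - δ t / 2 - u t)
    (hderivα : ∀ t : ℝ, 0 ≤ t → HasDerivAt α (-(α t / 2) * (Γ t - B t) + δ t * B t) t)
    (hderivδ : ∀ t : ℝ, 0 ≤ t →
      HasDerivAt δ ((α t / 2) * (Γ t - B t) + ((1/(s:ℝ) - α t - δ t)/2) * B t - δ t * Γ t) t)
    (hderivβ1 : ∀ t : ℝ, 0 ≤ t → HasDerivAt (β 1) (-(β 1 t) * R t + (α t / 2) * Γ t) t)
    (hderivβ : ∀ j, 2 ≤ j → j ≤ 8*s → ∀ t : ℝ, 0 ≤ t →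
      HasDerivAt (β j) (β (j-1) t - β j t * R t) t)
    (hderivγ1 : ∀ t : ℝ, 0 ≤ t →
      HasDerivAt (γ 1) (-(γ 1 t) * R t + (1/(2*(s:ℝ)) - δ t / 2) * Γ t) t)
    (hderivγ : ∀ j, 2 ≤ j → j ≤ 8*s → ∀ t : ℝ, 0 ≤ t →
      HasDerivAt (γ j) (γ (j-1) t - γ j t * R t) t)
    (ε : ℝ) (hε : 0 < ε) (hε' : ε < 1/2) (t₀ : ℝ) (ht₀ : 0 ≤ t₀)
    (hδb : ∀ t : ℝ, t₀ ≤ t → 0 ≤ δ t ∧ δ t < 0.2 / (s:ℝ))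
    (hγpos : ∀ t : ℝ, t₀ ≤ t → ∀ j, 1 ≤ j → j ≤ 8*s → 0 < γ j t)
    (hinit1 : ∀ j, 1 ≤ j → j ≤ 8*s →
      γ j t₀ < ((1-ε)/(s:ℝ)) * Real.exp (-(j:ℝ)/(4*(s:ℝ))))
    (hinit2 : u t₀ < ((1-ε)/((s:ℝ) * Real.exp 2)) * (1 + 3/(s:ℝ))) :
    ∀ t : ℝ, t₀ ≤ t →
      (∀ j, 1 ≤ j → j ≤ 8*s →
        γ j t < ((1-ε)/(s:ℝ)) * Real.exp (-(j:ℝ)/(4*(s:ℝ)))) ∧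
      u t < ((1-ε)/((s:ℝ) * Real.exp 2)) * (1 + 3/(s:ℝ)) := by
  clear hB hderivα hderivδ hderivβ1 hderivβ
  have hs32 : (32:ℝ) ≤ (s:ℝ) := by exact_mod_cast hs
  have hsp : (0:ℝ) < (s:ℝ) := by linarith
  set n := 8*s with hn
  have hn1 : 1 ≤ n := by omega
  have hn2 : 2 ≤ n := by omega
  set G : ℕ → ℝ := fun j => ((1-ε)/(s:ℝ)) * Real.exp (-(j:ℝ)/(4*(s:ℝ))) with hG
  set Ub : ℝ := ((1-ε)/((s:ℝ) * Real.exp 2)) * (1 + 3/(s:ℝ)) with hUb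
  have hGapp : ∀ j : ℕ, G j = ((1-ε)/(s:ℝ)) * Real.exp (-(j:ℝ)/(4*(s:ℝ))) :=
    fun j => by rw [hG]
  clear_value G Ub
  have hep : (0:ℝ) < 1 - ε := by linarith
  have hGpos : ∀ j : ℕ, 0 < G j := fun j => by
    rw [hGapp j]; exact mul_pos (div_pos hep hsp) (Real.exp_pos _)
  have he2 : (7.38:ℝ) < Real.exp 2 := by
    have h := Real.exp_one_gt_d9
    have h2 : Real.exp 2 = Real.exp 1 * Real.exp 1 := by
      rw [← Real.exp_add]; norm_num
    nlinarith
  have hUbpos : 0 < Ub := by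
    rw [hUb]
    apply mul_pos (div_pos hep (mul_pos hsp (Real.exp_pos _)))
    positivity
  have hUbsmall : Ub < 0.1483 / (s:ℝ) := by
    rw [hUb, div_mul_eq_mul_div, div_lt_div_iff₀ (mul_pos hsp (Real.exp_pos _)) hsp]
    have h3s : 3/(s:ℝ) ≤ 3/32 := by
      rw [div_le_div_iff₀ hsp (by norm_num)]; linarith
    have hBpos : (0:ℝ) ≤ 1 + 3/(s:ℝ) := by positivity
    have e1 : (1-ε)*(1+3/(s:ℝ))*(s:ℝ) ≤ (35/32)*(s:ℝ) := by
      nlinarith [mul_nonneg (mul_nonneg hε.le hBpos) hsp.le,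
        mul_le_mul_of_nonneg_right (show (1+3/(s:ℝ)) ≤ 35/32 by linarith) hsp.le]
    have e2 : (0.1483:ℝ)*(7.38*(s:ℝ)) ≤ 0.1483*((s:ℝ)*Real.exp 2) := by
      nlinarith [mul_lt_mul_of_pos_left he2 hsp]
    nlinarith
  -- derivative of Γ
  have hΓd : ∀ t : ℝ, 0 ≤ t → HasDerivAt Γ (u t * Γ t - γ n t) t := by
    intro t ht
    have hfun : Γ = fun τ => ∑ j ∈ Finset.Icc 1 n, γ j τ := funext hΓ
    have hder : ∀ j ∈ Finset.Icc 1 n, HasDerivAt (γ j)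
        (if j = 1 then -(γ 1 t) * R t + (1/(2*(s:ℝ)) - δ t / 2) * Γ t
         else γ (j-1) t - γ j t * R t) t := by
      intro j hj
      obtain ⟨ha, hb⟩ := Finset.mem_Icc.mp hj
      by_cases hj1 : j = 1
      · subst hj1; simpa using hderivγ1 t ht
      · rw [if_neg hj1]; exact hderivγ j (by omega) hb t ht
    have hsum := HasDerivAt.fun_sum hder
    rw [← hfun] at hsum
    refine hsum.congr_deriv (Eq.symm ?_)
    have hsplit : Finset.Icc 1 n = insert 1 (Finset.Icc 2 n) := by
      ext a; simp only [Finset.mem_Icc, Finset.mem_insert]; omega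
    have h1notin : (1:ℕ) ∉ Finset.Icc 2 n := by simp
    rw [hsplit, Finset.sum_insert h1notin, if_pos rfl]
    have hcong : ∑ j ∈ Finset.Icc 2 n,
        (if j = 1 then -(γ 1 t) * R t + (1/(2*(s:ℝ)) - δ t / 2) * Γ t
         else γ (j-1) t - γ j t * R t)
        = ∑ j ∈ Finset.Icc 2 n, (γ (j-1) t - γ j t * R t) :=
      Finset.sum_congr rfl (fun j hj => if_neg (by
        have := (Finset.mem_Icc.mp hj).1; omega))
    rw [hcong, Finset.sum_sub_distrib]
    have him : Finset.Icc 2 n = (Finset.Icc 1 (n-1)).image (· + 1) := by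
      rw [Finset.image_add_right_Icc]
      congr 1 <;> omega
    have h1 : ∑ j ∈ Finset.Icc 2 n, γ (j-1) t = ∑ j ∈ Finset.Icc 1 (n-1), γ j t := by
      rw [him, Finset.sum_image (by intro a _ b _ h; simp only at h; omega)]
      exact Finset.sum_congr rfl (fun j hj => by congr 1)
    have h2 : ∑ j ∈ Finset.Icc 1 (n-1), γ j t = Γ t - γ n t := by
      have hsp2 : Finset.Icc 1 n = insert n (Finset.Icc 1 (n-1)) := by
        ext a; simp only [Finset.mem_Icc, Finset.mem_insert]; omega
      have hnotin : n ∉ Finset.Icc 1 (n-1) := by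
        simp only [Finset.mem_Icc]; omega
      have hΓt := hΓ t
      rw [hsp2, Finset.sum_insert hnotin] at hΓt
      linarith
    have h3 : ∑ j ∈ Finset.Icc 2 n, γ j t * R t = (Γ t - γ 1 t) * R t := by
      rw [← Finset.sum_mul]
      congr 1
      have hΓt := hΓ t
      rw [hsplit, Finset.sum_insert h1notin] at hΓt
      linarith
    rw [h1, h2, h3]
    linear_combination (Γ t) * (hR t)
  have hud : ∀ t : ℝ, 0 ≤ t → HasDerivAt u (γ n t - u t * Γ t) t := by
    intro t ht
    have hfun : u = fun τ => 1 - 1/(s:ℝ) - Γ τ := funext hu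
    have h := HasDerivAt.const_sub (1 - 1/(s:ℝ)) (hΓd t ht)
    rw [← hfun] at h
    refine h.congr_deriv ?_; ring
  have hcontγ : ∀ j, 1 ≤ j → j ≤ n → ∀ t : ℝ, (0:ℝ) ≤ t → ContinuousAt (γ j) t := by
    intro j h1 h2 t ht
    rcases Nat.lt_or_ge j 2 with hj | hj
    · have hj1 : j = 1 := by omega
      subst hj1
      exact (hderivγ1 t ht).continuousAt
    · exact (hderivγ j hj h2 t ht).continuousAt
  have hcontu : ∀ t : ℝ, (0:ℝ) ≤ t → ContinuousAt u t := fun t ht => (hud t ht).continuousAt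
  have key : ∀ t, t₀ ≤ t → ((∀ j, 1 ≤ j → j ≤ n → γ j t < G j) ∧ u t < Ub) := by
    by_contra hcon
    obtain ⟨t₁, ht₁c⟩ := not_forall.mp hcon
    rw [Classical.not_imp] at ht₁c
    obtain ⟨ht₁, hnQ⟩ := ht₁c
    set Bad : Set ℝ :=
      {t | t₀ ≤ t ∧ ¬((∀ j, 1 ≤ j → j ≤ n → γ j t < G j) ∧ u t < Ub)} with hBad
    have hne : Bad.Nonempty := ⟨t₁, ht₁, hnQ⟩
    have hbdd : BddBelow Bad := ⟨t₀, fun x hx => hx.1⟩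
    set T := sInf Bad with hT
    have hTt₀ : t₀ ≤ T := le_csInf hne fun x hx => hx.1
    have hT0 : (0:ℝ) ≤ T := le_trans ht₀ hTt₀
    have hQbelow : ∀ t, t₀ ≤ t → t < T →
        ((∀ j, 1 ≤ j → j ≤ n → γ j t < G j) ∧ u t < Ub) := by
      intro t h1 h2
      by_contra h
      exact absurd (csInf_le hbdd ⟨h1, h⟩) (not_le.mpr h2)
    have hQt₀ : (∀ j, 1 ≤ j → j ≤ n → γ j t₀ < G j) ∧ u t₀ < Ub :=
      ⟨fun j a b => by rw [hGapp j]; exact hinit1 j a b, hinit2⟩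
    have hQT : ¬((∀ j, 1 ≤ j → j ≤ n → γ j T < G j) ∧ u T < Ub) := by
      intro hQ
      have h1 : ∀ᶠ t in 𝓝 T, u t < Ub :=
        (hcontu T hT0).eventually_lt_const hQ.2
      have h2 : ∀ᶠ t in 𝓝 T, ∀ j, 1 ≤ j → j ≤ n → γ j t < G j := by
        have hall : ∀ᶠ t in 𝓝 T, ∀ j ∈ Finset.Icc 1 n, γ j t < G j := by
          rw [Filter.eventually_all_finset]
          intro j hj
          obtain ⟨hj1, hj2⟩ := Finset.mem_Icc.mp hj
          exact (hcontγ j hj1 hj2 T hT0).eventually_lt_const (hQ.1 j hj1 hj2)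
        exact hall.mono (fun t ht j hj1 hj2 => ht j (Finset.mem_Icc.mpr ⟨hj1, hj2⟩))
      obtain ⟨r, hr, hball⟩ := Metric.eventually_nhds_iff.mp (h1.and h2)
      have hlb : T + r ≤ T := by
        apply le_csInf hne
        intro b hb
        by_contra hbl
        push_neg at hbl
        have hbT : T ≤ b := csInf_le hbdd hb
        have hdist : dist b T < r := by
          rw [Real.dist_eq, abs_of_nonneg (by linarith)]; linarith
        have hQb := hball hdist
        exact hb.2 ⟨hQb.2, hQb.1⟩
      linarith
    have hTgt : t₀ < T := lt_of_le_of_ne hTt₀ (fun h => hQT (h ▸ hQt₀))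
    have hIoo : Ioo t₀ T ∈ 𝓝[<] T := Ioo_mem_nhdsLT_of_mem ⟨hTgt, le_refl T⟩
    have hγleT : ∀ j, 1 ≤ j → j ≤ n → γ j T ≤ G j := by
      intro j h1 h2
      refine le_of_tendsto ((hcontγ j h1 h2 T hT0).continuousWithinAt (s := Set.Iio T)) ?_
      filter_upwards [hIoo] with t ht
      exact ((hQbelow t ht.1.le ht.2).1 j h1 h2).le
    have huleT : u T ≤ Ub := by
      refine le_of_tendsto ((hcontu T hT0).continuousWithinAt (s := Set.Iio T)) ?_
      filter_upwards [hIoo] with t ht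
      exact ((hQbelow t ht.1.le ht.2).2).le
    obtain ⟨hδ0, hδ1⟩ := hδb T hTt₀
    have hΓT : Γ T = 1 - 1/(s:ℝ) - u T := by have := hu T; linarith
    have hRT : R T = Γ T + 3/(2*(s:ℝ)) - δ T / 2 := by
      rw [hR T, hΓT]; field_simp; ring
    have hΓpos : 0 < Γ T := by
      rw [hΓ T]
      apply Finset.sum_pos
      · intro j hj
        obtain ⟨a, b⟩ := Finset.mem_Icc.mp hj
        exact hγpos T hTt₀ j a b
      · exact ⟨1, Finset.mem_Icc.mpr ⟨le_refl 1, hn1⟩⟩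
    -- upper bound on Γ T via geometric sum
    have hsne : (s:ℝ) ≠ 0 := ne_of_gt hsp
    have hΓub : Γ T ≤ ((1-ε)/(s:ℝ)) * (4*(s:ℝ)+1) := by
      set r : ℝ := Real.exp (-(1/(4*(s:ℝ)))) with hr
      clear_value r
      have hr0 : 0 < r := hr ▸ Real.exp_pos _
      have hGr : ∀ j : ℕ, G j = ((1-ε)/(s:ℝ)) * r ^ j := by
        intro j
        simp only [hG, hr]
        rw [← Real.exp_nat_mul]
        congr 1
        ring
      have hsum1 : Γ T ≤ ∑ j ∈ Finset.Icc 1 n, G j := by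
        rw [hΓ T]
        exact Finset.sum_le_sum fun j hj =>
          hγleT j (Finset.mem_Icc.mp hj).1 (Finset.mem_Icc.mp hj).2
      have hsum2 : ∑ j ∈ Finset.Icc 1 n, G j
          = ((1-ε)/(s:ℝ)) * ∑ j ∈ Finset.Icc 1 n, r ^ j := by
        rw [Finset.mul_sum]
        exact Finset.sum_congr rfl fun j _ => hGr j
      have hsub : Finset.Icc 1 n ⊆ Finset.range (n+1) := by
        intro a ha
        simp only [Finset.mem_range, Finset.mem_Icc] at *
        omega
      have h3 : ∑ j ∈ Finset.Icc 1 n, r ^ j ≤ ∑ j ∈ Finset.range (n+1), r ^ j :=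
        Finset.sum_le_sum_of_subset_of_nonneg hsub fun i _ _ => (pow_pos hr0 i).le
      have h7 : ∑ j ∈ Finset.range (n+1), r ^ j ≤ 4*(s:ℝ)+1 := by
        rw [hr]; exact geom_bound (s:ℝ) hsp (n+1)
      have h8 : ∑ j ∈ Finset.Icc 1 n, r ^ j ≤ 4*(s:ℝ)+1 := le_trans h3 h7
      have h9 := mul_le_mul_of_nonneg_left h8 (le_of_lt (div_pos hep hsp))
      linarith [hsum1, hsum2.le, h9, hsum2.ge]
    -- case analysis
    rcases not_and_or.mp hQT with hA | hB
    · push_neg at hA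
      obtain ⟨j, hj1, hj2, hjge⟩ := hA
      have hjeq : γ j T = G j := le_antisymm (hγleT j hj1 hj2) hjge
      rcases Nat.lt_or_ge j 2 with hjc | hjc
      · -- j = 1
        have hj1' : j = 1 := by omega
        subst hj1'
        refine slope_neg_contra (hderivγ1 T hT0) ?_ hTgt ?_
        · -- derivative negative at touching time for γ₁
          have hG1 : ((1-ε)/(s:ℝ)) * (1 - 1/(4*(s:ℝ))) ≤ G 1 := by
            simp only [hG, Nat.cast_one]
            apply mul_le_mul_of_nonneg_left _ (le_of_lt (div_pos hep hsp))
            have hxe := Real.add_one_le_exp (-(1/(4*(s:ℝ))))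
            have harg : -(1:ℝ)/(4*(s:ℝ)) = -(1/(4*(s:ℝ))) := by ring
            rw [harg]
            linarith
          have hRlb : Γ T + 1.4/(s:ℝ) ≤ R T := by
            rw [hRT]
            have hd2 : δ T / 2 ≤ 0.1/(s:ℝ) := by
              have : (0.2:ℝ)/(s:ℝ) = 2 * (0.1/(s:ℝ)) := by ring
              linarith [hδ1]
            have h32 : 3/(2*(s:ℝ)) = 1.5/(s:ℝ) := by ring
            have : (1.5:ℝ)/(s:ℝ) - 0.1/(s:ℝ) = 1.4/(s:ℝ) := by ring
            linarith
          have hmid : (1/(2*(s:ℝ)) - δ T / 2) * Γ T ≤ 1/(2*(s:ℝ)) * Γ T := by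
            nlinarith [hΓpos, hδ0]
          have hkey : 1/(2*(s:ℝ)) * Γ T
              < ((1-ε)/(s:ℝ)) * (1 - 1/(4*(s:ℝ))) * (Γ T + 1.4/(s:ℝ)) :=
            key1 (s:ℝ) ε (Γ T) hs32 hε hε' hΓpos hΓub
          have hfin : (1/(2*(s:ℝ)) - δ T / 2) * Γ T < G 1 * R T := by
            have h14 : (0:ℝ) < 1.4/(s:ℝ) := by positivity
            have hb : ((1-ε)/(s:ℝ)) * (1 - 1/(4*(s:ℝ))) * (Γ T + 1.4/(s:ℝ)) ≤ G 1 * R T :=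
              mul_le_mul hG1 hRlb (by linarith) (le_of_lt (hGpos 1))
            linarith
          rw [hjeq]
          linarith
        · intro t h1 h2
          rw [hjeq]
          exact (hQbelow t h1.le h2).1 1 le_rfl hn1
      · -- j ≥ 2
        refine slope_neg_contra (hderivγ j hjc hj2 T hT0) ?_ hTgt ?_
        · have hjm1 : 1 ≤ j - 1 := by omega
          have hjm2 : j - 1 ≤ n := by omega
          have h1 : γ (j-1) T ≤ G (j-1) := hγleT (j-1) hjm1 hjm2
          have hcast : ((j-1:ℕ):ℝ) = (j:ℝ) - 1 := by
            rw [Nat.cast_sub hj1, Nat.cast_one]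
          have hGj : G (j-1) = G j * Real.exp (1/(4*(s:ℝ))) := by
            simp only [hG]
            rw [mul_assoc, ← Real.exp_add, hcast]
            congr 2
            ring
          have hRlb2 : 1 + 0.2517/(s:ℝ) < R T := by
            rw [hRT, hΓT]
            have h1u : u T < 0.1483/(s:ℝ) := lt_of_le_of_lt huleT hUbsmall
            have h32 : 3/(2*(s:ℝ)) = 1.5/(s:ℝ) := by ring
            have hd2 : δ T / 2 < 0.1/(s:ℝ) := by
              have : (0.2:ℝ)/(s:ℝ) = 2 * (0.1/(s:ℝ)) := by ring
              linarith [hδ1]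
            have hcomb : (1:ℝ)/(s:ℝ) + 0.1483/(s:ℝ) + 0.1/(s:ℝ) + 0.2517/(s:ℝ)
                ≤ 1.5/(s:ℝ) := by
              have heq : (1:ℝ)/(s:ℝ) + 0.1483/(s:ℝ) + 0.1/(s:ℝ) + 0.2517/(s:ℝ)
                  = 1.5/(s:ℝ) := by ring
              linarith [heq.le, heq.ge]
            linarith
          have hER : Real.exp (1/(4*(s:ℝ))) < R T :=
            lt_of_le_of_lt (exp_quarter_ub (s:ℝ) hs32) hRlb2
          have h2 : γ (j-1) T ≤ G j * Real.exp (1/(4*(s:ℝ))) := by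
            rw [← hGj]; exact h1
          have h3 : G j * Real.exp (1/(4*(s:ℝ))) < G j * R T :=
            mul_lt_mul_of_pos_left hER (hGpos j)
          rw [hjeq]
          linarith
        · intro t h1 h2
          rw [hjeq]
          exact (hQbelow t h1.le h2).1 j hj1 hj2
    · have huT : u T = Ub := le_antisymm huleT (not_lt.mp hB)
      refine slope_neg_contra (hud T hT0) ?_ hTgt ?_
      · have h1 : γ n T ≤ G n := hγleT n hn1 le_rfl
        have hGn : G n = ((1-ε)/(s:ℝ)) * (Real.exp 2)⁻¹ := by
          simp only [hG]
          congr 1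
          rw [← Real.exp_neg]
          congr 1
          rw [hn]
          push_cast
          field_simp
          ring
        have hUbGn : Ub = G n * (1 + 3/(s:ℝ)) := by
          rw [hUb, hGn]
          field_simp
        have hv0 : (0:ℝ) < 1/(s:ℝ) := by positivity
        have h1s : 1/(s:ℝ) ≤ 1/32 := by
          rw [div_le_div_iff₀ hsp (by norm_num)]; linarith
        have hvv : (1/(s:ℝ))*(1/(s:ℝ)) ≤ (1/32)*(1/(s:ℝ)) :=
          mul_le_mul_of_nonneg_right h1s hv0.le
        have hUbv : Ub * (1/(s:ℝ)) < (0.1483/(s:ℝ)) * (1/(s:ℝ)) :=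
          mul_lt_mul_of_pos_right hUbsmall hv0
        have hone : 1 < (1 + 3/(s:ℝ)) * (1 - 1/(s:ℝ) - Ub) :=
          uone_bound (s:ℝ) Ub hs32 hUbpos hUbsmall
        have h2 : G n < Ub * (1 - 1/(s:ℝ) - Ub) := by
          rw [hUbGn]
          nlinarith [mul_lt_mul_of_pos_left hone (hGpos n)]
        rw [hΓT, huT]
        linarith
      · intro t h1 h2
        rw [huT]
        exact (hQbelow t h1.le h2).2
  intro t ht
  refine ⟨fun j h1 h2 => ?_, (key t ht).2⟩
  have hkj := (key t ht).1 j h1 h2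
  rwa [hGapp j] at hkj
end

section
/- Let s ≥ 32. Assume that for all t ≥ 0 the variables satisfy γ_j(t) > 0 for all 1 ≤ j ≤ 8s, 0 ≤ δ(t) ≤ 0.2/s, Γ(t) ≥ 1 − 2/s, and γ_2(t) ≤ 1/s, and assume that γ_{j−1}(0)/γ_j(0) > 1/2 for all 2 ≤ j ≤ 8s. Then for every 2 ≤ j ≤ 8s and every t ≥ 0 it holds that γ_{j−1}(t)/γ_j(t) > 1/2. -/
open Filter Set Topology

/-- If `f` is positive on `[0,T)`, vanishes at `T > 0`, and has derivative `d` at `T`,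
then `d ≤ 0`. -/
lemma stmt9_deriv_nonpos {f : ℝ → ℝ} {T d : ℝ} (hT : 0 < T) (hd : HasDerivAt f d T)
    (hfT : f T = 0) (hpos : ∀ t, 0 ≤ t → t < T → 0 < f t) : d ≤ 0 := by
  have hslope : Tendsto (slope f T) (𝓝[<] T) (𝓝 d) :=
    (hasDerivAt_iff_tendsto_slope.mp hd).mono_left
      (nhdsWithin_mono _ (fun x hx => ne_of_lt hx))
  refine le_of_tendsto hslope ?_
  filter_upwards [Ioo_mem_nhdsLT hT] with t ht
  have hft := hpos t ht.1.le ht.2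
  have hlt : t - T < 0 := sub_neg.mpr ht.2
  have hsl : slope f T t = f t / (t - T) := by
    rw [slope_def_field, hfT, sub_zero]
  rw [hsl]
  exact le_of_lt (div_neg_of_pos_of_neg hft hlt)

theorem stmt_9
    (s : ℕ) (hs : 32 ≤ s)
    (α δ : ℝ → ℝ) (β γ : ℕ → ℝ → ℝ) (B Γ u R : ℝ → ℝ)
    (hB : ∀ t, B t = ∑ j ∈ Finset.Icc 1 (8*s), β j t)
    (hΓ : ∀ t, Γ t = ∑ j ∈ Finset.Icc 1 (8*s), γ j t)
    (hu : ∀ t, u t = 1 - 1/(s:ℝ) - Γ t)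
    (hR : ∀ t, R t = 1 + 1/(2*(s:ℝ)) - δ t / 2 - u t)
    (hderivα : ∀ t : ℝ, 0 ≤ t → HasDerivAt α (-(α t / 2) * (Γ t - B t) + δ t * B t) t)
    (hderivδ : ∀ t : ℝ, 0 ≤ t →
      HasDerivAt δ ((α t / 2) * (Γ t - B t) + ((1/(s:ℝ) - α t - δ t)/2) * B t - δ t * Γ t) t)
    (hderivβ1 : ∀ t : ℝ, 0 ≤ t → HasDerivAt (β 1) (-(β 1 t) * R t + (α t / 2) * Γ t) t)
    (hderivβ : ∀ j, 2 ≤ j → j ≤ 8*s → ∀ t : ℝ, 0 ≤ t →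
      HasDerivAt (β j) (β (j-1) t - β j t * R t) t)
    (hderivγ1 : ∀ t : ℝ, 0 ≤ t →
      HasDerivAt (γ 1) (-(γ 1 t) * R t + (1/(2*(s:ℝ)) - δ t / 2) * Γ t) t)
    (hderivγ : ∀ j, 2 ≤ j → j ≤ 8*s → ∀ t : ℝ, 0 ≤ t →
      HasDerivAt (γ j) (γ (j-1) t - γ j t * R t) t)
    (hγpos : ∀ t : ℝ, 0 ≤ t → ∀ j, 1 ≤ j → j ≤ 8*s → 0 < γ j t)
    (hδb : ∀ t : ℝ, 0 ≤ t → 0 ≤ δ t ∧ δ t ≤ 0.2 / (s:ℝ))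
    (hΓb : ∀ t : ℝ, 0 ≤ t → 1 - 2/(s:ℝ) ≤ Γ t)
    (hγ2 : ∀ t : ℝ, 0 ≤ t → γ 2 t ≤ 1/(s:ℝ))
    (hinit : ∀ j, 2 ≤ j → j ≤ 8*s → 1/2 < γ (j-1) 0 / γ j 0) :
    ∀ j, 2 ≤ j → j ≤ 8*s → ∀ t : ℝ, 0 ≤ t → 1/2 < γ (j-1) t / γ j t := by
  classical
  have hsR : (32:ℝ) ≤ (s:ℝ) := by exact_mod_cast hs
  have hsR0 : (0:ℝ) < (s:ℝ) := by linarith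
  -- main positivity claim
  have key : ∀ t : ℝ, 0 ≤ t → ∀ j, 2 ≤ j → j ≤ 8*s → 0 < γ (j-1) t - γ j t / 2 := by
    by_contra h
    push_neg at h
    obtain ⟨t₀, ht₀, j₁, hj₁2, hj₁8, hfle⟩ := h
    set S : Set ℝ := {t | 0 ≤ t ∧ ∃ j, 2 ≤ j ∧ j ≤ 8*s ∧ γ (j-1) t - γ j t / 2 ≤ 0} with hS
    have hSne : S.Nonempty := ⟨t₀, ht₀, j₁, hj₁2, hj₁8, hfle⟩
    have hSbdd : BddBelow S := ⟨0, fun x hx => hx.1⟩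
    set T := sInf S with hTdef
    have hT0 : 0 ≤ T := le_csInf hSne (fun x hx => hx.1)
    -- continuity of γ j at T for 1 ≤ j ≤ 8s
    have hcont : ∀ j, 1 ≤ j → j ≤ 8*s → ContinuousAt (γ j) T := by
      intro j h1 h8
      rcases eq_or_lt_of_le h1 with h | h
      · rw [← h]; exact (hderivγ1 T hT0).continuousAt
      · exact (hderivγ j h h8 T hT0).continuousAt
    have hcontf : ∀ j, 2 ≤ j → j ≤ 8*s →
        ContinuousAt (fun t => γ (j-1) t - γ j t / 2) T := by
      intro j h2 h8
      exact ((hcont (j-1) (by omega) (by omega)).sub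
        ((hcont j (by omega) h8).div_const 2))
    -- points before T are in the good region
    have hbefore : ∀ t, 0 ≤ t → t < T → ∀ j, 2 ≤ j → j ≤ 8*s →
        0 < γ (j-1) t - γ j t / 2 := by
      intro t ht htT j h2 h8
      by_contra hle
      push_neg at hle
      exact absurd (csInf_le hSbdd ⟨ht, j, h2, h8, hle⟩) (not_le.mpr htT)
    -- T is in S
    have hTS : ∃ j, 2 ≤ j ∧ j ≤ 8*s ∧ γ (j-1) T - γ j T / 2 ≤ 0 := by
      by_contra hnot
      push_neg at hnot
      have hclos : T ∈ closure S := csInf_mem_closure hSne hSbdd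
      rw [mem_closure_iff_nhds] at hclos
      have hev : ∀ᶠ t in 𝓝 T, ∀ j ∈ Finset.Icc 2 (8*s), 0 < γ (j-1) t - γ j t / 2 := by
        rw [eventually_all_finset]
        intro j hj
        rw [Finset.mem_Icc] at hj
        have hp := hnot j hj.1 hj.2
        have := (hcontf j hj.1 hj.2).preimage_mem_nhds (Ioi_mem_nhds hp)
        filter_upwards [this] with t ht using ht
      obtain ⟨t, htP, htSmem⟩ := hclos _ hev
      obtain ⟨-, j, hj2, hj8, hjle⟩ := htSmem
      exact absurd (htP j (Finset.mem_Icc.mpr ⟨hj2, hj8⟩)) (not_lt.mpr hjle)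
    -- T > 0
    have hTpos : 0 < T := by
      rcases hT0.lt_or_eq with h | h
      · exact h
      · exfalso
        obtain ⟨j, hj2, hj8, hjle⟩ := hTS
        have hr := hinit j hj2 hj8
        have hg := hγpos 0 le_rfl j (by omega) hj8
        rw [lt_div_iff₀ hg] at hr
        rw [← h] at hjle
        linarith
    -- f j T ≥ 0 for all admissible j
    have hge : ∀ j, 2 ≤ j → j ≤ 8*s → 0 ≤ γ (j-1) T - γ j T / 2 := by
      intro j h2 h8
      have htend : Tendsto (fun t => γ (j-1) t - γ j t / 2) (𝓝[<] T)
          (𝓝 (γ (j-1) T - γ j T / 2)) :=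
        (hcontf j h2 h8).mono_left nhdsWithin_le_nhds
      refine ge_of_tendsto htend ?_
      filter_upwards [Ioo_mem_nhdsLT hTpos] with t ht
      exact (hbefore t ht.1.le ht.2 j h2 h8).le
    -- minimal bad index
    obtain ⟨j₀, ⟨hj₀2, hj₀8, hj₀le⟩, hj₀min⟩ :
        ∃ j, (2 ≤ j ∧ j ≤ 8*s ∧ γ (j-1) T - γ j T / 2 ≤ 0) ∧
          ∀ k, k < j → ¬(2 ≤ k ∧ k ≤ 8*s ∧ γ (k-1) T - γ k T / 2 ≤ 0) :=
      ⟨Nat.find hTS, Nat.find_spec hTS, fun k hk => Nat.find_min hTS hk⟩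
    have hj₀eq : γ (j₀-1) T - γ j₀ T / 2 = 0 := le_antisymm hj₀le (hge j₀ hj₀2 hj₀8)
    rcases Nat.lt_or_ge j₀ 3 with h3 | h3
    · -- j₀ = 2
      have hj2 : j₀ = 2 := by omega
      subst hj2
      have h1 := hderivγ1 T hT0
      have h2d := hderivγ 2 le_rfl hj₀8 T hT0
      have hD : HasDerivAt (fun t => γ (2-1) t - γ 2 t / 2)
          ((-(γ 1 T) * R T + (1/(2*(s:ℝ)) - δ T / 2) * Γ T) -
            (γ (2-1) T - γ 2 T * R T) / 2) T := h1.sub (h2d.div_const 2)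
      have hd0 : (-(γ 1 T) * R T + (1/(2*(s:ℝ)) - δ T / 2) * Γ T) -
          (γ (2-1) T - γ 2 T * R T) / 2 ≤ 0 :=
        stmt9_deriv_nonpos hTpos hD hj₀eq (fun t ht htT => hbefore t ht htT 2 le_rfl hj₀8)
      -- derive contradiction: the derivative is positive
      have hone : (2:ℕ) - 1 = 1 := rfl
      rw [hone] at hj₀eq hd0
      have hγ1T : γ 1 T = γ 2 T / 2 := by linarith
      rw [hγ1T] at hd0
      have hd0' : (1/(2*(s:ℝ)) - δ T / 2) * Γ T - γ 2 T / 4 ≤ 0 := by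
        nlinarith [hd0]
      have hδT := hδb T hT0
      have hc1 : (0.4:ℝ)/(s:ℝ) ≤ 1/(2*(s:ℝ)) - δ T / 2 := by
        have e1 : 1/(2*(s:ℝ)) - (0.2/(s:ℝ))/2 = 0.4/(s:ℝ) := by
          field_simp
          ring
        linarith [hδT.2]
      have hc1' : (0:ℝ) < 0.4/(s:ℝ) := by positivity
      have hgnn : (0:ℝ) ≤ 1 - 2/(s:ℝ) := by
        have : (2:ℝ)/(s:ℝ) ≤ 1 := (div_le_one hsR0).mpr (by linarith)
        linarith
      have hprod : (0.4/(s:ℝ)) * (1 - 2/(s:ℝ)) ≤ (1/(2*(s:ℝ)) - δ T / 2) * Γ T :=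
        mul_le_mul hc1 (hΓb T hT0) hgnn (by linarith)
      have hγ2T := hγ2 T hT0
      have hfin : (0:ℝ) < (0.4/(s:ℝ)) * (1 - 2/(s:ℝ)) - (1/(s:ℝ))/4 := by
        have e2 : (0.4/(s:ℝ)) * (1 - 2/(s:ℝ)) - (1/(s:ℝ))/4 =
            (0.15*(s:ℝ) - 0.8)/(s:ℝ)^2 := by
          field_simp
          ring
        rw [e2]
        apply div_pos (by nlinarith) (by positivity)
      linarith
    · -- j₀ ≥ 3
      have h1 := hderivγ (j₀-1) (by omega) (by omega) T hT0
      have h2d := hderivγ j₀ hj₀2 hj₀8 T hT0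
      have hD : HasDerivAt (fun t => γ (j₀-1) t - γ j₀ t / 2)
          ((γ (j₀-1-1) T - γ (j₀-1) T * R T) - (γ (j₀-1) T - γ j₀ T * R T) / 2) T :=
        h1.sub (h2d.div_const 2)
      have hd0 : (γ (j₀-1-1) T - γ (j₀-1) T * R T) - (γ (j₀-1) T - γ j₀ T * R T) / 2 ≤ 0 :=
        stmt9_deriv_nonpos hTpos hD hj₀eq (fun t ht htT => hbefore t ht htT j₀ hj₀2 hj₀8)
      have hprev : 0 < γ (j₀-1-1) T - γ (j₀-1) T / 2 := by
        have := hj₀min (j₀-1) (by omega)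
        push_neg at this
        exact this (by omega) (by omega)
      -- γ (j₀-1) T = γ j₀ T / 2, so the R-terms cancel up to a positive multiple
      have heq : γ (j₀-1) T = γ j₀ T / 2 := by linarith
      rw [heq] at hd0
      nlinarith [hd0, hprev, heq]
  -- conclude
  intro j h2 h8 t ht
  have hpos := hγpos t ht j (by omega) h8
  have hf' := key t ht j h2 h8
  rw [lt_div_iff₀ hpos]
  linarith
end

section
/- Let s ≥ 32, λ ∈ (0, 1), and ρ ∈ (0, 1). Assume the Phase-I standing bounds: for all t ≥ 0, 0 ≤ δ(t) ≤ 0.2/s, γ_j(t) > 0 for all 1 ≤ j ≤ 8s, γ_{j−1}(t)/γ_j(t) ≥ 1/2 for all 2 ≤ j ≤ 8s, γ_1(t) ≤ 1/s, 1 − 2/s ≤ Γ(t) ≤ 1, 1/s − δ(t) > 0, ξ(t) ≥ ρ, η(t) ≥ ρ, and η_j(t) ≥ ρ for all 1 ≤ j ≤ 8s. Then there exists a time T₁ with T₁ ≤ (144/(ρ(1−λ)))·s such that for all t ≥ T₁ one has ξ(t) > λ and η_j(t) > λ for all 1 ≤ j ≤ 8s; consequently, 2β(t) < 1 − λ for all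 t ≥ T₁. -/
set_option maxHeartbeats 1000000

open Finset

noncomputable def psum (j : ℕ) (m : ℝ) : ℝ := ∑ i ∈ Finset.range j, m^i / i.factorial

noncomputable def pexp (j : ℕ) (m : ℝ) : ℝ := Real.exp (-m) * psum j m

lemma psum_zero (m : ℝ) : psum 0 m = 0 := by simp [psum]

lemma psum_one (m : ℝ) : psum 1 m = 1 := by simp [psum]

lemma psum_succ (j : ℕ) (m : ℝ) : psum (j+1) m = psum j m + m^j / j.factorial := by
  simp [psum, Finset.sum_range_succ]

lemma hasDerivAt_psum (j : ℕ) (m : ℝ) : HasDerivAt (psum (j+1)) (psum j m) m := by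
  induction j with
  | zero =>
    have : psum 1 = fun _ : ℝ => (1:ℝ) := by funext x; exact psum_one x
    rw [this, psum_zero]
    exact hasDerivAt_const m 1
  | succ k ih =>
    have h1 : HasDerivAt (fun x : ℝ => x^(k+1) / (k+1).factorial)
        ((k+1) * m^k / (k+1).factorial) m := by
      simpa [div_eq_mul_inv, mul_comm, mul_assoc, mul_left_comm] using
        ((hasDerivAt_pow (k+1) m).div_const ((k+1).factorial : ℝ))
    have h2 : HasDerivAt (psum (k+2)) (psum k m + m^(k+1)/(k+1).factorial +
        ((k+1) * m^k / (k+1).factorial - m^(k+1)/(k+1).factorial)) m := by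
      have : psum (k+2) = fun x => psum (k+1) x + x^(k+1)/(k+1).factorial := by
        funext x; exact psum_succ (k+1) x
      rw [this]
      have := ih.add h1
      refine this.congr_deriv ?_
      ring
    have heq : psum k m + m^(k+1)/(k+1).factorial +
        ((k+1) * m^k / (k+1).factorial - m^(k+1)/(k+1).factorial) = psum (k+1) m := by
      rw [psum_succ]
      have hf : ((k+1).factorial : ℝ) = (k+1) * k.factorial := by
        rw [Nat.factorial_succ]; push_cast; ring
      have hk1 : ((k:ℝ)+1) ≠ 0 := by positivity
      have hkf : (k.factorial : ℝ) ≠ 0 := by positivity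
      field_simp [hf]
      rw [hf]; ring
    rw [heq] at h2; exact h2

lemma hasDerivAt_pexp (j : ℕ) (m : ℝ) :
    HasDerivAt (pexp (j+1)) (pexp j m - pexp (j+1) m) m := by
  have he : HasDerivAt (fun x : ℝ => Real.exp (-x)) (-Real.exp (-m)) m := by
    simpa [Function.comp_def] using (Real.hasDerivAt_exp (-m)).comp m (hasDerivAt_neg m)
  have h := he.mul (hasDerivAt_psum j m)
  have : pexp (j+1) = fun x => Real.exp (-x) * psum (j+1) x := rfl
  rw [this]
  refine h.congr_deriv ?_
  simp [pexp]; ring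

lemma psum_nonneg (j : ℕ) {m : ℝ} (hm : 0 ≤ m) : 0 ≤ psum j m := by
  apply Finset.sum_nonneg; intro i _; positivity

lemma pexp_nonneg (j : ℕ) {m : ℝ} (hm : 0 ≤ m) : 0 ≤ pexp j m := by
  have := psum_nonneg j hm; unfold pexp; positivity

lemma pexp_le_one (j : ℕ) {m : ℝ} (hm : 0 ≤ m) : pexp j m ≤ 1 := by
  unfold pexp
  have h := Real.sum_le_exp_of_nonneg hm j
  calc Real.exp (-m) * psum j m ≤ Real.exp (-m) * Real.exp m := by
        exact mul_le_mul_of_nonneg_left h (le_of_lt (Real.exp_pos _))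
    _ = 1 := by rw [← Real.exp_add]; simp

lemma pexp_mono (j k : ℕ) (hjk : j ≤ k) {m : ℝ} (hm : 0 ≤ m) : pexp j m ≤ pexp k m := by
  unfold pexp
  apply mul_le_mul_of_nonneg_left _ (le_of_lt (Real.exp_pos _))
  apply Finset.sum_le_sum_of_subset_of_nonneg (Finset.range_subset_range.2 hjk)
  intro i _ _; positivity

lemma pexp_zero_eq (j : ℕ) (hj : 1 ≤ j) : pexp j 0 = 1 := by
  unfold pexp psum
  rw [Finset.sum_eq_single 0]
  · simp
  · intro i _ hi; simp [zero_pow hi]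
  · intro h; simp at h; omega

lemma pexp_tail (j : ℕ) {m : ℝ} (hm : 0 ≤ m) :
    pexp j m ≤ Real.exp ((j:ℝ) - 5/8 * m) := by
  have key : psum j m ≤ Real.exp (j:ℝ) * psum j (3/8 * m) := by
    unfold psum
    rw [Finset.mul_sum]
    apply Finset.sum_le_sum
    intro i hi
    have hij : (i:ℝ) ≤ (j:ℝ) := by
      exact_mod_cast le_of_lt (Finset.mem_range.1 hi)
    have h1 : m ^ i ≤ Real.exp (j:ℝ) * (3/8*m)^i := by
      have he : Real.exp 1 ≥ 8/3 := by
        have := Real.exp_one_gt_d9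
        linarith
      have : m ^ i = (Real.exp 1)^i * (m / Real.exp 1)^i := by
        rw [← mul_pow]
        congr 1
        field_simp
      rw [this]
      have hb : (m / Real.exp 1) ≤ 3/8 * m := by
        rw [div_le_iff₀ (Real.exp_pos 1)]
        nlinarith
      have hbn : 0 ≤ m / Real.exp 1 := by positivity
      have h2 : (m / Real.exp 1)^i ≤ (3/8*m)^i := pow_le_pow_left₀ hbn hb i
      have h3 : (Real.exp 1)^i ≤ Real.exp (j:ℝ) := by
        rw [← Real.exp_nat_mul]
        apply Real.exp_le_exp.2
        simpa using hij
      have h4 : (0:ℝ) ≤ (m/Real.exp 1)^i := by positivity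
      nlinarith [Real.exp_pos (j:ℝ), pow_nonneg (by linarith : (0:ℝ) ≤ 3/8*m) i]
    calc m^i / i.factorial ≤ (Real.exp (j:ℝ) * (3/8*m)^i) / i.factorial :=
        div_le_div_of_nonneg_right h1 (by positivity)
      _ = Real.exp (j:ℝ) * ((3/8*m)^i / i.factorial) := by ring
  have h5 : psum j (3/8*m) ≤ Real.exp (3/8*m) := Real.sum_le_exp_of_nonneg (by linarith) j
  unfold pexp
  calc Real.exp (-m) * psum j m ≤ Real.exp (-m) * (Real.exp (j:ℝ) * Real.exp (3/8*m)) := by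
        apply mul_le_mul_of_nonneg_left _ (Real.exp_pos _).le
        calc psum j m ≤ Real.exp (j:ℝ) * psum j (3/8*m) := key
          _ ≤ Real.exp (j:ℝ) * Real.exp (3/8*m) := by
              exact mul_le_mul_of_nonneg_left h5 (Real.exp_pos _).le
    _ = Real.exp ((j:ℝ) - 5/8*m) := by
        rw [← Real.exp_add, ← Real.exp_add]; ring_nf

open Set

lemma descend (f f' : ℝ → ℝ) (T c M ε : ℝ) (hε : 0 < ε)
    (hd : ∀ t, T ≤ t → HasDerivAt f (f' t) t)
    (hslope : ∀ t, T ≤ t → c ≤ f t → f' t ≤ -ε)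
    (hfT : f T ≤ M) (hcM : c ≤ M) :
    ∀ t, T + (M - c)/ε ≤ t → f t ≤ c := by
  have hcont : ∀ a b, T ≤ a → ContinuousOn f (Icc a b) := fun a b ha x hx =>
    ((hd x (ha.trans hx.1)).continuousAt).continuousWithinAt
  have hdec : ∀ a b, T ≤ a → a ≤ b → (∀ t ∈ Icc a b, c ≤ f t) →
      f b ≤ f a - ε * (b - a) := by
    intro a b ha hab hge
    have hanti : AntitoneOn (fun t => f t + ε * t) (Icc a b) := by
      apply antitoneOn_of_deriv_nonpos (convex_Icc a b)
      · exact (hcont a b ha).add (continuous_const.mul continuous_id).continuousOn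
      · intro x hx
        rw [interior_Icc] at hx
        exact ((hd x (ha.trans hx.1.le)).add
          ((hasDerivAt_id x).const_mul ε)).differentiableAt.differentiableWithinAt
      · intro x hx
        rw [interior_Icc] at hx
        have hD : HasDerivAt (fun t => f t + ε * t) (f' x + ε * 1) x :=
          (hd x (ha.trans hx.1.le)).add ((hasDerivAt_id x).const_mul ε)
        rw [hD.deriv]
        have := hslope x (ha.trans hx.1.le) (hge x ⟨hx.1.le, hx.2.le⟩)
        linarith
    have := hanti (left_mem_Icc.2 hab) (right_mem_Icc.2 hab) hab
    simp only at this
    linarith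
  have hstay : ∀ t₀, T ≤ t₀ → f t₀ ≤ c → ∀ t, t₀ ≤ t → f t ≤ c := by
    intro t₀ ht₀ hf₀ t₁ ht₁
    by_contra hgt
    push_neg at hgt
    have ht₀₁ : t₀ < t₁ := by
      rcases lt_or_eq_of_le ht₁ with h | h
      · exact h
      · exfalso; rw [← h] at hgt; linarith
    set S : Set ℝ := Icc t₀ t₁ ∩ f ⁻¹' (Iic c) with hS
    have hSne : S.Nonempty := ⟨t₀, ⟨le_refl _, ht₀₁.le⟩, hf₀⟩
    have hScl : IsClosed S :=
      (hcont t₀ t₁ ht₀).preimage_isClosed_of_isClosed isClosed_Icc isClosed_Iic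
    have hScpt : IsCompact S := isCompact_Icc.of_isClosed_subset hScl inter_subset_left
    set t₂ := sSup S with ht₂def
    have ht₂S : t₂ ∈ S := hScpt.sSup_mem hSne
    obtain ⟨ht₂I, ht₂c⟩ := ht₂S
    have hmax : ∀ t, t₂ < t → t ≤ t₁ → c < f t := by
      intro t h1 h2
      by_contra hle
      push_neg at hle
      have : t ∈ S := ⟨⟨ht₂I.1.trans h1.le, h2⟩, hle⟩
      have := le_csSup hScpt.bddAbove this
      linarith
    have hft₂ : f t₂ = c := by
      rcases lt_or_eq_of_le (show f t₂ ≤ c from ht₂c) with hlt | heq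
      · exfalso
        have ht₂₁ : t₂ < t₁ := by
          rcases lt_or_eq_of_le ht₂I.2 with h | h
          · exact h
          · exfalso; rw [h] at hlt; linarith
        have hIVT := intermediate_value_Icc ht₂₁.le
          ((hcont t₂ t₁ (ht₀.trans ht₂I.1)))
        have : c ∈ f '' Icc t₂ t₁ := hIVT ⟨hlt.le, hgt.le⟩
        obtain ⟨t₃, ht₃I, ht₃⟩ := this
        rcases lt_or_eq_of_le ht₃I.1 with h | h
        · exact absurd ht₃ (ne_of_gt (hmax t₃ h ht₃I.2))
        · rw [← h] at ht₃; rw [ht₃] at hlt; linarith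
      · exact heq
    have ht₂₁ : t₂ < t₁ := by
      rcases lt_or_eq_of_le ht₂I.2 with h | h
      · exact h
      · exfalso; rw [← h] at hgt; linarith [hft₂.le]
    have := hdec t₂ t₁ (ht₀.trans ht₂I.1) ht₂₁.le (by
      intro t ht
      rcases lt_or_eq_of_le ht.1 with h | h
      · exact (hmax t h ht.2).le
      · rw [← h, hft₂])
    rw [hft₂] at this
    nlinarith
  intro t ht
  have hL : 0 ≤ (M - c)/ε := div_nonneg (by linarith) hε.le
  by_cases hex : ∃ t₀ ∈ Icc T (T + (M-c)/ε), f t₀ ≤ c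
  · obtain ⟨t₀, ht₀I, ht₀⟩ := hex
    exact hstay t₀ ht₀I.1 ht₀ t (ht₀I.2.trans ht)
  · push_neg at hex
    exfalso
    have hge : ∀ u ∈ Icc T (T + (M-c)/ε), c ≤ f u := fun u hu => (hex u hu).le
    have := hdec T (T + (M-c)/ε) le_rfl (by linarith) hge
    have h2 := hex (T + (M-c)/ε) (right_mem_Icc.2 (by linarith))
    have : f (T + (M-c)/ε) ≤ c := by
      have hεne : ε ≠ 0 := ne_of_gt hε
      calc f (T + (M-c)/ε) ≤ f T - ε * ((T + (M-c)/ε) - T) := this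
        _ = f T - (M - c) := by field_simp; ring
        _ ≤ c := by linarith
    linarith

open Set Filter Topology

lemma barrier (n : ℕ) (d d' : ℕ → ℝ → ℝ) (T : ℝ)
    (hd : ∀ j ∈ Finset.Icc 1 n, ∀ t, T ≤ t → HasDerivAt (d j) (d' j t) t)
    (hinit : ∀ j ∈ Finset.Icc 1 n, d j T < 0)
    (hcontact : ∀ j ∈ Finset.Icc 1 n, ∀ t, T ≤ t →
      (∀ i ∈ Finset.Icc 1 n, d i t ≤ 0) → d j t = 0 → d' j t < 0) :
    ∀ t, T ≤ t → ∀ j ∈ Finset.Icc 1 n, d j t ≤ 0 := by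
  by_contra hbad
  push_neg at hbad
  obtain ⟨t₁, ht₁T, j₁, hj₁, hdj₁⟩ := hbad
  set Bad : Set ℝ := {t | T ≤ t ∧ ∃ j ∈ Finset.Icc 1 n, 0 < d j t} with hBad
  have hBne : Bad.Nonempty := ⟨t₁, ht₁T, j₁, hj₁, hdj₁⟩
  have hBbd : BddBelow Bad := ⟨T, fun x hx => hx.1⟩
  set τ := sInf Bad with hτdef
  have hτT : T ≤ τ := le_csInf hBne (fun x hx => hx.1)
  have hbefore : ∀ u, T ≤ u → u < τ → ∀ j ∈ Finset.Icc 1 n, d j u ≤ 0 := by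
    intro u hu huτ j hj
    by_contra h
    push_neg at h
    have : u ∈ Bad := ⟨hu, j, hj, h⟩
    have := csInf_le hBbd this
    linarith
  have hτ0 : ∀ j ∈ Finset.Icc 1 n, d j τ ≤ 0 := by
    intro j hj
    rcases eq_or_lt_of_le hτT with heq | hlt
    · rw [← heq]; exact (hinit j hj).le
    · have hcont : ContinuousAt (d j) τ := (hd j hj τ hτT).continuousAt
      have htend : Tendsto (d j) (𝓝[<] τ) (𝓝 (d j τ)) :=
        hcont.continuousWithinAt.tendsto
      have hev : ∀ᶠ u in 𝓝[<] τ, d j u ≤ 0 := by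
        have : Ioo T τ ∈ 𝓝[<] τ := Ioo_mem_nhdsLT_of_mem ⟨hlt, le_refl τ⟩
        filter_upwards [this] with u hu
        exact hbefore u hu.1.le hu.2 j hj
      exact le_of_tendsto htend hev
  -- for each j, eventually nonpositive to the right of τ
  have hright : ∀ j ∈ Finset.Icc 1 n, ∀ᶠ u in 𝓝[>] τ, d j u ≤ 0 := by
    intro j hj
    rcases lt_or_eq_of_le (hτ0 j hj) with hlt | heq
    · have hcont : ContinuousAt (d j) τ := (hd j hj τ hτT).continuousAt
      have : ∀ᶠ u in 𝓝 τ, d j u < 0 := hcont.eventually_lt_const hlt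
      exact (this.filter_mono nhdsWithin_le_nhds).mono (fun u hu => hu.le)
    · have hder : d' j τ < 0 := hcontact j hj τ hτT hτ0 heq
      have hslope : Tendsto (slope (d j) τ) (𝓝[≠] τ) (𝓝 (d' j τ)) :=
        hasDerivAt_iff_tendsto_slope.1 (hd j hj τ hτT)
      have hslope' : Tendsto (slope (d j) τ) (𝓝[>] τ) (𝓝 (d' j τ)) :=
        hslope.mono_left (nhdsWithin_mono _ (fun x hx => ne_of_gt hx))
      have hev : ∀ᶠ u in 𝓝[>] τ, slope (d j) τ u < 0 :=
        hslope'.eventually_lt_const hder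
      filter_upwards [hev, self_mem_nhdsWithin] with u hu hu'
      have huτ : τ < u := hu'
      have : (d j u - d j τ) / (u - τ) < 0 := by
        simpa [slope_def_field, div_eq_inv_mul] using hu
      have h2 : d j u - d j τ < 0 := by
        by_contra hge
        push_neg at hge
        have := div_nonneg hge (by linarith : (0:ℝ) ≤ u - τ)
        linarith
      linarith [heq ▸ h2]
  have hall : ∀ᶠ u in 𝓝[>] τ, ∀ j ∈ Finset.Icc 1 n, d j u ≤ 0 := by
    rw [Filter.eventually_all_finset]
    exact hright
  obtain ⟨b, hbτ, hb⟩ := (nhdsGT_basis τ).eventually_iff.1 hall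
  -- every bad point is ≥ b
  have hlbb : ∀ x ∈ Bad, b ≤ x := by
    intro x hx
    by_contra hxb
    push_neg at hxb
    have hxτ : τ ≤ x := csInf_le hBbd hx
    rcases eq_or_lt_of_le hxτ with heq | hlt
    · obtain ⟨_, j, hj, hpos⟩ := hx
      have := hτ0 j hj
      rw [← heq] at hpos
      linarith
    · have hmem : x ∈ Ioo τ b := ⟨hlt, hxb⟩
      obtain ⟨_, j, hj, hpos⟩ := hx
      have := hb hmem j hj
      linarith
  have : b ≤ τ := le_csInf hBne hlbb
  linarith

lemma boundA (G d D X yb ρ M ν : ℝ)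
    (hG1 : 15/16 ≤ G) (hG2 : G ≤ 1) (hd0 : 0 ≤ d) (hdD : 4*d ≤ D) (hD : 0 < D)
    (hX1 : X ≤ 1 - ρ) (hXν : ν ≤ X) (hyρ : yb ≤ 1 - ρ) (hyM : yb ≤ M)
    (hρ : 0 < ρ) (hρ1 : ρ ≤ 1) (hν : ν * (1 + 3*ρ/4) = M) (hM : 0 < M) :
    G * (X*(2-X)/4) * (yb - 1) + (d*G/D) * (yb - X) ≤ -(3*ρ*M/112) := by
  have hν0 : 0 < ν := by nlinarith
  have hνM : ν ≤ M := by nlinarith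
  have hXpos : 0 < X := lt_of_lt_of_le hν0 hXν
  have h2X : 1 ≤ 2 - X := by linarith
  have hyb1 : ρ ≤ 1 - yb := by linarith
  have hqle : d*G/D ≤ 1/4 := by
    rw [div_le_iff₀ hD]
    nlinarith
  have hq0 : 0 ≤ d*G/D := by positivity
  have h1 : G * (X*(2-X)/4) * (yb - 1) ≤ -(15/64*ρ*ν) := by
    have hXX : ν ≤ X*(2-X) := by nlinarith
    have : (15/16)*ν*ρ ≤ G*(X*(2-X))*(1-yb) := by
      have e1 : (15/16)*ν ≤ G*(X*(2-X)) := by nlinarith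
      nlinarith
    nlinarith
  have h2 : (d*G/D) * (yb - X) ≤ (1/4)*(M - ν) := by
    rcases le_or_gt yb X with h | h
    · have : (d*G/D) * (yb - X) ≤ 0 := mul_nonpos_of_nonneg_of_nonpos hq0 (by linarith)
      linarith
    · have h3 : yb - X ≤ M - ν := by linarith
      have h4 : 0 ≤ yb - X := by linarith
      nlinarith
  have h5 : (1/4)*(M-ν) = 3/16*ρ*ν := by linear_combination (-1/4) * hν
  have hM' : 3*ρ*M = 3*(ρ*ν) + 9/4*(ρ^2*ν) := by linear_combination (-3*ρ) * hν
  have hr2 : ρ^2*ν ≤ ρ*ν := by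
    have : 0 ≤ (ρ - ρ^2)*ν := mul_nonneg (by nlinarith) hν0.le
    nlinarith
  have h6 : 3*ρ*M/112 ≤ 3/64*(ρ*ν) := by
    rw [hM']
    linarith
  have h1' : G * (X*(2-X)/4) * (yb - 1) ≤ -(15/64*(ρ*ν)) := by linarith [h1]
  have h5' : (1/4)*(M-ν) = 3/16*(ρ*ν) := by linarith [h5]
  linarith

-- level-shrink algebra for the round induction
lemma levels (ρ M : ℝ) (hρ : 0 < ρ) (hρ1 : ρ ≤ 1) (hM : 0 < M) :
    M/(1+3*ρ/4) + (2/9)*(M - M/(1+3*ρ/4)) ≤ M/(1+ρ/2) := by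
  have ha : (0:ℝ) < 1+3*ρ/4 := by linarith
  have hb : (0:ℝ) < 1+ρ/2 := by linarith
  set u := M/(1+3*ρ/4) with hu
  set v := M/(1+ρ/2) with hv
  have hu0 : 0 < u := by positivity
  have e1 : u * (1+3*ρ/4) = M := div_mul_cancel₀ M (ne_of_gt ha)
  have e2 : v * (1+ρ/2) = M := div_mul_cancel₀ M (ne_of_gt hb)
  have key : (u + (2/9)*(M - u)) * (1+ρ/2) ≤ v * (1+ρ/2) := by
    rw [e2, ← e1]
    have hs : (1+ρ/2) + (2/9)*(3*ρ/4)*(1+ρ/2) ≤ 1+3*ρ/4 := by nlinarith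
    nlinarith [mul_nonneg hu0.le (sub_nonneg.2 hρ1)]
  exact le_of_mul_le_mul_right key hb

-- exp(-6.5) ≤ 1/9
lemma exp_neg_bound : Real.exp (-(13/2)) ≤ 1/9 := by
  have h1 : (4.25:ℝ) ≤ Real.exp (3.25) := by
    have := Real.add_one_le_exp (3.25:ℝ)
    linarith
  have h2 : (9:ℝ) ≤ Real.exp (13/2) := by
    have : Real.exp (13/2) = Real.exp 3.25 * Real.exp 3.25 := by
      rw [← Real.exp_add]; norm_num
    rw [this]
    nlinarith
  have h3 : Real.exp (-(13/2)) * Real.exp (13/2) = 1 := by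
    rw [← Real.exp_add]; norm_num
  nlinarith [Real.exp_pos (-(13/2):ℝ)]

lemma Xderiv_alg (a d G b DD S : ℝ) (hDD : DD ≠ 0) (hG : G ≠ 0) (hS : S = DD + d) :
    G * (2 * a / DD * (2 - 2 * a / DD) / 4) * (2 * b / G - 1) +
      d * G / DD * (2 * b / G - 2 * a / DD) =
    (2 * (-(a / 2) * (G - b) + d * b) * DD -
      2 * a * -(a / 2 * (G - b) + (S - a - d) / 2 * b - d * G)) / DD ^ 2 := by
  subst hS
  field_simp
  ring

lemma Y1deriv_alg (b1 g1 a G d DD R c : ℝ) (hg1 : g1 ≠ 0) (hDD : DD ≠ 0)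
    (hc : 2 * c = DD + d) :
    G * DD / (2 * g1) * (2 * a / DD - 2 * b1 / g1) =
    (2 * (-b1 * R + a / 2 * G) * g1 - 2 * b1 * (-g1 * R + (c - d / 2) * G)) / g1 ^ 2 := by
  have hcc : c = (DD + d)/2 := by linarith
  subst hcc
  field_simp
  ring

lemma Yjderiv_alg (bj bj1 gj gj1 R : ℝ) (hgj : gj ≠ 0) (hgj1 : gj1 ≠ 0) :
    gj1 / gj * (2 * bj1 / gj1 - 2 * bj / gj) =
    (2 * (bj1 - bj * R) * gj - 2 * bj * (gj1 - gj * R)) / gj ^ 2 := by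
  field_simp
  ring

-- pexp 0 = 0
lemma pexp_zero (m : ℝ) : pexp 0 m = 0 := by simp [pexp, psum_zero]


set_option maxHeartbeats 2000000 in
theorem stmt_10
    (s : ℕ) (hs : 32 ≤ s)
    (α δ : ℝ → ℝ) (β γ : ℕ → ℝ → ℝ) (B Γ u R : ℝ → ℝ)
    (hB : ∀ t, B t = ∑ j ∈ Finset.Icc 1 (8*s), β j t)
    (hΓ : ∀ t, Γ t = ∑ j ∈ Finset.Icc 1 (8*s), γ j t)
    (hu : ∀ t, u t = 1 - 1/(s:ℝ) - Γ t)
    (hR : ∀ t, R t = 1 + 1/(2*(s:ℝ)) - δ t / 2 - u t)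
    (hderivα : ∀ t : ℝ, 0 ≤ t → HasDerivAt α (-(α t / 2) * (Γ t - B t) + δ t * B t) t)
    (hderivδ : ∀ t : ℝ, 0 ≤ t →
      HasDerivAt δ ((α t / 2) * (Γ t - B t) + ((1/(s:ℝ) - α t - δ t)/2) * B t - δ t * Γ t) t)
    (hderivβ1 : ∀ t : ℝ, 0 ≤ t → HasDerivAt (β 1) (-(β 1 t) * R t + (α t / 2) * Γ t) t)
    (hderivβ : ∀ j, 2 ≤ j → j ≤ 8*s → ∀ t : ℝ, 0 ≤ t →
      HasDerivAt (β j) (β (j-1) t - β j t * R t) t)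
    (hderivγ1 : ∀ t : ℝ, 0 ≤ t →
      HasDerivAt (γ 1) (-(γ 1 t) * R t + (1/(2*(s:ℝ)) - δ t / 2) * Γ t) t)
    (hderivγ : ∀ j, 2 ≤ j → j ≤ 8*s → ∀ t : ℝ, 0 ≤ t →
      HasDerivAt (γ j) (γ (j-1) t - γ j t * R t) t)
    (ξ η : ℝ → ℝ) (ηj : ℕ → ℝ → ℝ)
    (hξ : ∀ t, ξ t = (1/(s:ℝ) - δ t - 2 * α t) / (1/(s:ℝ) - δ t))
    (hηj : ∀ j, 1 ≤ j → j ≤ 8*s → ∀ t, ηj j t = (γ j t - 2 * β j t) / γ j t)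
    (hη : ∀ t, η t = (Γ t - 2 * B t) / Γ t)
    (lam ρ : ℝ) (hlam : 0 < lam) (hlam1 : lam < 1) (hρ : 0 < ρ) (hρ1 : ρ < 1)
    (hδb : ∀ t : ℝ, 0 ≤ t → 0 ≤ δ t ∧ δ t ≤ 0.2 / (s:ℝ))
    (hγpos : ∀ t : ℝ, 0 ≤ t → ∀ j, 1 ≤ j → j ≤ 8*s → 0 < γ j t)
    (hγratio : ∀ t : ℝ, 0 ≤ t → ∀ j, 2 ≤ j → j ≤ 8*s → 1/2 ≤ γ (j-1) t / γ j t)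
    (hγ1b : ∀ t : ℝ, 0 ≤ t → γ 1 t ≤ 1/(s:ℝ))
    (hΓb : ∀ t : ℝ, 0 ≤ t → 1 - 2/(s:ℝ) ≤ Γ t ∧ Γ t ≤ 1)
    (hδlt : ∀ t : ℝ, 0 ≤ t → 0 < 1/(s:ℝ) - δ t)
    (hξρ : ∀ t : ℝ, 0 ≤ t → ρ ≤ ξ t)
    (hηρ : ∀ t : ℝ, 0 ≤ t → ρ ≤ η t)
    (hηjρ : ∀ t : ℝ, 0 ≤ t → ∀ j, 1 ≤ j → j ≤ 8*s → ρ ≤ ηj j t) :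
    ∃ T₁ : ℝ, 0 ≤ T₁ ∧ T₁ ≤ (144 / (ρ * (1 - lam))) * (s:ℝ) ∧
      ∀ t : ℝ, T₁ ≤ t → lam < ξ t ∧ (∀ j, 1 ≤ j → j ≤ 8*s → lam < ηj j t) ∧
        2 * B t < 1 - lam := by
  have hsR : (32:ℝ) ≤ (s:ℝ) := by exact_mod_cast hs
  have hs0 : (0:ℝ) < (s:ℝ) := by linarith
  set D : ℝ → ℝ := fun t => 1/(s:ℝ) - δ t with hD
  set X : ℝ → ℝ := fun t => 2 * α t / D t with hX
  set Y : ℕ → ℝ → ℝ := fun j t => 2 * β j t / γ j t with hY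
  set yb : ℝ → ℝ := fun t => 2 * B t / Γ t with hyb
  have hD0 : ∀ t, 0 ≤ t → 0 < D t := fun t ht => hδlt t ht
  have hDlb : ∀ t, 0 ≤ t → 4/5*(1/(s:ℝ)) ≤ D t := by
    intro t ht
    have h1 := (hδb t ht).2
    have h3 : (0.2:ℝ)/(s:ℝ) = (1/5)*(1/(s:ℝ)) := by
      rw [div_eq_mul_inv, one_div]; norm_num
    rw [h3] at h1
    simp only [hD]
    linarith
  have hΓlb : ∀ t, 0 ≤ t → 15/16 ≤ Γ t := by
    intro t ht
    have h1 := (hΓb t ht).1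
    have h2 : (2:ℝ)/(s:ℝ) ≤ 2/32 := by
      apply div_le_div_of_nonneg_left (by norm_num) (by norm_num) hsR
    have : (1:ℝ) - 2/(s:ℝ) ≥ 1 - 2/32 := by linarith
    norm_num at this
    linarith
  have hΓ0 : ∀ t, 0 ≤ t → 0 < Γ t := fun t ht => lt_of_lt_of_le (by norm_num) (hΓlb t ht)
  -- translations of the ρ-advantage hypotheses
  have hXle : ∀ t, 0 ≤ t → X t ≤ 1 - ρ := by
    intro t ht
    have h := hξρ t ht
    rw [hξ t] at h
    rw [le_div_iff₀ (hD0 t ht)] at h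
    simp only [hX]
    rw [div_le_iff₀ (hD0 t ht)]
    simp only [hD] at h ⊢
    nlinarith
  have hYle : ∀ t, 0 ≤ t → ∀ j, 1 ≤ j → j ≤ 8*s → Y j t ≤ 1 - ρ := by
    intro t ht j h1 h2
    have h := hηjρ t ht j h1 h2
    rw [hηj j h1 h2 t] at h
    have hγ0 := hγpos t ht j h1 h2
    rw [le_div_iff₀ hγ0] at h
    simp only [hY]
    rw [div_le_iff₀ hγ0]
    nlinarith
  have h2B : ∀ t, 0 ≤ t → ∀ m, (∀ j ∈ Finset.Icc 1 (8*s), Y j t ≤ m) → 2*B t ≤ m * Γ t := by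
    intro t ht m hm
    rw [hB, hΓ, Finset.mul_sum, Finset.mul_sum]
    apply Finset.sum_le_sum
    intro j hj
    rw [Finset.mem_Icc] at hj
    have hγ0 := hγpos t ht j hj.1 hj.2
    have := hm j (Finset.mem_Icc.2 hj)
    simp only [hY] at this
    rw [div_le_iff₀ hγ0] at this
    linarith
  have hyble : ∀ t, 0 ≤ t → ∀ m, (∀ j ∈ Finset.Icc 1 (8*s), Y j t ≤ m) → yb t ≤ m := by
    intro t ht m hm
    simp only [hyb]
    rw [div_le_iff₀ (hΓ0 t ht)]
    have := h2B t ht m hm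
    linarith [this]
  have hybρ : ∀ t, 0 ≤ t → yb t ≤ 1 - ρ := by
    intro t ht
    have h := hηρ t ht
    rw [hη t] at h
    rw [le_div_iff₀ (hΓ0 t ht)] at h
    simp only [hyb]
    rw [div_le_iff₀ (hΓ0 t ht)]
    nlinarith
  -- derivative of X
  have hXderiv : ∀ t, 0 ≤ t → HasDerivAt X
      (Γ t * (X t*(2-X t)/4) * (yb t - 1) + (δ t*Γ t/D t) * (yb t - X t)) t := by
    intro t ht
    have hDne : D t ≠ 0 := ne_of_gt (hD0 t ht)
    have hΓne : Γ t ≠ 0 := ne_of_gt (hΓ0 t ht)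
    have hnum : HasDerivAt (fun u => 2 * α u)
        (2 * (-(α t / 2) * (Γ t - B t) + δ t * B t)) t := (hderivα t ht).const_mul 2
    have hden : HasDerivAt D
        (-((α t / 2) * (Γ t - B t) + ((1/(s:ℝ) - α t - δ t)/2) * B t - δ t * Γ t)) t := by
      have h0 : HasDerivAt (fun _ : ℝ => 1/(s:ℝ)) 0 t := hasDerivAt_const t _
      have h1 := h0.sub (hderivδ t ht)
      refine h1.congr_deriv ?_
      ring
    have hdiv := hnum.div hden hDne
    have hXeq : X = fun u => 2 * α u / D u := hX
    rw [hXeq]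
    refine hdiv.congr_deriv (Eq.symm ?_)
    simp only [hX, hyb]
    exact Xderiv_alg (α t) (δ t) (Γ t) (B t) (D t) (1/(s:ℝ)) hDne hΓne (by simp only [hD]; ring)
  -- derivative of Y 1
  have hY1deriv : ∀ t, 0 ≤ t →
      HasDerivAt (Y 1) (Γ t * D t / (2 * γ 1 t) * (X t - Y 1 t)) t := by
    intro t ht
    have h81 : 1 ≤ 8*s := by omega
    have hγ0 : 0 < γ 1 t := hγpos t ht 1 le_rfl h81
    have hγne : γ 1 t ≠ 0 := ne_of_gt hγ0
    have hDne : D t ≠ 0 := ne_of_gt (hD0 t ht)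
    have hnum : HasDerivAt (fun u => 2 * β 1 u)
        (2 * (-(β 1 t) * R t + (α t / 2) * Γ t)) t := (hderivβ1 t ht).const_mul 2
    have hdiv := hnum.div (hderivγ1 t ht) hγne
    have hYeq : Y 1 = fun u => 2 * β 1 u / γ 1 u := by rw [hY]
    rw [hYeq]
    refine hdiv.congr_deriv (Eq.symm ?_)
    simp only [hX, hY]
    exact Y1deriv_alg (β 1 t) (γ 1 t) (α t) (Γ t) (δ t) (D t) (R t) (1/(2*(s:ℝ)))
      hγne hDne (by simp only [hD]; field_simp; ring)
  -- derivative of Y j, j ≥ 2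
  have hYjderiv : ∀ j, 2 ≤ j → j ≤ 8*s → ∀ t, 0 ≤ t →
      HasDerivAt (Y j) (γ (j-1) t / γ j t * (Y (j-1) t - Y j t)) t := by
    intro j hj2 hj8 t ht
    have hγ0 : 0 < γ j t := hγpos t ht j (by omega) hj8
    have hγ0' : 0 < γ (j-1) t := hγpos t ht (j-1) (by omega) (by omega)
    have hγne : γ j t ≠ 0 := ne_of_gt hγ0
    have hγne' : γ (j-1) t ≠ 0 := ne_of_gt hγ0'
    have hnum : HasDerivAt (fun u => 2 * β j u)
        (2 * (β (j-1) t - β j t * R t)) t := (hderivβ j hj2 hj8 t ht).const_mul 2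
    have hdiv := hnum.div (hderivγ j hj2 hj8 t ht) hγne
    have hYeq : Y j = fun u => 2 * β j u / γ j u := by rw [hY]
    rw [hYeq]
    refine hdiv.congr_deriv (Eq.symm ?_)
    simp only [hY]
    exact Yjderiv_alg (β j t) (β (j-1) t) (γ j t) (γ (j-1) t) (R t) hγne hγne'
  -- main induction
  set Mk : ℕ → ℝ := fun k => (1-ρ)/(1+ρ/2)^k with hMk
  set Tk : ℕ → ℝ := fun k => (k:ℝ)*(28+35*(s:ℝ)) with hTk
  have hb0 : (0:ℝ) < 1+ρ/2 := by linarith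
  have hMkpos : ∀ k, 0 < Mk k := by
    intro k; simp only [hMk]; exact div_pos (by linarith) (by positivity)
  have hTknn : ∀ k, 0 ≤ Tk k := by
    intro k; simp only [hTk]; positivity
  have key : ∀ k, ∀ t, Tk k ≤ t →
      X t ≤ Mk k ∧ ∀ j ∈ Finset.Icc 1 (8*s), Y j t ≤ Mk k := by
    intro k
    induction k with
    | zero =>
      intro t ht
      have ht0 : (0:ℝ) ≤ t := le_trans (hTknn 0) ht
      have hM0 : Mk 0 = 1-ρ := by simp [hMk]
      rw [hM0]
      refine ⟨hXle t ht0, fun j hj => ?_⟩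
      rw [Finset.mem_Icc] at hj
      exact hYle t ht0 j hj.1 hj.2
    | succ k ih =>
      have hT0 : (0:ℝ) ≤ Tk k := hTknn k
      have hM : 0 < Mk k := hMkpos k
      have ha0 : (0:ℝ) < 1+3*ρ/4 := by linarith
      set ν := Mk k/(1+3*ρ/4) with hν
      have hν0 : 0 < ν := by rw [hν]; exact div_pos hM ha0
      have hνeq : ν * (1+3*ρ/4) = Mk k := div_mul_cancel₀ _ (ne_of_gt ha0)
      have hνM : ν ≤ Mk k := by nlinarith [mul_pos hν0 hρ]
      have hε : (0:ℝ) < 3*ρ*Mk k/112 := by positivity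
      -- Phase A : descent of X to level ν
      have hstepA : ∀ t, Tk k + 28 ≤ t → X t ≤ ν := by
        have hdesc := descend X
          (fun t => Γ t * (X t*(2-X t)/4) * (yb t - 1) + (δ t*Γ t/D t) * (yb t - X t))
          (Tk k) ν (Mk k) (3*ρ*Mk k/112) hε
          (fun t ht => hXderiv t (le_trans hT0 ht))
          (fun t ht hXν => by
            have ht0 : (0:ℝ) ≤ t := le_trans hT0 ht
            have hyM : yb t ≤ Mk k := hyble t ht0 (Mk k) (ih t ht).2
            have hδt := hδb t ht0
            have hdD : 4 * δ t ≤ D t := by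
              have h1 := hDlb t ht0
              have h2 := hδt.2
              have h3 : (0.2:ℝ)/(s:ℝ) = (1/5)*(1/(s:ℝ)) := by
                rw [div_eq_mul_inv, one_div]; norm_num
              rw [h3] at h2
              clear_value D
              linarith
            exact boundA (Γ t) (δ t) (D t) (X t) (yb t) ρ (Mk k) ν
              (hΓlb t ht0) ((hΓb t ht0).2) hδt.1 hdD (hD0 t ht0)
              (hXle t ht0) hXν (hybρ t ht0) hyM hρ hρ1.le hνeq hM)
          ((ih (Tk k) le_rfl).1) hνM
        intro t ht
        apply hdesc
        have harg : (Mk k - ν)/(3*ρ*Mk k/112) ≤ 28 := by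
          rw [div_le_iff₀ hε]
          nlinarith [hνeq, mul_le_mul_of_nonneg_left hνM (le_of_lt hρ)]
        linarith
      -- Phase B : pipeline of the chain variables
      set T' := Tk k + 28 with hT'
      have hT'0 : (0:ℝ) ≤ T' := by simp only [hT']; linarith
      have hMν : 0 < Mk k - ν := by nlinarith [mul_pos hν0 hρ]
      set ε' := (Mk k - ν)/18 with hε'
      have hε'0 : 0 < ε' := by positivity
      set Z : ℕ → ℝ → ℝ := fun j t =>
        ν + (Mk k - ν) * pexp j (3/8*(t - T')) + ε' * (2 - Real.exp (-(t - T'))) with hZ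
      set Zv : ℕ → ℝ → ℝ := fun j t =>
        (Mk k - ν) * ((pexp (j-1) (3/8*(t-T')) - pexp j (3/8*(t-T')))*(3/8))
          + ε' * Real.exp (-(t-T')) with hZv
      have hZderiv : ∀ j, 1 ≤ j → ∀ t : ℝ, HasDerivAt (Z j) (Zv j t) t := by
        intro j hj t
        obtain ⟨i, rfl⟩ : ∃ i, j = i + 1 := ⟨j - 1, by omega⟩
        have hm : HasDerivAt (fun u : ℝ => 3/8*(u - T')) (3/8) t := by
          simpa using ((hasDerivAt_id t).sub_const T').const_mul (3/8 : ℝ)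
        have hp : HasDerivAt (fun u => pexp (i+1) (3/8*(u-T')))
            ((pexp i (3/8*(t-T')) - pexp (i+1) (3/8*(t-T'))) * (3/8)) t :=
          by have := (hasDerivAt_pexp i (3/8*(t-T'))).comp t hm; exact this
        have hneg : HasDerivAt (fun u : ℝ => -(u - T')) (-1) t := by
          exact ((hasDerivAt_id t).sub_const T').neg
        have he : HasDerivAt (fun u : ℝ => Real.exp (-(u - T')))
            (-Real.exp (-(t-T'))) t := by
          simpa [Function.comp_def] using (Real.hasDerivAt_exp (-(t-T'))).comp t hneg
        have hcomb := ((hp.const_mul (Mk k - ν)).const_add ν).add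
          ((he.const_sub 2).const_mul ε')
        have hval : Zv (i+1) t =
            (Mk k - ν) * ((pexp i (3/8*(t-T')) - pexp (i+1) (3/8*(t-T'))) * (3/8))
              + ε' * (2 - Real.exp (-(t-T')) - (2 - -(-Real.exp (-(t-T'))) )
                + Real.exp (-(t-T'))) := by
          simp only [hZv, Nat.add_sub_cancel]; ring
        rw [hZv]
        simp only [Nat.add_sub_cancel]
        refine hcomb.congr_deriv ?_
        ring
      have hbar := barrier (8*s)
        (fun j t => Y j t - Z j t)
        (fun j t => (if j = 1 then Γ t * D t / (2 * γ 1 t) * (X t - Y 1 t)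
            else γ (j-1) t / γ j t * (Y (j-1) t - Y j t)) - Zv j t)
        T'
        (by
          intro j hj t ht
          show HasDerivAt (fun u => Y j u - Z j u)
            ((if j = 1 then Γ t * D t / (2 * γ 1 t) * (X t - Y 1 t)
              else γ (j-1) t / γ j t * (Y (j-1) t - Y j t)) - Zv j t) t
          rw [Finset.mem_Icc] at hj
          have ht0 : (0:ℝ) ≤ t := le_trans hT'0 ht
          by_cases hj1 : j = 1
          · subst hj1
            rw [if_pos rfl]
            exact (hY1deriv t ht0).sub (hZderiv 1 le_rfl t)
          · have hj2 : 2 ≤ j := by omega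
            simp only [if_neg hj1]
            exact (hYjderiv j hj2 hj.2 t ht0).sub (hZderiv j hj.1 t))
        (by
          intro j hj
          show Y j T' - Z j T' < 0
          rw [Finset.mem_Icc] at hj
          have hYT' : Y j T' ≤ Mk k := (ih T' (by simp only [hT']; linarith)).2 j
            (Finset.mem_Icc.2 hj)
          have hZT' : Z j T' = Mk k + ε' := by
            simp only [hZ]
            rw [sub_self, mul_zero, pexp_zero_eq j hj.1, neg_zero, Real.exp_zero]
            ring
          rw [hZT']
          clear_value D X Y yb Mk Tk ν T' ε' Z Zv
          linarith)
        (by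
          intro j hj t ht hall heq
          show (if j = 1 then Γ t * D t / (2 * γ 1 t) * (X t - Y 1 t)
            else γ (j-1) t / γ j t * (Y (j-1) t - Y j t)) - Zv j t < 0
          have heq2 : Y j t - Z j t = 0 := heq
          rw [Finset.mem_Icc] at hj
          have ht0 : (0:ℝ) ≤ t := le_trans hT'0 ht
          have hm0 : (0:ℝ) ≤ 3/8*(t - T') := by linarith
          have hepos : (0:ℝ) < Real.exp (-(t-T')) := Real.exp_pos _
          have hele : Real.exp (-(t-T')) ≤ 1 := by
            rw [show (1:ℝ) = Real.exp 0 by rw [Real.exp_zero]]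
            exact Real.exp_le_exp.2 (by linarith)
          have heqY : Y j t = Z j t := by linarith [heq2]
          by_cases hj1 : j = 1
          · subst hj1
            rw [if_pos rfl]
            have hXt : X t ≤ ν := hstepA t (by simp only [hT'] at ht; linarith)
            have hc1 : 3/8 ≤ Γ t * D t / (2 * γ 1 t) := by
              have hγ0 : 0 < γ 1 t := hγpos t ht0 1 le_rfl (by omega)
              rw [le_div_iff₀ (by positivity)]
              have h1 : (15:ℝ)/16 * (4/5*(1/(s:ℝ))) ≤ Γ t * D t :=
                mul_le_mul (hΓlb t ht0) (hDlb t ht0) (by positivity)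
                  (by linarith [hΓlb t ht0])
              have h2 := hγ1b t ht0
              nlinarith
            have hZ1 : Z 1 t = ν + (Mk k - ν) * pexp 1 (3/8*(t-T'))
                + ε' * (2 - Real.exp (-(t-T'))) := by simp only [hZ]
            have hpe1 : 0 ≤ pexp 1 (3/8*(t-T')) := pexp_nonneg 1 hm0
            have hQ : ε' * 1 ≤ ε' * (2 - Real.exp (-(t-T'))) :=
              mul_le_mul_of_nonneg_left (by linarith) hε'0.le
            have hA0 : 0 ≤ (Mk k - ν) * pexp 1 (3/8*(t-T')) :=
              mul_nonneg hMν.le hpe1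
            have hXY : X t - Y 1 t ≤ -((Mk k - ν) * pexp 1 (3/8*(t-T')))
                - ε' * (2 - Real.exp (-(t-T'))) := by
              rw [heqY, hZ1]; linarith
            have hXY0 : X t - Y 1 t ≤ 0 := by linarith
            have hc1V : Γ t * D t / (2 * γ 1 t) * (X t - Y 1 t)
                ≤ 3/8 * (X t - Y 1 t) := mul_le_mul_of_nonpos_right hc1 hXY0
            have hZv1 : Zv 1 t = -(3/8) * ((Mk k - ν) * pexp 1 (3/8*(t-T')))
                + ε' * Real.exp (-(t-T')) := by
              simp only [hZv]
              rw [show (1:ℕ) - 1 = 0 from rfl, pexp_zero]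
              ring
            rw [hZv1]
            have hE : 0 < ε' * Real.exp (-(t-T')) := mul_pos hε'0 hepos
            clear_value D X Y yb Mk Tk ν T' ε' Z Zv
            linarith [hc1V, hXY, hQ, hε'0, hE]
          · have hj2 : 2 ≤ j := by omega
            simp only [if_neg hj1]
            have hγ0 : 0 < γ j t := hγpos t ht0 j (by omega) hj.2
            have hγ0' : 0 < γ (j-1) t := hγpos t ht0 (j-1) (by omega) (by omega)
            have hr : 1/2 ≤ γ (j-1) t / γ j t := hγratio t ht0 j hj2 hj.2
            have hYj1 : Y (j-1) t ≤ Z (j-1) t := by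
              have h0 : Y (j-1) t - Z (j-1) t ≤ 0 :=
                hall (j-1) (Finset.mem_Icc.2 ⟨by omega, by omega⟩)
              linarith
            have hmono : pexp (j-1) (3/8*(t-T')) ≤ pexp j (3/8*(t-T')) :=
              pexp_mono (j-1) j (by omega) hm0
            have hZZ : Z (j-1) t - Z j t = (Mk k - ν) *
                (pexp (j-1) (3/8*(t-T')) - pexp j (3/8*(t-T'))) := by
              simp only [hZ]; ring
            have hΔ0 : (Mk k - ν) * (pexp (j-1) (3/8*(t-T')) - pexp j (3/8*(t-T'))) ≤ 0 :=
              mul_nonpos_of_nonneg_of_nonpos hMν.le (by linarith)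
            have hw : Y (j-1) t - Y j t ≤ (Mk k - ν) *
                (pexp (j-1) (3/8*(t-T')) - pexp j (3/8*(t-T'))) := by
              rw [← hZZ, heqY]; linarith
            have hrw : γ (j-1) t / γ j t * (Y (j-1) t - Y j t) ≤ 3/8 * ((Mk k - ν) *
                (pexp (j-1) (3/8*(t-T')) - pexp j (3/8*(t-T')))) := by
              calc γ (j-1) t / γ j t * (Y (j-1) t - Y j t)
                  ≤ γ (j-1) t / γ j t * ((Mk k - ν) *
                    (pexp (j-1) (3/8*(t-T')) - pexp j (3/8*(t-T')))) :=
                    mul_le_mul_of_nonneg_left hw (by positivity)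
                _ ≤ 3/8 * ((Mk k - ν) *
                    (pexp (j-1) (3/8*(t-T')) - pexp j (3/8*(t-T')))) :=
                    mul_le_mul_of_nonpos_right (by linarith) hΔ0
            have hZvj : Zv j t = 3/8 * ((Mk k - ν) *
                (pexp (j-1) (3/8*(t-T')) - pexp j (3/8*(t-T'))))
                  + ε' * Real.exp (-(t-T')) := by
              simp only [hZv]; ring
            rw [hZvj]
            have hE : 0 < ε' * Real.exp (-(t-T')) := mul_pos hε'0 hepos
            clear_value D X Y yb Mk Tk ν T' ε' Z Zv
            linarith)
      -- conclude P (k+1)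
      intro t ht
      have hTsucc : Tk (k+1) = T' + 35*(s:ℝ) := by
        simp only [hTk, hT']; push_cast; ring
      rw [hTsucc] at ht
      have ht' : T' ≤ t := by linarith
      have ht0 : (0:ℝ) ≤ t := le_trans hT'0 ht'
      have hMk1 : Mk (k+1) = Mk k/(1+ρ/2) := by
        simp only [hMk]; rw [pow_succ, ← div_div]
      have hlev := levels ρ (Mk k) hρ hρ1.le hM
      rw [← hν] at hlev
      constructor
      · have h1 : X t ≤ ν := hstepA t (by simp only [hT'] at ht'; linarith)
        have h2 : ν ≤ Mk k/(1+ρ/2) := by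
          rw [hν]
          exact div_le_div_of_nonneg_left hM.le hb0 (by linarith)
        rw [hMk1]
        clear_value D X Y yb Mk Tk ν T' ε' Z Zv
        linarith
      · intro j hjmem
        have hjm := Finset.mem_Icc.1 hjmem
        have hYZ : Y j t ≤ Z j t := by
          have h0 : Y j t - Z j t ≤ 0 := hbar t ht' j hjmem
          linarith
        have hm0 : (0:ℝ) ≤ 3/8*(t - T') := by linarith
        have hpet : pexp j (3/8*(t-T')) ≤ 1/9 := by
          have h1 := pexp_tail j hm0
          have h2 : ((j:ℝ) - 5/8*(3/8*(t-T'))) ≤ -(13/2) := by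
            have hj8 : (j:ℝ) ≤ 8*(s:ℝ) := by exact_mod_cast hjm.2
            have hts : 35*(s:ℝ) ≤ t - T' := by linarith
            nlinarith
          calc pexp j (3/8*(t-T')) ≤ Real.exp ((j:ℝ) - 5/8*(3/8*(t-T'))) := h1
            _ ≤ Real.exp (-(13/2)) := Real.exp_le_exp.2 h2
            _ ≤ 1/9 := exp_neg_bound
        have hZle : Z j t ≤ ν + (2/9)*(Mk k - ν) := by
          simp only [hZ]
          have h1 : (Mk k - ν) * pexp j (3/8*(t-T')) ≤ (Mk k - ν) * (1/9) :=
            mul_le_mul_of_nonneg_left hpet hMν.le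
          have h2 : ε' * (2 - Real.exp (-(t-T'))) ≤ ε' * 2 :=
            mul_le_mul_of_nonneg_left (by linarith [Real.exp_pos (-(t-T'))]) hε'0.le
          simp only [hε'] at h2 ⊢
          linarith
        rw [hMk1]
        clear_value D X Y yb Mk Tk ν T' ε' Z Zv
        linarith
  -- choice of the number of rounds K
  classical
  have hlam' : (0:ℝ) < 1 - lam := by linarith
  have hplm : (0:ℝ) < ρ*(1-lam) := mul_pos hρ hlam'
  have hex : ∃ n : ℕ, 1 - ρ < (1+ρ/2)^n * (1-lam) := by
    refine ⟨⌈(4:ℝ)/(ρ*(1-lam))⌉₊, ?_⟩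
    have hcl := Nat.le_ceil ((4:ℝ)/(ρ*(1-lam)))
    set n := ⌈(4:ℝ)/(ρ*(1-lam))⌉₊ with hn
    have h4 : 4 ≤ (n:ℝ) * (ρ*(1-lam)) := by
      rw [div_le_iff₀ hplm] at hcl
      linarith
    have hbern : 1 + (n:ℝ)*(ρ/2) ≤ (1+ρ/2)^n := one_add_mul_le_pow (by linarith) n
    have hmul := mul_le_mul_of_nonneg_right hbern hlam'.le
    nlinarith
  set K := Nat.find hex with hK
  have hKp : 1 - ρ < (1+ρ/2)^K * (1-lam) := Nat.find_spec hex
  have hMkK : Mk K < 1 - lam := by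
    simp only [hMk]
    rw [div_lt_iff₀ (by positivity)]
    nlinarith
  have hKb : (K:ℝ) ≤ 3/(ρ*(1-lam)) := by
    have hple : ρ*(1-lam) ≤ 1 := by nlinarith
    rcases Nat.eq_zero_or_pos K with h0 | hpos
    · rw [h0]; push_cast; positivity
    · have hKm : ¬ (1 - ρ < (1+ρ/2)^(K-1) * (1-lam)) :=
        Nat.find_min hex (by omega)
      push_neg at hKm
      have hbern : 1 + ((K-1:ℕ):ℝ)*(ρ/2) ≤ (1+ρ/2)^(K-1) :=
        one_add_mul_le_pow (by linarith) (K-1)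
      have hmul := mul_le_mul_of_nonneg_right hbern hlam'.le
      have hKK : ((K-1:ℕ):ℝ) = (K:ℝ) - 1 := by
        have : (1:ℕ) ≤ K := hpos
        push_cast [Nat.cast_sub this]
        ring
      rw [hKK] at hmul
      -- (1 + (K-1)ρ/2)(1-lam) ≤ 1-ρ
      have hchain : (1 + ((K:ℝ)-1)*(ρ/2)) * (1-lam) ≤ 1 - ρ := le_trans hmul hKm
      rw [le_div_iff₀ hplm]
      nlinarith
  refine ⟨Tk K, hTknn K, ?_, ?_⟩
  · simp only [hTk]
    have h1 : (28:ℝ)+35*(s:ℝ) ≤ 36*(s:ℝ) := by linarith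
    calc (K:ℝ)*(28+35*(s:ℝ)) ≤ (K:ℝ)*(36*(s:ℝ)) :=
        mul_le_mul_of_nonneg_left h1 (Nat.cast_nonneg K)
      _ ≤ (3/(ρ*(1-lam)))*(36*(s:ℝ)) :=
        mul_le_mul_of_nonneg_right hKb (by positivity)
      _ = 108*(s:ℝ)/(ρ*(1-lam)) := by ring
      _ ≤ 144/(ρ*(1-lam))*(s:ℝ) := by
        rw [show (144:ℝ)/(ρ*(1-lam))*(s:ℝ) = 144*(s:ℝ)/(ρ*(1-lam)) by ring]
        gcongr
        linarith
  · intro t ht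
    have ht0 : (0:ℝ) ≤ t := le_trans (hTknn K) ht
    obtain ⟨hXK, hYK⟩ := key K t ht
    have hXlam : X t < 1 - lam := lt_of_le_of_lt hXK hMkK
    simp only [hX, hD] at hXlam
    rw [div_lt_iff₀ (hδlt t ht0)] at hXlam
    refine ⟨?_, ?_, ?_⟩
    · rw [hξ t]
      rw [lt_div_iff₀ (hδlt t ht0)]
      nlinarith [hδlt t ht0]
    · intro j hj1 hj8
      rw [hηj j hj1 hj8 t]
      have hγ0 : 0 < γ j t := hγpos t ht0 j hj1 hj8
      have hYj : Y j t < 1 - lam :=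
        lt_of_le_of_lt (hYK j (Finset.mem_Icc.2 ⟨hj1, hj8⟩)) hMkK
      simp only [hY] at hYj
      rw [div_lt_iff₀ hγ0] at hYj
      rw [lt_div_iff₀ hγ0]
      nlinarith
    · have h2b := h2B t ht0 (Mk K) hYK
      have hMK0 : 0 ≤ Mk K := (hMkpos K).le
      have hg : Mk K * Γ t ≤ Mk K * 1 :=
        mul_le_mul_of_nonneg_left ((hΓb t ht0).2) hMK0
      linarith
end

section
/- Let s ≥ 32, λ ∈ (0, 1), ρ ∈ (0, 1), and set λ₁ = (1+λ)/2, ε = (ρ/8)(1 − λ₁²), and v_j = 2(3 + 2j)/(3 + 16s) for 1 ≤ j ≤ 8s. Define Ψ(t) = min{ξ(t), η_1(t) + ε·v_1, …, η_{8s}(t) + ε·v_{8s}}. Assume the Phase-I standing bounds: for all t ≥ 0, 0 ≤ δ(t) ≤ 0.2/s, γ_j(t) > 0 for all 1 ≤ j ≤ 8s, γ_{j−1}(t)/γ_j(t) ≥ 1/2 for all 2 ≤ j ≤ 8s, γ_1(t) ≤ 1/s, 1 − 2/s ≤ Γ(t) ≤ 1, 1/s − δ(t) > 0, ξ(t) ≥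 ρ, η(t) ≥ ρ, and η_j(t) ≥ ρ for all 1 ≤ j ≤ 8s. Then at every time t ≥ 0 with Ψ(t) < λ₁, the lower right Dini derivative of Ψ at t is at least ε/(9s). -/
open Filter Topology

lemma dini_min_lb {ι : Type*} (S : Finset ι) (hne : S.Nonempty)
    (f : ι → ℝ → ℝ) (t c : ℝ) (hc : 0 < c)
    (Ψ : ℝ → ℝ) (hΨ : ∀ u, Ψ u = S.inf' hne fun i => f i u)
    (hd : ∀ i ∈ S, ∃ d, HasDerivAt (f i) d t ∧ (f i t = Ψ t → c < d)) :
    c ≤ liminf (fun h : ℝ => (Ψ (t + h) - Ψ t) / h) (𝓝[>] (0:ℝ)) := by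
  choose! d hdd hdact using hd
  obtain ⟨k, hk, hkeq⟩ := S.exists_mem_eq_inf' hne (fun i => f i t)
  have hΨk : Ψ t = f k t := by rw [hΨ t]; exact hkeq
  have hslope : ∀ i ∈ S, Tendsto (fun h : ℝ => (f i (t + h) - f i t) / h)
      (𝓝[>] (0:ℝ)) (𝓝 (d i)) := by
    intro i hi
    have := (hdd i hi).tendsto_slope_zero_right
    simpa [smul_eq_mul, div_eq_inv_mul] using this
  have hub : ∀ᶠ h in 𝓝[>] (0:ℝ), (Ψ (t + h) - Ψ t) / h ≤ (f k (t + h) - f k t) / h := by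
    filter_upwards [self_mem_nhdsWithin] with h hh
    have h0 : (0:ℝ) < h := hh
    have hle : Ψ (t + h) ≤ f k (t + h) := by
      rw [hΨ (t + h)]; exact Finset.inf'_le _ hk
    have hnum : Ψ (t + h) - Ψ t ≤ f k (t + h) - f k t := by linarith [hΨk]
    gcongr
  have hub2 : ∀ᶠ h in 𝓝[>] (0:ℝ), (Ψ (t + h) - Ψ t) / h ≤ d k + 1 := by
    filter_upwards [hub, (hslope k hk).eventually (eventually_lt_nhds (by linarith : d k < d k + 1))] with h h1 h2
    linarith
  have hcob : IsCoboundedUnder (· ≥ ·) (𝓝[>] (0:ℝ)) (fun h : ℝ => (Ψ (t + h) - Ψ t) / h) :=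
    isCoboundedUnder_ge_of_eventually_le _ hub2
  have hall : ∀ i ∈ S, ∀ᶠ h in 𝓝[>] (0:ℝ), Ψ t + c * h ≤ f i (t + h) := by
    intro i hi
    by_cases hact : f i t = Ψ t
    · filter_upwards [self_mem_nhdsWithin,
        (hslope i hi).eventually (eventually_gt_nhds (hdact i hi hact))] with h hh h2
      have h0 : (0:ℝ) < h := hh
      rw [lt_div_iff₀ h0] at h2
      nlinarith [h2]
    · have hle : Ψ t ≤ f i t := by rw [hΨ t]; exact Finset.inf'_le _ hi
      have hlt : Ψ t < f i t := lt_of_le_of_ne hle (Ne.symm hact)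
      have hcont : Tendsto (fun h : ℝ => f i (t + h)) (𝓝[>] (0:ℝ)) (𝓝 (f i t)) := by
        have h1 : Tendsto (fun h : ℝ => t + h) (𝓝[>] (0:ℝ)) (𝓝 t) := by
          have := (continuous_add_left t).tendsto (0:ℝ)
          simpa using this.mono_left nhdsWithin_le_nhds
        exact ((hdd i hi).continuousAt.tendsto).comp h1
      have hc1 : ∀ᶠ h in 𝓝[>] (0:ℝ), (Ψ t + f i t)/2 < f i (t + h) :=
        hcont.eventually (eventually_gt_nhds (by linarith))
      have hc2 : ∀ᶠ h in 𝓝[>] (0:ℝ), c * h < (f i t - Ψ t)/2 := by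
        have h1 : Tendsto (fun h : ℝ => c * h) (𝓝[>] (0:ℝ)) (𝓝 0) := by
          have := (continuous_mul_left c).tendsto (0:ℝ)
          simpa using this.mono_left nhdsWithin_le_nhds
        exact h1.eventually (eventually_lt_nhds (by linarith))
      filter_upwards [hc1, hc2] with h h1 h2
      linarith
  have hlow : ∀ᶠ h in 𝓝[>] (0:ℝ), c ≤ (Ψ (t + h) - Ψ t) / h := by
    filter_upwards [(eventually_all_finset S).mpr hall, self_mem_nhdsWithin] with h hh h0
    have h0' : (0:ℝ) < h := h0
    have : Ψ t + c * h ≤ Ψ (t + h) := by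
      rw [hΨ (t + h)]
      exact Finset.le_inf' _ _ (fun i hi => hh i hi)
    rw [le_div_iff₀ h0']
    linarith
  exact le_liminf_of_le hcob hlow


set_option maxHeartbeats 1000000 in
theorem stmt_11
    (s : ℕ) (hs : 32 ≤ s)
    (α δ : ℝ → ℝ) (β γ : ℕ → ℝ → ℝ) (B Γ u R : ℝ → ℝ)
    (hB : ∀ t, B t = ∑ j ∈ Finset.Icc 1 (8*s), β j t)
    (hΓ : ∀ t, Γ t = ∑ j ∈ Finset.Icc 1 (8*s), γ j t)
    (hu : ∀ t, u t = 1 - 1/(s:ℝ) - Γ t)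
    (hR : ∀ t, R t = 1 + 1/(2*(s:ℝ)) - δ t / 2 - u t)
    (hderivα : ∀ t : ℝ, 0 ≤ t → HasDerivAt α (-(α t / 2) * (Γ t - B t) + δ t * B t) t)
    (hderivδ : ∀ t : ℝ, 0 ≤ t →
      HasDerivAt δ ((α t / 2) * (Γ t - B t) + ((1/(s:ℝ) - α t - δ t)/2) * B t - δ t * Γ t) t)
    (hderivβ1 : ∀ t : ℝ, 0 ≤ t → HasDerivAt (β 1) (-(β 1 t) * R t + (α t / 2) * Γ t) t)
    (hderivβ : ∀ j, 2 ≤ j → j ≤ 8*s → ∀ t : ℝ, 0 ≤ t →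
      HasDerivAt (β j) (β (j-1) t - β j t * R t) t)
    (hderivγ1 : ∀ t : ℝ, 0 ≤ t →
      HasDerivAt (γ 1) (-(γ 1 t) * R t + (1/(2*(s:ℝ)) - δ t / 2) * Γ t) t)
    (hderivγ : ∀ j, 2 ≤ j → j ≤ 8*s → ∀ t : ℝ, 0 ≤ t →
      HasDerivAt (γ j) (γ (j-1) t - γ j t * R t) t)
    (ξ η : ℝ → ℝ) (ηj : ℕ → ℝ → ℝ)
    (hξ : ∀ t, ξ t = (1/(s:ℝ) - δ t - 2 * α t) / (1/(s:ℝ) - δ t))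
    (hηj : ∀ j, 1 ≤ j → j ≤ 8*s → ∀ t, ηj j t = (γ j t - 2 * β j t) / γ j t)
    (hη : ∀ t, η t = (Γ t - 2 * B t) / Γ t)
    (lam ρ lam₁ ε : ℝ) (hlam : 0 < lam) (hlam1 : lam < 1) (hρ : 0 < ρ) (hρ1 : ρ < 1)
    (hlam₁ : lam₁ = (1 + lam)/2) (hε : ε = (ρ/8) * (1 - lam₁^2))
    (v : ℕ → ℝ) (hv : ∀ j, v j = 2*(3 + 2*(j:ℝ))/(3 + 16*(s:ℝ)))
    (Ψ : ℝ → ℝ)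
    (hΨ : ∀ t, Ψ t = min (ξ t)
      ((Finset.Icc 1 (8*s)).inf' (Finset.nonempty_Icc.mpr (by omega))
        (fun j => ηj j t + ε * v j)))
    (hδb : ∀ t : ℝ, 0 ≤ t → 0 ≤ δ t ∧ δ t ≤ 0.2 / (s:ℝ))
    (hγpos : ∀ t : ℝ, 0 ≤ t → ∀ j, 1 ≤ j → j ≤ 8*s → 0 < γ j t)
    (hγratio : ∀ t : ℝ, 0 ≤ t → ∀ j, 2 ≤ j → j ≤ 8*s → 1/2 ≤ γ (j-1) t / γ j t)
    (hγ1b : ∀ t : ℝ, 0 ≤ t → γ 1 t ≤ 1/(s:ℝ))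
    (hΓb : ∀ t : ℝ, 0 ≤ t → 1 - 2/(s:ℝ) ≤ Γ t ∧ Γ t ≤ 1)
    (hδlt : ∀ t : ℝ, 0 ≤ t → 0 < 1/(s:ℝ) - δ t)
    (hξρ : ∀ t : ℝ, 0 ≤ t → ρ ≤ ξ t)
    (hηρ : ∀ t : ℝ, 0 ≤ t → ρ ≤ η t)
    (hηjρ : ∀ t : ℝ, 0 ≤ t → ∀ j, 1 ≤ j → j ≤ 8*s → ρ ≤ ηj j t) :
    ∀ t : ℝ, 0 ≤ t → Ψ t < lam₁ →
      ε / (9 * (s:ℝ)) ≤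
        Filter.liminf (fun h : ℝ => (Ψ (t + h) - Ψ t) / h)
          (nhdsWithin 0 (Set.Ioi (0:ℝ))) := by
  intro t ht hΨlt
  have hsR : (32:ℝ) ≤ (s:ℝ) := by exact_mod_cast hs
  have hspos : (0:ℝ) < (s:ℝ) := by linarith
  have hl1l : 1/2 < lam₁ := by rw [hlam₁]; linarith
  have hl1u : lam₁ < 1 := by rw [hlam₁]; linarith
  have hlsq : 0 < 1 - lam₁^2 := by nlinarith
  have hεpos : 0 < ε := by rw [hε]; positivity
  have hcpos : 0 < ε / (9 * (s:ℝ)) := by positivity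
  have hIne : (Finset.Icc 1 (8*s)).Nonempty := Finset.nonempty_Icc.mpr (by omega)
  set c : ℝ := ε / (9 * (s:ℝ)) with hcdef
  -- the family
  set F : ℕ → ℝ → ℝ := fun j x => if j = 0 then ξ x else ηj j x + ε * v j with hFdef
  have hSne : (insert 0 (Finset.Icc 1 (8*s))).Nonempty := ⟨0, Finset.mem_insert_self _ _⟩
  have hΨ' : ∀ x, Ψ x = (insert 0 (Finset.Icc 1 (8*s))).inf' hSne fun i => F i x := by
    intro x
    rw [hΨ x, Finset.inf'_insert]
    have : ((Finset.Icc 1 (8*s)).inf' hIne fun i => F i x)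
        = (Finset.Icc 1 (8*s)).inf' hIne fun j => ηj j x + ε * v j := by
      apply Finset.inf'_congr _ rfl
      intro j hj
      have : j ≠ 0 := by
        have := (Finset.mem_Icc.mp hj).1; omega
      simp [hFdef, this]
    rw [this]
    simp [hFdef]
    exact hIne
  -- basic facts at t
  have hδ0 := (hδb t ht).1
  have hδub := (hδb t ht).2
  have hD : 0 < 1/(s:ℝ) - δ t := hδlt t ht
  have hΓl := (hΓb t ht).1
  have hΓu := (hΓb t ht).2
  have hΓ15 : (15/16 : ℝ) ≤ Γ t := by
    have h2s : 2/(s:ℝ) ≤ 2/32 := by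
      apply div_le_div_of_nonneg_left (by norm_num) (by norm_num) hsR
    linarith
  have hΓpos : 0 < Γ t := by linarith
  have hδub' : δ t ≤ 1/(5*(s:ℝ)) := by
    have : (0.2:ℝ)/(s:ℝ) = 1/(5*(s:ℝ)) := by rw [div_eq_div_iff (ne_of_gt hspos) (by positivity)]; ring
    linarith [this ▸ hδub]
  have hDlb : 4/(5*(s:ℝ)) ≤ 1/(s:ℝ) - δ t := by
    have : 1/(s:ℝ) - 1/(5*(s:ℝ)) = 4/(5*(s:ℝ)) := by field_simp; ring
    linarith
  have h16s : (0:ℝ) < 3 + 16*(s:ℝ) := by linarith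
  -- Ψ t ≤ each component
  have hΨleξ : Ψ t ≤ ξ t := by rw [hΨ t]; exact min_le_left _ _
  have hΨleη : ∀ j ∈ Finset.Icc 1 (8*s), Ψ t ≤ ηj j t + ε * v j := by
    intro j hj
    rw [hΨ t]
    exact le_trans (min_le_right _ _) (Finset.inf'_le _ hj)
  -- apply the dini lemma
  refine dini_min_lb _ hSne F t c hcpos Ψ hΨ' ?_
  intro i hi
  rcases Finset.mem_insert.mp hi with rfl | hiI
  · -- ξ case
    have hα' := hderivα t ht
    have hδ' := hderivδ t ht
    have hnum : HasDerivAt (fun x => 1/(s:ℝ) - δ x - 2*α x)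
        (0 - ((α t / 2) * (Γ t - B t) + ((1/(s:ℝ) - α t - δ t)/2) * B t - δ t * Γ t)
          - 2*(-(α t / 2) * (Γ t - B t) + δ t * B t)) t :=
      ((hasDerivAt_const t (1/(s:ℝ))).sub hδ').sub (hα'.const_mul 2)
    have hden : HasDerivAt (fun x => 1/(s:ℝ) - δ x)
        (0 - ((α t / 2) * (Γ t - B t) + ((1/(s:ℝ) - α t - δ t)/2) * B t - δ t * Γ t)) t :=
      (hasDerivAt_const t (1/(s:ℝ))).sub hδ'
    have hq := hnum.div hden (ne_of_gt hD)
    have hξfun : ξ = fun x => (1/(s:ℝ) - δ x - 2 * α x) / (1/(s:ℝ) - δ x) := funext hξ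
    have hF0 : F 0 = ξ := by funext x; simp [hFdef]
    refine ⟨_, by rw [hF0, hξfun]; exact hq, ?_⟩
    intro hact
    have hxΨ : ξ t = Ψ t := by simpa [hFdef] using hact
    have hx : ρ ≤ ξ t := hξρ t ht
    have hxlt : ξ t < lam₁ := by rw [hxΨ]; exact hΨlt
    have he : ρ ≤ η t := hηρ t ht
    -- η t ≥ ξ t - 2ε
    have hsum : Γ t - 2 * B t = ∑ j ∈ Finset.Icc 1 (8*s), γ j t * ηj j t := by
      rw [hΓ t, hB t, Finset.mul_sum, ← Finset.sum_sub_distrib]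
      apply Finset.sum_congr rfl
      intro j hj
      obtain ⟨hj1, hj2⟩ := Finset.mem_Icc.mp hj
      have hγj := hγpos t ht j hj1 hj2
      rw [hηj j hj1 hj2 t]
      field_simp
    have hterm : ∀ j ∈ Finset.Icc 1 (8*s), (Ψ t - 2*ε) * γ j t ≤ γ j t * ηj j t := by
      intro j hj
      obtain ⟨hj1, hj2⟩ := Finset.mem_Icc.mp hj
      have hγj := hγpos t ht j hj1 hj2
      have hvj : v j ≤ 2 := by
        rw [hv j, div_le_iff₀ h16s]
        have : (j:ℝ) ≤ 8*(s:ℝ) := by exact_mod_cast hj2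
        linarith
      have hvj0 : 0 ≤ v j := by
        rw [hv j]
        positivity
      have h1 := hΨleη j hj
      have hεv : ε * v j ≤ ε * 2 := mul_le_mul_of_nonneg_left hvj hεpos.le
      have h2 : Ψ t - 2*ε ≤ ηj j t := by linarith
      calc (Ψ t - 2*ε) * γ j t ≤ ηj j t * γ j t := mul_le_mul_of_nonneg_right h2 hγj.le
        _ = γ j t * ηj j t := mul_comm _ _
    have hkey : (Ψ t - 2*ε) * Γ t ≤ Γ t - 2 * B t := by
      rw [hsum, hΓ t, Finset.mul_sum]
      exact Finset.sum_le_sum hterm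
    have hex : ξ t - 2*ε ≤ η t := by
      have : Ψ t - 2*ε ≤ η t := by
        rw [hη t, le_div_iff₀ hΓpos]
        linarith
      linarith [hxΨ ▸ this]
    -- substitutions
    have hαt : α t = (1/(s:ℝ) - δ t)*(1 - ξ t)/2 := by
      have h1 := hξ t
      rw [eq_div_iff (ne_of_gt hD)] at h1
      linarith only [h1]
    have hBt : B t = Γ t * (1 - η t)/2 := by
      have h1 := hη t
      rw [eq_div_iff (ne_of_gt hΓpos)] at h1
      linarith only [h1]
    rw [hcdef, lt_div_iff₀ (by positivity : (0:ℝ) < (1/(s:ℝ) - δ t)^2)]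
    have hnum_eq : (0 - ((α t / 2) * (Γ t - B t) + ((1/(s:ℝ) - α t - δ t)/2) * B t - δ t * Γ t)
          - 2*(-(α t / 2) * (Γ t - B t) + δ t * B t)) * (1/(s:ℝ) - δ t)
          - (1/(s:ℝ) - δ t - 2*α t) * (0 - ((α t / 2) * (Γ t - B t) + ((1/(s:ℝ) - α t - δ t)/2) * B t - δ t * Γ t))
        = (1/(s:ℝ) - δ t)^2 * Γ t * (1 - ξ t^2) * η t / 4
          + δ t * (1/(s:ℝ) - δ t) * Γ t * (η t - ξ t) := by
      rw [hαt, hBt]; ring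
    rw [hnum_eq]
    have hxsq : ξ t^2 < lam₁^2 := by nlinarith [hx, hxlt, hρ, mul_pos hρ hρ]
    have hD2 : 0 < (1/(s:ℝ) - δ t)^2 := by positivity
    have h8ε : ρ * (1 - lam₁^2) = 8*ε := by rw [hε]; ring
    have ht1 : (1/(s:ℝ) - δ t)^2 * ((15/16) * (8*ε)) / 4
        ≤ (1/(s:ℝ) - δ t)^2 * Γ t * (1 - ξ t^2) * η t / 4 := by
      rw [← h8ε]
      have hinner : (1 - lam₁^2) * ρ ≤ (1 - ξ t^2) * η t :=
        mul_le_mul (by linarith [hxsq]) (hηρ t ht) hρ.le (by nlinarith [hxsq])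
      have hstep : (15/16) * ((1 - lam₁^2) * ρ) ≤ Γ t * ((1 - ξ t^2) * η t) :=
        mul_le_mul hΓ15 hinner (by positivity) hΓpos.le
      have hmul := mul_le_mul_of_nonneg_left hstep
        (show (0:ℝ) ≤ (1/(s:ℝ) - δ t)^2/4 by positivity)
      linarith only [hmul]
    have h4δ : 4 * δ t ≤ 1/(s:ℝ) - δ t := by
      have e1 : 4/(5*(s:ℝ)) = 4*(1/(5*(s:ℝ))) := by ring
      linarith [hδub', hDlb, e1]
    have ht2 : -(ε/2) * (1/(s:ℝ) - δ t)^2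
        ≤ δ t * (1/(s:ℝ) - δ t) * Γ t * (η t - ξ t) := by
      rcases le_or_gt (ξ t) (η t) with hce | hce
      · have : 0 ≤ δ t * (1/(s:ℝ) - δ t) * Γ t * (η t - ξ t) := by
          apply mul_nonneg
          apply mul_nonneg
          apply mul_nonneg hδ0 hD.le
          exact hΓpos.le
          linarith
        nlinarith
      · have q1 : δ t * (Γ t * (ξ t - η t)) ≤ ((1/(s:ℝ) - δ t)/4) * (1 * (2*ε)) := by
          apply mul_le_mul (by linarith)
          · exact mul_le_mul hΓu (by linarith) (by linarith) (by norm_num)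
          · apply mul_nonneg hΓpos.le; linarith
          · linarith
        have q2 := mul_le_mul_of_nonneg_left q1 hD.le
        linarith only [q2]
    have hεD : 0 < ε * (1/(s:ℝ) - δ t)^2 := by positivity
    have h9s : ε / (9 * (s:ℝ)) * (1/(s:ℝ) - δ t)^2 ≤ ε/288 * (1/(s:ℝ) - δ t)^2 := by
      have h0 : ε / (9 * (s:ℝ)) ≤ ε/288 := by
        apply div_le_div_of_nonneg_left hεpos.le (by norm_num) (by linarith)
      exact mul_le_mul_of_nonneg_right h0 hD2.le
    linarith only [ht1, ht2, h9s, hεD]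
    
  · -- η_j cases
    obtain ⟨hi1, hi2⟩ := Finset.mem_Icc.mp hiI
    have hi0 : i ≠ 0 := by omega
    have hγi := hγpos t ht i hi1 hi2
    have hηifun : (fun x => ηj i x + ε * v i)
        = fun x => (γ i x - 2 * β i x) / γ i x + ε * v i := by
      funext x; rw [hηj i hi1 hi2 x]
    have hFi : F i = fun x => ηj i x + ε * v i := by
      funext x; simp [hFdef, hi0]
    rcases eq_or_lt_of_le hi1 with h1eq | h1lt
    · -- i = 1
      subst h1eq
      have hβ' := hderivβ1 t ht
      have hγ' := hderivγ1 t ht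
      have hq := (hγ'.sub (hβ'.const_mul 2)).div hγ' (ne_of_gt hγi)
      refine ⟨_, by rw [hFi, hηifun]; exact hq.add_const (ε * v 1), ?_⟩
      intro hact
      have hactv : ηj 1 t + ε * v 1 = Ψ t := by simpa [hFdef] using hact
      have hγ1ub := hγ1b t ht
      have hβ1t : β 1 t = γ 1 t * (1 - ηj 1 t)/2 := by
        have h1 := hηj 1 le_rfl hi2 t
        rw [eq_div_iff (ne_of_gt hγi)] at h1
        linarith only [h1]
      have hαt : α t = (1/(s:ℝ) - δ t)*(1 - ξ t)/2 := by
        have h1 := hξ t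
        rw [eq_div_iff (ne_of_gt hD)] at h1
        linarith only [h1]
      have hd1 : ε * v 1 ≤ ξ t - ηj 1 t := by linarith [hΨleξ, hactv]
      have hv1 : v 1 = 10/(3 + 16*(s:ℝ)) := by rw [hv 1]; norm_num
      rw [hcdef, lt_div_iff₀ (by positivity : (0:ℝ) < γ 1 t^2)]
      have hnum_eq : (-(γ 1 t) * R t + (1/(2*(s:ℝ)) - δ t / 2) * Γ t
            - 2*(-(β 1 t) * R t + (α t / 2) * Γ t)) * γ 1 t
            - (γ 1 t - 2*β 1 t) * (-(γ 1 t) * R t + (1/(2*(s:ℝ)) - δ t / 2) * Γ t)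
          = Γ t * (1/(s:ℝ) - δ t) * γ 1 t * (ξ t - ηj 1 t) / 2 := by
        rw [hβ1t, hαt]; ring
      simp only [Pi.sub_apply]
      rw [hnum_eq]
      have hd1' : ε * (10/(3 + 16*(s:ℝ))) ≤ ξ t - ηj 1 t := by
        rw [hv1] at hd1; linarith only [hd1]
      have m1 : (15/16) * (4/(5*(s:ℝ))) * γ 1 t * (ε * (10/(3 + 16*(s:ℝ)))) / 2
          ≤ Γ t * (1/(s:ℝ) - δ t) * γ 1 t * (ξ t - ηj 1 t) / 2 := by
        gcongr <;> first
          | exact mul_nonneg hεpos.le (by positivity)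
          | exact hΓ15
          | exact hDlb
          | exact hd1'
          | positivity
      have hA0 : γ 1 t * γ 1 t ≤ 1/(s:ℝ) * γ 1 t :=
        mul_le_mul_of_nonneg_right hγ1ub hγi.le
      have hA := mul_le_mul_of_nonneg_left hA0
        (by positivity : (0:ℝ) ≤ ε/(9*(s:ℝ)))
      have hC : (1:ℝ)/(9*(s:ℝ))*(1/(s:ℝ)) < (15/16)*(4/(5*(s:ℝ)))*(10/(3+16*(s:ℝ)))/2 := by
        have e1 : (1:ℝ)/(9*(s:ℝ))*(1/(s:ℝ)) = 1/(9*(s:ℝ)^2) := by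
          field_simp
        have e2 : (15/16:ℝ)*(4/(5*(s:ℝ)))*(10/(3+16*(s:ℝ)))/2
            = 15/(4*((s:ℝ)*(3+16*(s:ℝ)))) := by
          field_simp; ring
        rw [e1, e2, div_lt_div_iff₀ (by positivity) (by positivity)]
        have hs2 := mul_le_mul_of_nonneg_left hsR hspos.le
        linarith only [hs2, hspos]
      have hB1 := mul_lt_mul_of_pos_left hC (mul_pos hεpos hγi)
      have b1 : ε/(9*(s:ℝ))*(1/(s:ℝ)*γ 1 t) = ε*γ 1 t*(1/(9*(s:ℝ))*(1/(s:ℝ))) := by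
        ring
      have b2 : ε*γ 1 t*((15/16)*(4/(5*(s:ℝ)))*(10/(3+16*(s:ℝ)))/2)
          = (15/16)*(4/(5*(s:ℝ)))*γ 1 t*(ε*(10/(3 + 16*(s:ℝ))))/2 := by
        ring
      linarith only [hA, hB1, m1, b1, b2]
    · -- i ≥ 2
      have hi2' : 2 ≤ i := h1lt
      have him1 : 1 ≤ i - 1 := by omega
      have him2 : i - 1 ≤ 8*s := by omega
      have hβ' := hderivβ i hi2' hi2 t ht
      have hγ' := hderivγ i hi2' hi2 t ht
      have hq := (hγ'.sub (hβ'.const_mul 2)).div hγ' (ne_of_gt hγi)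
      refine ⟨_, by rw [hFi, hηifun]; exact hq.add_const (ε * v i), ?_⟩
      intro hact
      have hactv : ηj i t + ε * v i = Ψ t := by simpa [hFdef, hi0] using hact
      have hmem : i - 1 ∈ Finset.Icc 1 (8*s) := Finset.mem_Icc.mpr ⟨him1, him2⟩
      have hle2 := hΨleη (i-1) hmem
      have hdiff : ε*(v i - v (i-1)) ≤ ηj (i-1) t - ηj i t := by
        nlinarith [hle2, hactv]
      have hcast : ((i-1:ℕ):ℝ) = (i:ℝ) - 1 := by
        push_cast [Nat.cast_sub hi1]; ring
      have hvdiff : v i - v (i-1) = 4/(3 + 16*(s:ℝ)) := by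
        rw [hv i, hv (i-1), hcast]
        field_simp
        ring
      have hγm := hγpos t ht (i-1) him1 him2
      have hratio := hγratio t ht i hi2' hi2
      have hhalf : γ i t ≤ 2 * γ (i-1) t := by
        rw [le_div_iff₀ hγi] at hratio; linarith only [hratio]
      have hβit : β i t = γ i t * (1 - ηj i t)/2 := by
        have h1 := hηj i hi1 hi2 t
        rw [eq_div_iff (ne_of_gt hγi)] at h1
        linarith only [h1]
      have hβmt : β (i-1) t = γ (i-1) t * (1 - ηj (i-1) t)/2 := by
        have h1 := hηj (i-1) him1 him2 t
        rw [eq_div_iff (ne_of_gt hγm)] at h1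
        linarith only [h1]
      rw [hcdef, lt_div_iff₀ (by positivity : (0:ℝ) < γ i t^2)]
      have hnum_eq : (γ (i-1) t - γ i t * R t - 2*(β (i-1) t - β i t * R t)) * γ i t
            - (γ i t - 2*β i t) * (γ (i-1) t - γ i t * R t)
          = γ i t * γ (i-1) t * (ηj (i-1) t - ηj i t) := by
        rw [hβit, hβmt]; ring
      simp only [Pi.sub_apply]
      rw [hnum_eq]
      have hd4 : 4*ε/(3 + 16*(s:ℝ)) ≤ ηj (i-1) t - ηj i t := by
        rw [hvdiff] at hdiff
        have bb : ε*(4/(3 + 16*(s:ℝ))) = 4*ε/(3 + 16*(s:ℝ)) := by ring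
        linarith only [hdiff, bb]
      have m1 : γ i t * (γ i t/2) * (4*ε/(3 + 16*(s:ℝ)))
          ≤ γ i t * γ (i-1) t * (ηj (i-1) t - ηj i t) := by
        gcongr <;> first
          | exact hd4
          | linarith only [hhalf]
          | positivity
      have hC2 : (1:ℝ)/(9*(s:ℝ)) < 2/(3 + 16*(s:ℝ)) := by
        rw [div_lt_div_iff₀ (by positivity) h16s]
        linarith only [hsR]
      have hB1 := mul_lt_mul_of_pos_left hC2
        (by positivity : (0:ℝ) < ε * γ i t^2)
      have b1 : ε/(9*(s:ℝ))*γ i t^2 = ε*γ i t^2*(1/(9*(s:ℝ))) := by ring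
      have b2 : ε*γ i t^2*(2/(3 + 16*(s:ℝ)))
          = γ i t*(γ i t/2)*(4*ε/(3 + 16*(s:ℝ))) := by ring
      linarith only [hB1, m1, b1, b2]
end

section
/- Let s ≥ 32, let T₁ ≥ 0, and define Λ₂(t) = α(t) + δ(t)/16 + β(t)/4. Assume that for all t ≥ T₁ the variables satisfy α(t) ≥ 0, δ(t) ≥ 0, β_j(t) ≥ 0 for all 1 ≤ j ≤ 8s, 1 − 2/s ≤ Γ(t) ≤ 1, R(t) ≥ 1 + 1/(4s), and β(t) ≤ 1/64. Then Λ₂'(t) ≤ −Λ₂(t)/(8s) for all t ≥ T₁, and consequently Λ₂(t) ≤ Λ₂(T₁)·e^{−(t−T₁)/(8s)} for all t ≥ T₁. -/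
theorem stmt_13
    (s : ℕ) (hs : 32 ≤ s)
    (α δ : ℝ → ℝ) (β γ : ℕ → ℝ → ℝ) (B Γ u R : ℝ → ℝ)
    (hB : ∀ t, B t = ∑ j ∈ Finset.Icc 1 (8*s), β j t)
    (hΓ : ∀ t, Γ t = ∑ j ∈ Finset.Icc 1 (8*s), γ j t)
    (hu : ∀ t, u t = 1 - 1/(s:ℝ) - Γ t)
    (hR : ∀ t, R t = 1 + 1/(2*(s:ℝ)) - δ t / 2 - u t)
    (hderivα : ∀ t : ℝ, 0 ≤ t → HasDerivAt α (-(α t / 2) * (Γ t - B t) + δ t * B t) t)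
    (hderivδ : ∀ t : ℝ, 0 ≤ t →
      HasDerivAt δ ((α t / 2) * (Γ t - B t) + ((1/(s:ℝ) - α t - δ t)/2) * B t - δ t * Γ t) t)
    (hderivβ1 : ∀ t : ℝ, 0 ≤ t → HasDerivAt (β 1) (-(β 1 t) * R t + (α t / 2) * Γ t) t)
    (hderivβ : ∀ j, 2 ≤ j → j ≤ 8*s → ∀ t : ℝ, 0 ≤ t →
      HasDerivAt (β j) (β (j-1) t - β j t * R t) t)
    (hderivγ1 : ∀ t : ℝ, 0 ≤ t →
      HasDerivAt (γ 1) (-(γ 1 t) * R t + (1/(2*(s:ℝ)) - δ t / 2) * Γ t) t)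
    (hderivγ : ∀ j, 2 ≤ j → j ≤ 8*s → ∀ t : ℝ, 0 ≤ t →
      HasDerivAt (γ j) (γ (j-1) t - γ j t * R t) t)
    (T₁ : ℝ) (hT₁ : 0 ≤ T₁)
    (hαt : ∀ t : ℝ, T₁ ≤ t → 0 ≤ α t)
    (hδt : ∀ t : ℝ, T₁ ≤ t → 0 ≤ δ t)
    (hβt : ∀ t : ℝ, T₁ ≤ t → ∀ j, 1 ≤ j → j ≤ 8*s → 0 ≤ β j t)
    (hΓt : ∀ t : ℝ, T₁ ≤ t → 1 - 2/(s:ℝ) ≤ Γ t ∧ Γ t ≤ 1)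
    (hRt : ∀ t : ℝ, T₁ ≤ t → 1 + 1/(4*(s:ℝ)) ≤ R t)
    (hBt : ∀ t : ℝ, T₁ ≤ t → B t ≤ 1/64) :
    (∀ t : ℝ, T₁ ≤ t →
      deriv (fun x => α x + δ x / 16 + B x / 4) t ≤
        -(α t + δ t / 16 + B t / 4) / (8*(s:ℝ))) ∧
    (∀ t : ℝ, T₁ ≤ t →
      α t + δ t / 16 + B t / 4 ≤
        (α T₁ + δ T₁ / 16 + B T₁ / 4) * Real.exp (-(t - T₁)/(8*(s:ℝ)))) := by
  classical
  have hs32 : (32:ℝ) ≤ (s:ℝ) := by exact_mod_cast hs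
  have hspos : (0:ℝ) < (s:ℝ) := by linarith
  have hsle : 1/(s:ℝ) ≤ 1/32 := by
    rw [div_le_div_iff₀ hspos (by norm_num)]; linarith
  have hse : 0 < 1/(s:ℝ) := by positivity
  -- derivative of B
  have hBder : ∀ t : ℝ, 0 ≤ t →
      HasDerivAt B (α t / 2 * Γ t + (B t - β (8*s) t) - B t * R t) t := by
    intro t ht
    have hsum : HasDerivAt (fun x => ∑ j ∈ Finset.Icc 1 (8*s), β j x)
        (∑ j ∈ Finset.Icc 1 (8*s),
          (if j = 1 then -(β 1 t) * R t + (α t / 2) * Γ t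
            else β (j-1) t - β j t * R t)) t := by
      apply HasDerivAt.fun_sum
      intro j hj
      rw [Finset.mem_Icc] at hj
      by_cases h1 : j = 1
      · subst h1
        simpa using hderivβ1 t ht
      · rw [if_neg h1]
        exact hderivβ j (by omega) hj.2 t ht
    have hkey : ∀ m : ℕ, 1 ≤ m →
        (∑ j ∈ Finset.Icc 1 m,
          (if j = 1 then -(β 1 t) * R t + (α t / 2) * Γ t
            else β (j-1) t - β j t * R t)) =
        α t / 2 * Γ t + ((∑ j ∈ Finset.Icc 1 m, β j t) - β m t)
          - (∑ j ∈ Finset.Icc 1 m, β j t) * R t := by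
      intro m hm
      induction m, hm using Nat.le_induction with
      | base => simp; ring
      | succ m hm ih =>
        have hins : Finset.Icc 1 (m+1) = insert (m+1) (Finset.Icc 1 m) := by
          ext x; simp only [Finset.mem_Icc, Finset.mem_insert]; omega
        have hnotmem : (m+1) ∉ Finset.Icc 1 m := by
          simp only [Finset.mem_Icc]; omega
        rw [hins, Finset.sum_insert hnotmem, Finset.sum_insert hnotmem, ih,
          if_neg (by omega : ¬ m + 1 = 1)]
        simp only [Nat.add_sub_cancel]
        ring
    have hBeq : B = fun x => ∑ j ∈ Finset.Icc 1 (8*s), β j x := funext hB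
    rw [hkey (8*s) (by omega)] at hsum
    rw [hBeq]
    simp only []
    exact hsum
  -- derivative of Λ
  have hΛder : ∀ t : ℝ, 0 ≤ t →
      HasDerivAt (fun x => α x + δ x / 16 + B x / 4)
        ((-(α t / 2) * (Γ t - B t) + δ t * B t)
          + ((α t / 2) * (Γ t - B t) + ((1/(s:ℝ) - α t - δ t)/2) * B t - δ t * Γ t)/16
          + (α t / 2 * Γ t + (B t - β (8*s) t) - B t * R t)/4) t := by
    intro t ht
    exact ((hderivα t ht).add ((hderivδ t ht).div_const 16)).add
      ((hBder t ht).div_const 4)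
  -- the key inequality
  have hkeyineq : ∀ t : ℝ, T₁ ≤ t →
      ((-(α t / 2) * (Γ t - B t) + δ t * B t)
          + ((α t / 2) * (Γ t - B t) + ((1/(s:ℝ) - α t - δ t)/2) * B t - δ t * Γ t)/16
          + (α t / 2 * Γ t + (B t - β (8*s) t) - B t * R t)/4)
        ≤ -(α t + δ t / 16 + B t / 4) / (8*(s:ℝ)) := by
    intro t ht
    have ht0 : 0 ≤ t := le_trans hT₁ ht
    obtain ⟨hg1, hg2⟩ := hΓt t ht
    have ha := hαt t ht
    have hd := hδt t ht
    have hb0 : 0 ≤ B t := by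
      rw [hB]
      exact Finset.sum_nonneg fun j hj =>
        hβt t ht j (Finset.mem_Icc.mp hj).1 (Finset.mem_Icc.mp hj).2
    have hb1 := hBt t ht
    have hr := hRt t ht
    have hbn : 0 ≤ β (8*s) t := hβt t ht (8*s) (by omega) le_rfl
    have hg1' : 1 - 2 * (1/(s:ℝ)) ≤ Γ t := by
      rw [show 2 * (1/(s:ℝ)) = 2/(s:ℝ) by ring]; exact hg1
    have hr' : 1 + (1/(s:ℝ))/4 ≤ R t := by
      rw [show (1/(s:ℝ))/4 = 1/(4*(s:ℝ)) by ring]; exact hr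
    have hRHS : -(α t + δ t / 16 + B t / 4) / (8*(s:ℝ))
        = -(α t + δ t / 16 + B t / 4) * (1/(s:ℝ)) / 8 := by
      rw [mul_one_div, div_div, mul_comm (s:ℝ) 8]
    rw [hRHS]
    set e := 1/(s:ℝ) with he
    set a := α t
    set d := δ t
    set b := B t
    set g := Γ t
    set r := R t
    set bn := β (8*s) t
    nlinarith [mul_nonneg ha (by linarith : (0:ℝ) ≤ g - (1 - 2*e)),
      mul_nonneg ha (by linarith : (0:ℝ) ≤ 1/32 - e),
      mul_nonneg ha (by linarith : (0:ℝ) ≤ 1/64 - b),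
      mul_nonneg hd (by linarith : (0:ℝ) ≤ g - (1 - 2*e)),
      mul_nonneg hd (by linarith : (0:ℝ) ≤ 1/32 - e),
      mul_nonneg hd (by linarith : (0:ℝ) ≤ 1/64 - b),
      mul_nonneg hb0 (by linarith : (0:ℝ) ≤ r - (1 + e/4)),
      mul_nonneg hb0 hse.le, hbn, ha, hd, hb0, hse, hsle]
  constructor
  · intro t ht
    rw [(hΛder t (le_trans hT₁ ht)).deriv]
    exact hkeyineq t ht
  · -- Gronwall
    intro t ht
    set G : ℝ → ℝ := fun x => (α x + δ x / 16 + B x / 4)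
      * Real.exp ((x - T₁)/(8*(s:ℝ))) with hG
    have hGder : ∀ x : ℝ, T₁ ≤ x → HasDerivAt G
        (((-(α x / 2) * (Γ x - B x) + δ x * B x)
          + ((α x / 2) * (Γ x - B x) + ((1/(s:ℝ) - α x - δ x)/2) * B x - δ x * Γ x)/16
          + (α x / 2 * Γ x + (B x - β (8*s) x) - B x * R x)/4)
          * Real.exp ((x - T₁)/(8*(s:ℝ)))
          + (α x + δ x / 16 + B x / 4)
          * (Real.exp ((x - T₁)/(8*(s:ℝ))) * (1/(8*(s:ℝ))))) x := by
      intro x hx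
      have hE : HasDerivAt (fun y : ℝ => Real.exp ((y - T₁)/(8*(s:ℝ))))
          (Real.exp ((x - T₁)/(8*(s:ℝ))) * (1/(8*(s:ℝ)))) x := by
        have h1 : HasDerivAt (fun y : ℝ => (y - T₁)/(8*(s:ℝ))) (1/(8*(s:ℝ))) x := by
          simpa using ((hasDerivAt_id x).sub_const T₁).div_const (8*(s:ℝ))
        exact h1.exp
      exact (hΛder x (le_trans hT₁ hx)).mul hE
    have hanti : AntitoneOn G (Set.Ici T₁) := by
      apply antitoneOn_of_deriv_nonpos (convex_Ici T₁)
      · intro x hx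
        exact (hGder x hx).continuousAt.continuousWithinAt
      · intro x hx
        rw [interior_Ici] at hx
        exact (hGder x (le_of_lt hx)).differentiableAt.differentiableWithinAt
      · intro x hx
        rw [interior_Ici] at hx
        rw [(hGder x (le_of_lt hx)).deriv]
        have hEpos : (0:ℝ) < Real.exp ((x - T₁)/(8*(s:ℝ))) := Real.exp_pos _
        have h1 := hkeyineq x (le_of_lt hx)
        have h2 := mul_le_mul_of_nonneg_right h1 hEpos.le
        have h3 : -(α x + δ x / 16 + B x / 4) / (8*(s:ℝ))
              * Real.exp ((x - T₁)/(8*(s:ℝ)))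
            + (α x + δ x / 16 + B x / 4)
              * (Real.exp ((x - T₁)/(8*(s:ℝ))) * (1/(8*(s:ℝ)))) = 0 := by
          field_simp
          ring
        linarith
    have hGle : G t ≤ G T₁ := hanti (Set.self_mem_Ici) ht ht
    have hGT : G T₁ = α T₁ + δ T₁ / 16 + B T₁ / 4 := by
      simp [hG]
    have hEpos : (0:ℝ) < Real.exp ((t - T₁)/(8*(s:ℝ))) := Real.exp_pos _
    rw [hGT] at hGle
    have h2 : α t + δ t / 16 + B t / 4
        ≤ (α T₁ + δ T₁ / 16 + B T₁ / 4) / Real.exp ((t - T₁)/(8*(s:ℝ))) :=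
      (le_div_iff₀ hEpos).mpr hGle
    have h3 : (α T₁ + δ T₁ / 16 + B T₁ / 4) / Real.exp ((t - T₁)/(8*(s:ℝ)))
        = (α T₁ + δ T₁ / 16 + B T₁ / 4) * Real.exp (-(t - T₁)/(8*(s:ℝ))) := by
      rw [neg_div, Real.exp_neg, div_eq_mul_inv]
    linarith [h3 ▸ h2]
end
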